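/- arXiv:1205.4960 — 3 statements merged into one kernel-verified Lean document; each statement's English description precedes it below -/
import Mathlib

section
/- Let Ω be a set, G = Sym(Ω), and g ∈ G. Then the centralizer of g in G is meet-coherent: the set of orbit partitions of elements of Cent_G(g) is closed under meets in the partition lattice of Ω. Moreover, if for every k ≥ 2 (including k = ∞) the number of orbits of g of size k is finite, then Cent_G(g) is also join-coherent. -/
/-- The orbit partition of a permutation `g`, as a setoid on `Ω`. -/
def piPart {Ω : Type*} (g : Equiv.Perm Ω) : Setoid Ω :=
  MulAction.orbitRel (Subgroup.zpowers g) Ω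

/-- The set of orbit partitions of elements of a permutation group `G`. -/
def piSet {Ω : Type*} (G : Subgroup (Equiv.Perm Ω)) : Set (Setoid Ω) :=
  {P | ∃ g ∈ G, piPart g = P}

/-- `G` is join-coherent if its set of orbit partitions is closed under joins. -/
def JoinCoherent {Ω : Type*} (G : Subgroup (Equiv.Perm Ω)) : Prop :=
  ∀ P ∈ piSet G, ∀ Q ∈ piSet G, P ⊔ Q ∈ piSet G

/-- `G` is meet-coherent if its set of orbit partitions is closed under meets. -/
def MeetCoherent {Ω : Type*} (G : Subgroup (Equiv.Perm Ω)) : Prop :=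
  ∀ P ∈ piSet G, ∀ Q ∈ piSet G, P ⊓ Q ∈ piSet G

theorem Equiv.Perm.inv_apply_self {α : Type*} (f : Equiv.Perm α) (x : α) : f⁻¹ (f x) = x :=
  Equiv.symm_apply_apply f x

theorem Equiv.Perm.apply_inv_self {α : Type*} (f : Equiv.Perm α) (x : α) : f (f⁻¹ x) = x :=
  Equiv.apply_symm_apply f x

namespace CentCoh

/-- pointwise commuting application -/
lemma comm_apply {a b : Equiv.Perm Ω} (h : Commute a b) (x : Ω) : a (b x) = b (a x) := by
  have := congrFun (congrArg (fun (e : Equiv.Perm Ω) => (e : Ω → Ω)) h.eq) x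
  simpa [Equiv.Perm.mul_apply] using this

lemma zpow_add_apply (σ : Equiv.Perm Ω) (m n : ℤ) (x : Ω) :
    (σ ^ (m + n)) x = (σ ^ m) ((σ ^ n) x) := by
  rw [zpow_add, Equiv.Perm.mul_apply]

lemma zpow_eq_apply (σ : Equiv.Perm Ω) {s t : ℤ} (h : s = t) (x : Ω) :
    (σ ^ s) x = (σ ^ t) x := by rw [h]

lemma zpow_succ_apply (σ : Equiv.Perm Ω) (t : ℤ) (x : Ω) :
    (σ ^ (t + 1)) x = σ ((σ ^ t) x) := by
  have h := zpow_add_apply σ 1 t x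
  rw [zpow_one] at h
  rw [← h]
  exact zpow_eq_apply σ (by omega) x

lemma zpow_pred_apply (σ : Equiv.Perm Ω) (t : ℤ) (x : Ω) :
    (σ ^ (t - 1)) x = σ⁻¹ ((σ ^ t) x) := by
  have h := zpow_add_apply σ (-1) t x
  rw [zpow_neg_one] at h
  rw [← h]
  exact zpow_eq_apply σ (by omega) x

/-- Core: a presentation `ψ : ℤ → S` surjective with kernel `mℤ` yields a "cycle" σ. -/
lemma psi_cycle {S : Type*} (ψ : ℤ → S) (m : ℕ)
    (hsurj : Function.Surjective ψ)
    (hker : ∀ n n' : ℤ, ψ n = ψ n' ↔ (m : ℤ) ∣ n - n') :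
    ∃ σ : Equiv.Perm S,
      (∀ s t : S, ∃ k : ℤ, (σ ^ k) s = t) ∧
      (∀ (s : S) (k : ℤ), (σ ^ k) s = s ↔ (m : ℤ) ∣ k) ∧
      (∀ v : Equiv.Perm S, (∃ c : ℤ, ∀ n, v (ψ n) = ψ (n + c)) → Commute σ v) := by
  classical
  have wd : ∀ a b : ℤ, ψ a = ψ b → ψ (a + 1) = ψ (b + 1) := by
    intro a b hab
    rw [hker] at hab ⊢
    simpa using hab
  have wd' : ∀ a b : ℤ, ψ a = ψ b → ψ (a - 1) = ψ (b - 1) := by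
    intro a b hab
    rw [hker] at hab ⊢
    simpa using hab
  set pick : S → ℤ := fun s => (hsurj s).choose with hpick
  have hpickspec : ∀ s, ψ (pick s) = s := fun s => (hsurj s).choose_spec
  set f : S → S := fun s => ψ (pick s + 1) with hf
  set fi : S → S := fun s => ψ (pick s - 1) with hfi
  have hfψ : ∀ n, f (ψ n) = ψ (n + 1) := by
    intro n
    exact wd _ _ (hpickspec (ψ n))
  have hfiψ : ∀ n, fi (ψ n) = ψ (n - 1) := by
    intro n
    exact wd' _ _ (hpickspec (ψ n))
  have hli : Function.LeftInverse fi f := by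
    intro s
    rw [← hpickspec s, hfψ, hfiψ]
    congr 1
    omega
  have hri : Function.RightInverse fi f := by
    intro s
    rw [← hpickspec s, hfiψ, hfψ]
    congr 1
    omega
  set σ : Equiv.Perm S := ⟨f, fi, hli, hri⟩ with hσ
  have hσψ : ∀ n, σ (ψ n) = ψ (n + 1) := hfψ
  have hσinvψ : ∀ n, σ⁻¹ (ψ n) = ψ (n - 1) := hfiψ
  have hzpow : ∀ (k : ℤ) (n : ℤ), (σ ^ k) (ψ n) = ψ (n + k) := by
    intro k
    induction k using Int.induction_on with
    | zero => intro n; simp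
    | succ i ih =>
        intro n
        have : σ ^ ((i : ℤ) + 1) = σ * σ ^ (i : ℤ) := by
          rw [zpow_add_one, ((Commute.refl σ).zpow_left (i : ℤ)).eq]
        rw [this, Equiv.Perm.mul_apply, ih, hσψ]
        congr 1; omega
    | pred i ih =>
        intro n
        have : σ ^ (-(i : ℤ) - 1) = σ⁻¹ * σ ^ (-(i : ℤ)) := by
          rw [zpow_sub_one, (((Commute.refl σ).inv_right).zpow_left (-(i : ℤ))).eq]
        rw [this, Equiv.Perm.mul_apply, ih, hσinvψ]
        congr 1; omega
  refine ⟨σ, ?_, ?_, ?_⟩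
  · intro s t
    obtain ⟨n, hn⟩ := hsurj s
    obtain ⟨n', hn'⟩ := hsurj t
    exact ⟨n' - n, by rw [← hn, hzpow, ← hn']; congr 1; omega⟩
  · intro s k
    obtain ⟨n, hn⟩ := hsurj s
    rw [← hn, hzpow, hker]
    constructor
    · intro h; simpa using h
    · intro h; simpa using h
  · rintro v ⟨c, hc⟩
    have : ∀ s, (σ * v) s = (v * σ) s := by
      intro s
      obtain ⟨n, hn⟩ := hsurj s
      rw [← hn]
      simp only [Equiv.Perm.mul_apply]
      rw [hc, hσψ, hσψ, hc]
      congr 1; omega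
    exact Equiv.ext this

/-- Presentation of a nonempty countable type as ℤ / mℤ. -/
lemma countable_pres (S : Type*) [Countable S] [Nonempty S] :
    ∃ (ψ : ℤ → S) (m : ℕ), Function.Surjective ψ ∧
      ∀ n n' : ℤ, ψ n = ψ n' ↔ (m : ℤ) ∣ n - n' := by
  classical
  rcases finite_or_infinite S with hF | hI
  · obtain ⟨m, ⟨e⟩⟩ := Finite.exists_equiv_fin S
    have hm : 0 < m := Fin.pos (e ‹Nonempty S›.some)
    have hmz : (m : ℤ) ≠ 0 := by exact_mod_cast hm.ne'
    have hbound : ∀ n : ℤ, (n % (m : ℤ)).toNat < m := by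
      intro n
      have h1 := Int.emod_nonneg n hmz
      have h2 := Int.emod_lt_of_pos n (by exact_mod_cast hm : (0:ℤ) < m)
      omega
    set ψ : ℤ → S := fun n => e.symm ⟨(n % (m : ℤ)).toNat, hbound n⟩ with hψ
    have key : ∀ n n' : ℤ, ψ n = ψ n' ↔ (m : ℤ) ∣ n - n' := by
      intro n n'
      have h1 := Int.emod_nonneg n hmz
      have h1' := Int.emod_nonneg n' hmz
      constructor
      · intro h
        have h4 : (n % (m:ℤ)).toNat = (n' % (m:ℤ)).toNat := by
          have h5 := e.symm.injective h
          exact congrArg Fin.val (by exact h5)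
        have h3 : n % (m:ℤ) = n' % (m:ℤ) := by omega
        have h6 : (n - n') % (m:ℤ) = 0 := Int.emod_eq_emod_iff_emod_sub_eq_zero.1 h3
        exact Int.dvd_of_emod_eq_zero h6
      · intro h
        have h3 : n % (m:ℤ) = n' % (m:ℤ) := Int.emod_eq_emod_iff_emod_sub_eq_zero.2
          (Int.emod_eq_zero_of_dvd h)
        show e.symm _ = e.symm _
        congr 1
        exact Fin.ext (by simp [h3])
    refine ⟨ψ, m, ?_, key⟩
    intro s
    refine ⟨((e s : Fin m) : ℕ), ?_⟩
    have h1 : ((((e s : Fin m) : ℕ) : ℤ)) % (m : ℤ) = (((e s : Fin m) : ℕ) : ℤ) := by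
      apply Int.emod_eq_of_lt
      · exact_mod_cast Nat.zero_le _
      · exact_mod_cast (e s).isLt
    show e.symm _ = s
    have : (⟨((((e s : Fin m) : ℕ) : ℤ) % (m : ℤ)).toNat, hbound _⟩ : Fin m) = e s :=
      Fin.ext (by simp [h1])
    rw [this]
    exact e.symm_apply_apply s
  · obtain ⟨d⟩ := nonempty_denumerable S
    refine ⟨fun n => (Denumerable.eqv S).symm (Equiv.intEquivNat n), 0, ?_, ?_⟩
    · intro s
      exact ⟨Equiv.intEquivNat.symm (Denumerable.eqv S s), by simp⟩
    · intro n n'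
      constructor
      · intro h
        have := Equiv.intEquivNat.injective ((Denumerable.eqv S).symm.injective h)
        simp [this]
      · intro h
        have : n = n' := by
          have h0 : n - n' = 0 := by simpa using h
          omega
        simp [this]

/-- Presentation from finitely many orbits of equal period. -/
lemma orbit_pres {S : Type*} (v : Equiv.Perm S) (c : ℕ) (hc : 0 < c) (y : Fin c → S) (d : ℕ)
    (hcov : ∀ s, ∃ (i : Fin c) (n : ℤ), (v ^ n) (y i) = s)
    (hdis : ∀ (i i' : Fin c) (n : ℤ), (v ^ n) (y i) = y i' → i = i')
    (hper : ∀ (s : S) (n : ℤ), (v ^ n) s = s ↔ (d : ℤ) ∣ n) :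
    ∃ ψ : ℤ → S, Function.Surjective ψ ∧
      (∀ n n' : ℤ, ψ n = ψ n' ↔ ((c * d : ℕ) : ℤ) ∣ n - n') ∧
      (∀ n, v (ψ n) = ψ (n + c)) := by
  classical
  have hcz : ((c : ℤ)) ≠ 0 := by exact_mod_cast hc.ne'
  have hbound : ∀ n : ℤ, (n % (c : ℤ)).toNat < c := by
    intro n
    have h1 := Int.emod_nonneg n hcz
    have h2 := Int.emod_lt_of_pos n (by exact_mod_cast hc : (0:ℤ) < c)
    omega
  set ψ : ℤ → S := fun n => (v ^ (n / (c:ℤ))) (y ⟨(n % (c:ℤ)).toNat, hbound n⟩) with hψ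
  have hdecomp : ∀ n : ℤ, n = (c:ℤ) * (n / (c:ℤ)) + ((n % (c:ℤ)).toNat : ℤ) := by
    intro n
    have h1 := Int.emod_nonneg n hcz
    have := Int.mul_ediv_add_emod n (c:ℤ)
    omega
  refine ⟨ψ, ?_, ?_, ?_⟩
  · intro s
    obtain ⟨i, n, hn⟩ := hcov s
    refine ⟨n * (c:ℤ) + (i : ℤ), ?_⟩
    have hi0 : (0:ℤ) ≤ (i:ℤ) := by exact_mod_cast Nat.zero_le _
    have hic : ((i:ℤ)) < (c:ℤ) := by exact_mod_cast i.isLt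
    have hmod : (n * (c:ℤ) + (i:ℤ)) % (c:ℤ) = (i:ℤ) := by
      rw [add_comm, Int.add_mul_emod_self_right]
      exact Int.emod_eq_of_lt hi0 hic
    have hdiv : (n * (c:ℤ) + (i:ℤ)) / (c:ℤ) = n := by
      rw [add_comm, Int.add_mul_ediv_right _ _ hcz, Int.ediv_eq_zero_of_lt hi0 hic, zero_add]
    show (v ^ ((n * (c:ℤ) + (i:ℤ)) / (c:ℤ))) (y ⟨((n * (c:ℤ) + (i:ℤ)) % (c:ℤ)).toNat, _⟩) = s
    rw [hdiv]
    have : (⟨((n * (c:ℤ) + (i:ℤ)) % (c:ℤ)).toNat, hbound _⟩ : Fin c) = i := by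
      apply Fin.ext
      simp only []
      rw [hmod]
      simp
    rw [this, hn]
  · intro n n'
    set i : Fin c := ⟨(n % (c:ℤ)).toNat, hbound n⟩ with hi
    set i' : Fin c := ⟨(n' % (c:ℤ)).toNat, hbound n'⟩ with hi'
    constructor
    · intro h
      have hkey : (v ^ (n / (c:ℤ) - n' / (c:ℤ))) (y i) = y i' := by
        have h2 : (v ^ (-(n' / (c:ℤ)))) ((v ^ (n / (c:ℤ))) (y i))
            = (v ^ (-(n' / (c:ℤ)))) ((v ^ (n' / (c:ℤ))) (y i')) := by
          rw [show ((v ^ (n / (c:ℤ))) (y i)) = (v ^ (n' / (c:ℤ))) (y i') from h]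
        rw [← zpow_add_apply, ← zpow_add_apply] at h2
        simpa [sub_eq_add_neg, add_comm] using h2
      have hii : i = i' := hdis _ _ _ hkey
      have hrem : n % (c:ℤ) = n' % (c:ℤ) := by
        have := congrArg (fun f : Fin c => (f : ℕ)) hii
        have h1 := Int.emod_nonneg n hcz
        have h1' := Int.emod_nonneg n' hcz
        simp only [hi, hi'] at this
        omega
      have hfix : (v ^ (n / (c:ℤ) - n' / (c:ℤ))) (y i) = y i := by rw [hkey, hii]
      have hdvd : (d:ℤ) ∣ (n / (c:ℤ) - n' / (c:ℤ)) := (hper _ _).1 hfix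
      obtain ⟨k, hk⟩ := hdvd
      have e1 := hdecomp n
      have e2 := hdecomp n'
      have hrem' : ((n % (c:ℤ)).toNat : ℤ) = ((n' % (c:ℤ)).toNat : ℤ) := by rw [hrem]
      have hsub : n - n' = (c:ℤ) * (n / (c:ℤ)) - (c:ℤ) * (n' / (c:ℤ)) := by linarith
      have : n - n' = (c:ℤ) * ((d:ℤ) * k) := by
        rw [hsub, ← mul_sub, hk]
      exact ⟨k, by push_cast; linarith [this]⟩
    · rintro ⟨k, hk⟩
      have hcd : (c:ℤ) ∣ n - n' := ⟨(d:ℤ) * k, by push_cast at hk ⊢; linarith⟩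
      have hrem : n % (c:ℤ) = n' % (c:ℤ) := Int.emod_eq_emod_iff_emod_sub_eq_zero.2
        (Int.emod_eq_zero_of_dvd hcd)
      have hii : i = i' := Fin.ext (by simp only [hi, hi']; rw [hrem])
      have hq : n / (c:ℤ) - n' / (c:ℤ) = (d:ℤ) * k := by
        have e1 := hdecomp n
        have e2 := hdecomp n'
        have hrem' : ((n % (c:ℤ)).toNat : ℤ) = ((n' % (c:ℤ)).toNat : ℤ) := by rw [hrem]
        have hnn : n - n' = (c:ℤ) * ((d:ℤ) * k) := by push_cast at hk; linarith
        have h2 : (c:ℤ) * (n / (c:ℤ) - n' / (c:ℤ)) = (c:ℤ) * ((d:ℤ) * k) := by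
          rw [mul_sub]; linarith
        exact mul_left_cancel₀ hcz h2
      show (v ^ (n / (c:ℤ))) (y i) = (v ^ (n' / (c:ℤ))) (y i')
      rw [← hii]
      have : (v ^ (n / (c:ℤ))) (y i) = (v ^ (n' / (c:ℤ))) ((v ^ (n / (c:ℤ) - n' / (c:ℤ))) (y i)) := by
        have hexp : n' / (c:ℤ) + (n / (c:ℤ) - n' / (c:ℤ)) = n / (c:ℤ) := by omega
        rw [← zpow_add_apply, hexp]
      rw [this, hq, (hper _ _).2 ⟨k, rfl⟩]
  · intro n
    have hmod : (n + (c:ℤ)) % (c:ℤ) = n % (c:ℤ) := by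
      simpa using Int.add_mul_emod_self_left (a := n) (b := (c:ℤ)) (c := 1)
    have hdiv : (n + (c:ℤ)) / (c:ℤ) = n / (c:ℤ) + 1 := by
      have := Int.add_mul_ediv_right n 1 hcz
      simpa using this
    show v ((v ^ (n / (c:ℤ))) (y _)) = (v ^ ((n + (c:ℤ)) / (c:ℤ))) (y _)
    rw [hdiv]
    have hfin : (⟨((n + (c:ℤ)) % (c:ℤ)).toNat, hbound _⟩ : Fin c)
        = ⟨(n % (c:ℤ)).toNat, hbound n⟩ := Fin.ext (by simp only []; rw [hmod])
    rw [hfin]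
    rw [show (n / (c:ℤ) + 1) = 1 + n / (c:ℤ) by omega, zpow_add_apply, zpow_one]

/-- The data needed for one class: an equivariant transitive cycle. -/
def Tau (g : Equiv.Perm Ω) (R : Setoid Ω) (x₀ : Ω) : Prop :=
  ∃ τ : Equiv.Perm Ω,
    (∀ y, R x₀ y → R x₀ (τ y)) ∧
    (∀ y, R x₀ y → R x₀ (τ⁻¹ y)) ∧
    (∀ m : ℤ, R x₀ ((g ^ m) x₀) → ∀ y, R x₀ y → τ ((g ^ m) y) = (g ^ m) (τ y)) ∧
    (∀ y z, R x₀ y → R x₀ z → ∃ n : ℤ, (τ ^ n) y = z)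

section TauBuild

variable (g : Equiv.Perm Ω) (R : Setoid Ω) (x₀ : Ω)

lemma tau_of_trivial
    (hcnt : {y | R x₀ y}.Countable)
    (htriv : ∀ m : ℤ, R x₀ ((g ^ m) x₀) → ∀ y, R x₀ y → (g ^ m) y = y) :
    Tau g R x₀ := by
  classical
  set p : Ω → Prop := fun y => R x₀ y with hp
  haveI : Nonempty (Subtype p) := ⟨⟨x₀, R.refl x₀⟩⟩
  haveI : Countable (Subtype p) := hcnt.to_subtype
  obtain ⟨ψ, m, hsurj, hker⟩ := countable_pres (Subtype p)
  obtain ⟨σ, htrans, hperiod, hcom⟩ := psi_cycle ψ m hsurj hker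
  refine ⟨Equiv.Perm.ofSubtype σ, ?_, ?_, ?_, ?_⟩
  · intro y hy
    rw [Equiv.Perm.ofSubtype_apply_of_mem σ hy]
    exact (σ ⟨y, hy⟩).2
  · intro y hy
    rw [← map_inv, Equiv.Perm.ofSubtype_apply_of_mem σ⁻¹ hy]
    exact (σ⁻¹ ⟨y, hy⟩).2
  · intro m hm y hy
    rw [htriv m hm y hy, htriv m hm _ ?_]
    rw [Equiv.Perm.ofSubtype_apply_of_mem σ hy]
    exact (σ ⟨y, hy⟩).2
  · intro y z hy hz
    obtain ⟨n, hn⟩ := htrans ⟨y, hy⟩ ⟨z, hz⟩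
    refine ⟨n, ?_⟩
    rw [← map_zpow, Equiv.Perm.ofSubtype_apply_of_mem (σ ^ n) hy, hn]

lemma tau_of_u (u : Equiv.Perm Ω) (d : ℕ) (F : Finset Ω)
    (h1 : ∀ m : ℤ, R x₀ ((g ^ m) x₀) → ∃ j : ℤ, ∀ y, R x₀ y → (g ^ m) y = (u ^ j) y)
    (h2 : ∀ y, R x₀ y → R x₀ (u y))
    (h2' : ∀ y, R x₀ y → R x₀ (u⁻¹ y))
    (h3 : ∀ y, R x₀ y → ∀ n : ℤ, ((u ^ n) y = y ↔ (d : ℤ) ∣ n))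
    (h4 : ∀ y, R x₀ y → ∃ i ∈ F, ∃ n : ℤ, (u ^ n) i = y) :
    Tau g R x₀ := by
  classical
  set p : Ω → Prop := fun y => R x₀ y with hp
  haveI hne : Nonempty (Subtype p) := ⟨⟨x₀, R.refl x₀⟩⟩
  have hiff : ∀ y, p y ↔ p (u y) := by
    intro y
    constructor
    · exact h2 y
    · intro h
      have := h2' (u y) h
      rwa [Equiv.Perm.inv_apply_self] at this
  set v : Equiv.Perm (Subtype p) := u.subtypePerm (fun y => (hiff y).symm) with hv
  have vzpow : ∀ (n : ℤ) (s : Subtype p), (((v ^ n) s : Subtype p) : Ω) = (u ^ n) (s : Ω) := by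
    intro n s
    rw [hv, Equiv.Perm.subtypePerm_zpow]
    rfl
  letI st : Setoid (Subtype p) := MulAction.orbitRel (Subgroup.zpowers v) (Subtype p)
  have orb : ∀ s t : Subtype p, st s t ↔ ∃ k : ℤ, (v ^ k) t = s := by
    intro s t
    rw [show (st s t) = ((MulAction.orbitRel (Subgroup.zpowers v) (Subtype p)) s t) from rfl]
    rw [MulAction.orbitRel_apply, MulAction.mem_orbit_iff]
    constructor
    · rintro ⟨⟨x, hx⟩, hxs⟩
      obtain ⟨k, hk⟩ := Subgroup.mem_zpowers_iff.1 hx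
      exact ⟨k, by rw [hk]; simpa [Subgroup.smul_def, Equiv.Perm.smul_def] using hxs⟩
    · rintro ⟨k, hk⟩
      exact ⟨⟨v ^ k, Subgroup.mem_zpowers_iff.2 ⟨k, rfl⟩⟩,
        by simpa [Subgroup.smul_def, Equiv.Perm.smul_def] using hk⟩
  -- finiteness of the set of v-orbits
  have hfin : Finite (Quotient st) := by
    have pick : ∀ q : Quotient st, ∃ i : {x // x ∈ F}, ∃ n : ℤ, (u ^ n) (i : Ω) = (q.out : Ω) := by
      intro q
      obtain ⟨i, hiF, n, hn⟩ := h4 (q.out : Ω) q.out.2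
      exact ⟨⟨i, hiF⟩, n, hn⟩
    set f : Quotient st → {x // x ∈ F} := fun q => (pick q).choose with hf
    apply Finite.of_injective f
    intro q q' hqq
    obtain ⟨n, hn⟩ := (pick q).choose_spec
    obtain ⟨n', hn'⟩ := (pick q').choose_spec
    have hch : ((pick q).choose : {x // x ∈ F}) = (pick q').choose := hqq
    rw [hch] at hn
    have : (u ^ (n' - n)) (q.out : Ω) = (q'.out : Ω) := by
      refine (congrArg (u ^ (n' - n)) hn.symm).trans ?_
      refine ((zpow_add_apply u (n' - n) n _).symm).trans ?_
      rw [show n' - n + n = n' by omega]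
      exact hn'
    have hrel : st q'.out q.out := (orb _ _).2 ⟨n' - n, Subtype.ext (by rw [vzpow]; exact this)⟩
    rw [← Quotient.out_eq q, ← Quotient.out_eq q']
    exact Quotient.sound (st.symm hrel)
  haveI := hfin
  haveI : Nonempty (Quotient st) := Nonempty.map (Quotient.mk st) hne
  haveI : Fintype (Quotient st) := Fintype.ofFinite _
  set c : ℕ := Fintype.card (Quotient st) with hcdef
  have hc : 0 < c := Fintype.card_pos
  set e : Fin c ≃ Quotient st := (Fintype.equivFin (Quotient st)).symm with he
  set y : Fin c → Subtype p := fun i => (e i).out with hy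
  have hcov : ∀ s : Subtype p, ∃ (i : Fin c) (n : ℤ), (v ^ n) (y i) = s := by
    intro s
    refine ⟨e.symm (Quotient.mk st s), ?_⟩
    have : st (y (e.symm (Quotient.mk st s))) s := by
      rw [hy]
      simp only [Equiv.apply_symm_apply]
      exact Quotient.mk_out s
    obtain ⟨k, hk⟩ := (orb _ _).1 this
    exact ⟨-k, by rw [← hk, ← Equiv.Perm.mul_apply, ← zpow_add]; simp⟩
  have hdis : ∀ (i i' : Fin c) (n : ℤ), (v ^ n) (y i) = y i' → i = i' := by
    intro i i' n hn
    have hrel : st (y i') (y i) := (orb _ _).2 ⟨n, hn⟩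
    have : e i' = e i := by
      rw [← Quotient.out_eq (e i'), ← Quotient.out_eq (e i)]
      exact Quotient.sound hrel
    exact (e.injective this).symm
  have hper : ∀ (s : Subtype p) (n : ℤ), (v ^ n) s = s ↔ (d : ℤ) ∣ n := by
    intro s n
    rw [← Subtype.coe_inj, vzpow]
    exact h3 (s : Ω) s.2 n
  obtain ⟨ψ, hsurj, hker, hshift⟩ := orbit_pres v c hc y d hcov hdis hper
  obtain ⟨σ, htrans, hperiod, hcom⟩ := psi_cycle ψ (c * d) hsurj hker
  have hCom : Commute σ v := hcom v ⟨(c : ℤ), hshift⟩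
  refine ⟨Equiv.Perm.ofSubtype σ, ?_, ?_, ?_, ?_⟩
  · intro w hw
    rw [Equiv.Perm.ofSubtype_apply_of_mem σ hw]
    exact (σ ⟨w, hw⟩).2
  · intro w hw
    rw [← map_inv, Equiv.Perm.ofSubtype_apply_of_mem σ⁻¹ hw]
    exact (σ⁻¹ ⟨w, hw⟩).2
  · intro m hm w hw
    obtain ⟨j, hj⟩ := h1 m hm
    have hw' : p ((u ^ j) w) := by
      have := ((v ^ j) ⟨w, hw⟩).2
      rwa [show ((u ^ j) w) = (((v ^ j) ⟨w, hw⟩ : Subtype p) : Ω) from (vzpow j ⟨w, hw⟩).symm]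
    rw [hj w hw]
    have hτw : p (Equiv.Perm.ofSubtype σ w) := by
      rw [Equiv.Perm.ofSubtype_apply_of_mem σ hw]; exact (σ ⟨w, hw⟩).2
    rw [hj _ hτw]
    rw [show ((u ^ j) w) = (((v ^ j) ⟨w, hw⟩ : Subtype p) : Ω) from (vzpow j ⟨w, hw⟩).symm]
    rw [Equiv.Perm.ofSubtype_apply_of_mem σ ((v ^ j) ⟨w, hw⟩).2]
    rw [Equiv.Perm.ofSubtype_apply_of_mem σ hw]
    have : σ ((v ^ j) ⟨w, hw⟩) = (v ^ j) (σ ⟨w, hw⟩) := comm_apply (hCom.zpow_right j) _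
    rw [this, vzpow]
  · intro w z hw hz
    obtain ⟨n, hn⟩ := htrans ⟨w, hw⟩ ⟨z, hz⟩
    refine ⟨n, ?_⟩
    rw [← map_zpow, Equiv.Perm.ofSubtype_apply_of_mem (σ ^ n) hw, hn]

end TauBuild


lemma main_construction (g : Equiv.Perm Ω) (R : Setoid Ω)
    (hR : ∀ x y, R x y → R (g x) (g y))
    (hR' : ∀ x y, R (g x) (g y) → R x y)
    (hτ : ∀ x₀, Tau g R x₀) :
    ∃ c : Equiv.Perm Ω, (∀ x, c (g x) = g (c x)) ∧
      ∀ x y, R x y ↔ ∃ n : ℤ, (c ^ n) x = y := by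
  classical
  have hcomp : ∀ (s t : ℤ) (w : Ω), (g ^ s) ((g ^ t) w) = (g ^ (s + t)) w :=
    fun s t w => (zpow_add_apply g s t w).symm
  have hcancel : ∀ (s : ℤ) (w : Ω), (g ^ (-s)) ((g ^ s) w) = w := by
    intro s w; rw [hcomp]; simp
  have hcancel' : ∀ (s : ℤ) (w : Ω), (g ^ s) ((g ^ (-s)) w) = w := by
    intro s w; rw [hcomp]; simp
  have hRz : ∀ (s : ℤ) (x y : Ω), R x y ↔ R ((g ^ s) x) ((g ^ s) y) := by
    intro s
    induction s using Int.induction_on with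
    | zero => intro x y; simp
    | succ i ih =>
        intro x y
        rw [ih x y]
        rw [zpow_succ_apply g (i : ℤ) x, zpow_succ_apply g (i : ℤ) y]
        exact ⟨hR _ _, hR' _ _⟩
    | pred i ih =>
        intro x y
        rw [ih x y]
        have e1 : (g ^ (-(i : ℤ))) x = g ((g ^ (-(i : ℤ) - 1)) x) := by
          have h := zpow_succ_apply g (-(i : ℤ) - 1) x
          rw [← h]
          exact zpow_eq_apply g (by omega) x
        have e2 : (g ^ (-(i : ℤ))) y = g ((g ^ (-(i : ℤ) - 1)) y) := by
          have h := zpow_succ_apply g (-(i : ℤ) - 1) y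
          rw [← h]
          exact zpow_eq_apply g (by omega) y
        rw [e1, e2]
        exact ⟨hR' _ _, hR _ _⟩
  -- the tower equivalence
  set E : Setoid Ω := ⟨fun x y => ∃ s : ℤ, R ((g ^ s) x) y, by
    constructor
    · intro x; exact ⟨0, by simpa using R.refl x⟩
    · rintro x y ⟨s, hs⟩
      refine ⟨-s, ?_⟩
      have := (hRz (-s) _ _).1 hs
      rw [hcancel] at this
      exact R.symm this
    · rintro x y z ⟨s, hs⟩ ⟨s', hs'⟩
      refine ⟨s' + s, ?_⟩
      have := (hRz s' _ _).1 hs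
      rw [hcomp] at this
      exact R.trans this hs'⟩ with hE
  set rep : Ω → Ω := fun x => (Quotient.mk E x).out with hrep
  have hrepE : ∀ x, E (rep x) x := fun x => @Quotient.mk_out Ω E x
  have hrepeq : ∀ x y, E x y → rep x = rep y := by
    intro x y h
    exact congrArg Quotient.out (Quotient.sound h)
  have hsx : ∀ x, ∃ s : ℤ, R ((g ^ s) (rep x)) x := fun x => hrepE x
  set sel : Ω → ℤ := fun x => (hsx x).choose with hselr
  have hsel : ∀ x, R ((g ^ (sel x)) (rep x)) x := fun x => (hsx x).choose_spec
  set T : Ω → Equiv.Perm Ω := fun z => (hτ z).choose with hT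
  have hT1 : ∀ z y, R z y → R z ((T z) y) := fun z => (hτ z).choose_spec.1
  have hT2 : ∀ z y, R z y → R z ((T z)⁻¹ y) := fun z => (hτ z).choose_spec.2.1
  have hT3 : ∀ z (m : ℤ), R z ((g ^ m) z) → ∀ y, R z y → (T z) ((g ^ m) y) = (g ^ m) ((T z) y) :=
    fun z => (hτ z).choose_spec.2.2.1
  have hT4 : ∀ z y w, R z y → R z w → ∃ n : ℤ, ((T z) ^ n) y = w :=
    fun z => (hτ z).choose_spec.2.2.2
  have hT3' : ∀ z (m : ℤ), R z ((g ^ m) z) → ∀ y, R z y →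
      (T z)⁻¹ ((g ^ m) y) = (g ^ m) ((T z)⁻¹ y) := by
    intro z m hm y hy
    have hz' : R z ((T z)⁻¹ y) := hT2 z y hy
    have := hT3 z m hm _ hz'
    rw [Equiv.Perm.apply_inv_self] at this
    rw [← this, Equiv.Perm.inv_apply_self]
  -- membership of shifted points in the representative class
  have hmem : ∀ (z y : Ω) (s' : ℤ), R ((g ^ s') z) y → R z ((g ^ (-s')) y) := by
    intro z y s' h
    have := (hRz (-s') _ _).1 h
    rwa [hcancel] at this
  set cf : Ω → Ω := fun x => (g ^ (sel x)) ((T (rep x)) ((g ^ (-(sel x))) x)) with hcf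
  set ci : Ω → Ω := fun x => (g ^ (sel x)) ((T (rep x))⁻¹ ((g ^ (-(sel x))) x)) with hci
  -- well-definedness for any valid shift
  have hHmem : ∀ x (s' : ℤ), R ((g ^ s') (rep x)) x → R (rep x) ((g ^ (-s' + sel x)) (rep x)) := by
    intro x s' h
    have h1 : R ((g ^ (sel x)) (rep x)) ((g ^ s') (rep x)) := R.trans (hsel x) (R.symm h)
    have h2 := (hRz (-s') _ _).1 h1
    rw [hcomp, hcancel] at h2
    exact R.symm h2
  have hwd : ∀ x (s' : ℤ), R ((g ^ s') (rep x)) x →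
      cf x = (g ^ s') ((T (rep x)) ((g ^ (-s')) x)) := by
    intro x s' h
    have hm : R (rep x) ((g ^ (-s' + sel x)) (rep x)) := hHmem x s' h
    have hw : R (rep x) ((g ^ (-(sel x))) x) := hmem (rep x) x (sel x) (hsel x)
    have e1 : (g ^ (-s')) x = (g ^ (-s' + sel x)) ((g ^ (-(sel x))) x) := by
      rw [hcomp]; exact zpow_eq_apply g (by omega) x
    rw [hcf]
    simp only []
    rw [e1, hT3 (rep x) _ hm _ hw, hcomp]
    exact zpow_eq_apply g (by omega) _
  have hwd' : ∀ x (s' : ℤ), R ((g ^ s') (rep x)) x →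
      ci x = (g ^ s') ((T (rep x))⁻¹ ((g ^ (-s')) x)) := by
    intro x s' h
    have hm : R (rep x) ((g ^ (-s' + sel x)) (rep x)) := hHmem x s' h
    have hw : R (rep x) ((g ^ (-(sel x))) x) := hmem (rep x) x (sel x) (hsel x)
    have e1 : (g ^ (-s')) x = (g ^ (-s' + sel x)) ((g ^ (-(sel x))) x) := by
      rw [hcomp]; exact zpow_eq_apply g (by omega) x
    rw [hci]
    simp only []
    rw [e1, hT3' (rep x) _ hm _ hw, hcomp]
    exact zpow_eq_apply g (by omega) _
  -- basic membership facts
  have hF1 : ∀ x, R x (cf x) := by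
    intro x
    have hw : R (rep x) ((g ^ (-(sel x))) x) := hmem (rep x) x (sel x) (hsel x)
    have h1 : R (rep x) ((T (rep x)) ((g ^ (-(sel x))) x)) := hT1 _ _ hw
    have h2 := (hRz (sel x) _ _).1 h1
    exact R.trans (R.symm (hsel x)) h2
  have hF1' : ∀ x, R x (ci x) := by
    intro x
    have hw : R (rep x) ((g ^ (-(sel x))) x) := hmem (rep x) x (sel x) (hsel x)
    have h1 : R (rep x) ((T (rep x))⁻¹ ((g ^ (-(sel x))) x)) := hT2 _ _ hw
    have h2 := (hRz (sel x) _ _).1 h1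
    exact R.trans (R.symm (hsel x)) h2
  have hrepR : ∀ x y, R x y → rep x = rep y := by
    intro x y h
    exact hrepeq x y ⟨0, by simpa using h⟩
  -- inverses
  have hli : ∀ x, ci (cf x) = x := by
    intro x
    have hxy : R x (cf x) := hF1 x
    have hreq : rep (cf x) = rep x := (hrepR x (cf x) hxy).symm
    have hval : R ((g ^ (sel x)) (rep (cf x))) (cf x) := by
      rw [hreq]
      exact R.trans (hsel x) hxy
    have := hwd' (cf x) (sel x) hval
    rw [this, hreq]
    have e1 : (g ^ (-(sel x))) (cf x) = (T (rep x)) ((g ^ (-(sel x))) x) := by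
      rw [hcf]; simp only []; rw [hcancel]
    rw [e1, Equiv.Perm.inv_apply_self, hcancel']
  have hri : ∀ x, cf (ci x) = x := by
    intro x
    have hxy : R x (ci x) := hF1' x
    have hreq : rep (ci x) = rep x := (hrepR x (ci x) hxy).symm
    have hval : R ((g ^ (sel x)) (rep (ci x))) (ci x) := by
      rw [hreq]
      exact R.trans (hsel x) hxy
    have := hwd (ci x) (sel x) hval
    rw [this, hreq]
    have e1 : (g ^ (-(sel x))) (ci x) = (T (rep x))⁻¹ ((g ^ (-(sel x))) x) := by
      rw [hci]; simp only []; rw [hcancel]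
    rw [e1, Equiv.Perm.apply_inv_self, hcancel']
  set c : Equiv.Perm Ω := ⟨cf, ci, hli, hri⟩ with hc
  have hcapp : ∀ x, c x = cf x := fun _ => rfl
  have hcinvapp : ∀ x, c⁻¹ x = ci x := fun _ => rfl
  -- commuting with g
  have hcomm : ∀ x, c (g x) = g (c x) := by
    intro x
    have hEx : E x (g x) := ⟨1, by rw [zpow_one]⟩
    have hreq : rep (g x) = rep x := (hrepeq x (g x) hEx).symm
    have hval : R ((g ^ (sel x + 1)) (rep (g x))) (g x) := by
      rw [hreq]
      have := hR _ _ (hsel x)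
      rwa [show g ((g ^ (sel x)) (rep x)) = (g ^ (sel x + 1)) (rep x) from
        (zpow_succ_apply g (sel x) (rep x)).symm] at this
    rw [hcapp, hcapp, hwd (g x) (sel x + 1) hval, hreq]
    have e1 : (g ^ (-(sel x + 1))) (g x) = (g ^ (-(sel x))) x := by
      rw [show (g : Equiv.Perm Ω) x = (g ^ (1:ℤ)) x by rw [zpow_one], hcomp]
      exact zpow_eq_apply g (by omega) x
    rw [e1]
    rw [hcf]; simp only []
    rw [show (g ^ (sel x + 1)) ((T (rep x)) ((g ^ (-(sel x))) x))
        = (g ^ (1:ℤ)) ((g ^ (sel x)) ((T (rep x)) ((g ^ (-(sel x))) x))) by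
      rw [hcomp]; exact zpow_eq_apply g (by omega) _]
    rw [zpow_one]
  -- membership of τ-orbits
  have hTzmem : ∀ z (n : ℤ) w, R z w → R z (((T z) ^ n) w) := by
    intro z n
    induction n using Int.induction_on with
    | zero => intro w hw; simpa using hw
    | succ i ih =>
        intro w hw
        rw [zpow_succ_apply (T z) (i : ℤ) w]
        exact hT1 z _ (ih w hw)
    | pred i ih =>
        intro w hw
        rw [zpow_pred_apply (T z) (-(i : ℤ)) w]
        exact hT2 z _ (ih w hw)
  -- the orbit formula
  have hform : ∀ (n : ℤ) (x : Ω),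
      (c ^ n) x = (g ^ (sel x)) (((T (rep x)) ^ n) ((g ^ (-(sel x))) x)) := by
    intro n
    induction n using Int.induction_on with
    | zero => intro x; simp only [zpow_zero, Equiv.Perm.one_apply]; rw [hcancel']
    | succ i ih =>
        intro x
        rw [zpow_succ_apply c (i : ℤ) x, ih]
        set y := (g ^ (sel x)) (((T (rep x)) ^ (i : ℤ)) ((g ^ (-(sel x))) x)) with hy
        have hwmem : R (rep x) (((T (rep x)) ^ (i : ℤ)) ((g ^ (-(sel x))) x)) :=
          hTzmem (rep x) (i : ℤ) _ (hmem (rep x) x (sel x) (hsel x))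
        have hRy : R ((g ^ (sel x)) (rep x)) y := (hRz (sel x) _ _).1 hwmem
        have hxy : R x y := R.trans (R.symm (hsel x)) hRy
        have hreq : rep y = rep x := (hrepR x y hxy).symm
        have hval : R ((g ^ (sel x)) (rep y)) y := by rw [hreq]; exact hRy
        rw [hcapp, hwd y (sel x) hval, hreq]
        have e2 : (g ^ (-(sel x))) y = ((T (rep x)) ^ (i : ℤ)) ((g ^ (-(sel x))) x) := by
          rw [hy, hcancel]
        rw [e2, zpow_succ_apply]
    | pred i ih =>
        intro x
        rw [zpow_pred_apply c (-(i : ℤ)) x, ih]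
        set y := (g ^ (sel x)) (((T (rep x)) ^ (-(i : ℤ))) ((g ^ (-(sel x))) x)) with hy
        have hwmem : R (rep x) (((T (rep x)) ^ (-(i : ℤ))) ((g ^ (-(sel x))) x)) :=
          hTzmem (rep x) _ _ (hmem (rep x) x (sel x) (hsel x))
        have hRy : R ((g ^ (sel x)) (rep x)) y := (hRz (sel x) _ _).1 hwmem
        have hxy : R x y := R.trans (R.symm (hsel x)) hRy
        have hreq : rep y = rep x := (hrepR x y hxy).symm
        have hval : R ((g ^ (sel x)) (rep y)) y := by rw [hreq]; exact hRy
        rw [hcinvapp, hwd' y (sel x) hval, hreq]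
        have e2 : (g ^ (-(sel x))) y = ((T (rep x)) ^ (-(i : ℤ))) ((g ^ (-(sel x))) x) := by
          rw [hy, hcancel]
        rw [e2, zpow_pred_apply]
  refine ⟨c, hcomm, ?_⟩
  intro x y
  constructor
  · intro hxy
    have hw : R (rep x) ((g ^ (-(sel x))) x) := hmem (rep x) x (sel x) (hsel x)
    have hw' : R (rep x) ((g ^ (-(sel x))) y) :=
      hmem (rep x) y (sel x) (R.trans (hsel x) hxy)
    obtain ⟨n, hn⟩ := hT4 (rep x) _ _ hw hw'
    refine ⟨n, ?_⟩
    rw [hform n x, hn, hcancel']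
  · rintro ⟨n, hn⟩
    rw [hform n x] at hn
    have hwmem : R (rep x) (((T (rep x)) ^ n) ((g ^ (-(sel x))) x)) :=
      hTzmem (rep x) n _ (hmem (rep x) x (sel x) (hsel x))
    have hRy : R ((g ^ (sel x)) (rep x)) y := by
      rw [← hn]
      exact (hRz (sel x) _ _).1 hwmem
    exact R.trans (R.symm (hsel x)) hRy


/-- iff-version of invariance upgraded to all integer powers -/
lemma rel_zpow (g : Equiv.Perm Ω) (R : Setoid Ω)
    (hR : ∀ x y, R x y → R (g x) (g y))
    (hR' : ∀ x y, R (g x) (g y) → R x y) :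
    ∀ (s : ℤ) (x y : Ω), R x y ↔ R ((g ^ s) x) ((g ^ s) y) := by
  intro s
  induction s using Int.induction_on with
  | zero => intro x y; simp
  | succ i ih =>
      intro x y
      rw [ih x y]
      rw [zpow_succ_apply g (i : ℤ) x, zpow_succ_apply g (i : ℤ) y]
      exact ⟨hR _ _, hR' _ _⟩
  | pred i ih =>
      intro x y
      rw [ih x y]
      have e1 : (g ^ (-(i : ℤ))) x = g ((g ^ (-(i : ℤ) - 1)) x) := by
        have h := zpow_succ_apply g (-(i : ℤ) - 1) x
        rw [← h]
        exact zpow_eq_apply g (by omega) x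
      have e2 : (g ^ (-(i : ℤ))) y = g ((g ^ (-(i : ℤ) - 1)) y) := by
        have h := zpow_succ_apply g (-(i : ℤ) - 1) y
        rw [← h]
        exact zpow_eq_apply g (by omega) y
      rw [e1, e2]
      exact ⟨hR' _ _, hR _ _⟩

lemma piPart_iff (h : Equiv.Perm Ω) (x y : Ω) :
    piPart h x y ↔ ∃ n : ℤ, (h ^ n) y = x := by
  show (MulAction.orbitRel (Subgroup.zpowers h) Ω) x y ↔ _
  rw [MulAction.orbitRel_apply, MulAction.mem_orbit_iff]
  constructor
  · rintro ⟨⟨w, hw⟩, hws⟩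
    obtain ⟨k, hk⟩ := Subgroup.mem_zpowers_iff.1 hw
    exact ⟨k, by rw [hk]; simpa [Subgroup.smul_def, Equiv.Perm.smul_def] using hws⟩
  · rintro ⟨k, hk⟩
    exact ⟨⟨h ^ k, Subgroup.mem_zpowers_iff.2 ⟨k, rfl⟩⟩,
      by simpa [Subgroup.smul_def, Equiv.Perm.smul_def] using hk⟩

/-- cyclic generator of a subgroup-like set of exponents -/
lemma exists_generator (p : ℤ → Prop) (h0 : p 0) (hadd : ∀ m n, p m → p n → p (m + n))
    (hneg : ∀ m, p m → p (-m)) : ∃ t : ℤ, ∀ m, p m ↔ t ∣ m := by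
  set H : AddSubgroup ℤ :=
    { carrier := {m | p m}
      zero_mem' := h0
      add_mem' := fun ha hb => hadd _ _ ha hb
      neg_mem' := fun ha => hneg _ ha } with hH
  obtain ⟨t, ht⟩ := Int.subgroup_cyclic H
  refine ⟨t, fun m => ?_⟩
  have hmem : p m ↔ m ∈ H := Iff.rfl
  rw [hmem, ht, AddSubgroup.mem_closure_singleton]
  constructor
  · rintro ⟨k, hk⟩
    exact ⟨k, by rw [← hk]; rw [smul_eq_mul]; ring⟩
  · rintro ⟨k, hk⟩
    exact ⟨k, by rw [smul_eq_mul, hk]; ring⟩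

theorem meet_coherent (g : Equiv.Perm Ω) :
    MeetCoherent (Subgroup.centralizer {g} : Subgroup (Equiv.Perm Ω)) := by
  classical
  rintro P ⟨a, haC, rfl⟩ Q ⟨b, hbC, rfl⟩
  have hag : Commute a g := Subgroup.mem_centralizer_singleton_iff.1 haC
  have hbg : Commute b g := Subgroup.mem_centralizer_singleton_iff.1 hbC
  set R : Setoid Ω := piPart a ⊓ piPart b with hRdef
  have Rrel : ∀ x y : Ω, R x y ↔ ((∃ n : ℤ, (a ^ n) y = x) ∧ (∃ n : ℤ, (b ^ n) y = x)) := by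
    intro x y
    constructor
    · intro h
      have h' : piPart a x y ∧ piPart b x y := h
      exact ⟨(piPart_iff a x y).1 h'.1, (piPart_iff b x y).1 h'.2⟩
    · rintro ⟨h1, h2⟩
      exact ⟨(piPart_iff a x y).2 h1, (piPart_iff b x y).2 h2⟩
  have hinv : ∀ h' : Equiv.Perm Ω, Commute a h' → Commute b h' →
      ∀ x y, R x y → R (h' x) (h' y) := by
    intro h' ha' hb' x y hxy
    obtain ⟨⟨n, hn⟩, ⟨n', hn'⟩⟩ := (Rrel x y).1 hxy
    refine (Rrel _ _).2 ⟨⟨n, ?_⟩, ⟨n', ?_⟩⟩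
    · rw [comm_apply (ha'.zpow_left n) y, hn]
    · rw [comm_apply (hb'.zpow_left n') y, hn']
  have hRg : ∀ x y, R x y → R (g x) (g y) := hinv g hag hbg
  have hRg' : ∀ x y, R (g x) (g y) → R x y := by
    intro x y h
    have := hinv g⁻¹ hag.inv_right hbg.inv_right _ _ h
    rwa [Equiv.Perm.inv_apply_self, Equiv.Perm.inv_apply_self] at this
  have hRz := rel_zpow g R hRg hRg'
  have hτ : ∀ x₀ : Ω, Tau g R x₀ := by
    intro x₀
    obtain ⟨t, ht⟩ := exists_generator (fun m => R x₀ ((g ^ m) x₀))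
      (by simpa using R.refl x₀)
      (by
        intro m n hm hn
        have h3 : R ((g ^ n) x₀) ((g ^ n) ((g ^ m) x₀)) := (hRz n _ _).1 hm
        have h5 : (g ^ n) ((g ^ m) x₀) = (g ^ (m + n)) x₀ := by
          rw [← zpow_add_apply]
          exact zpow_eq_apply g (by omega) x₀
        rw [h5] at h3
        exact R.trans hn h3)
      (by
        intro m hm
        have h2 : R ((g ^ (-m)) x₀) ((g ^ (-m)) ((g ^ m) x₀)) := (hRz (-m) _ _).1 hm
        have h5 : (g ^ (-m)) ((g ^ m) x₀) = x₀ := by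
          rw [← zpow_add_apply]
          simp
        rw [h5] at h2
        exact R.symm h2)
    have hform : ∀ y, R x₀ y → ∃ p : ℤ, (a ^ p) x₀ = y := by
      intro y hy
      obtain ⟨⟨n, hn⟩, -⟩ := (Rrel x₀ y).1 hy
      refine ⟨-n, ?_⟩
      rw [← hn, ← zpow_add_apply]
      simp
    have hcnt : {y | R x₀ y}.Countable := by
      apply Set.Countable.mono ?_ (Set.countable_range (fun n : ℤ => (a ^ n) x₀))
      rintro y hy
      obtain ⟨p, hp⟩ := hform y hy
      exact ⟨p, hp⟩
    by_cases ht0 : t = 0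
    · apply tau_of_trivial g R x₀ hcnt
      intro m hm y _
      have hdvd : t ∣ m := (ht m).1 hm
      rw [ht0, zero_dvd_iff] at hdvd
      rw [hdvd]
      simp
    · set u : Equiv.Perm Ω := g ^ t with hu
      have hut : R x₀ (u x₀) := (ht t).2 dvd_rfl
      obtain ⟨k, hk⟩ : ∃ k : ℤ, (a ^ k) x₀ = u x₀ := hform (u x₀) hut
      have hcommu : ∀ p : ℤ, Commute (a ^ p) u := fun p => hag.zpow_zpow p t
      have horb : ∀ p : ℤ, u ((a ^ p) x₀) = (a ^ (p + k)) x₀ := by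
        intro p
        rw [← comm_apply (hcommu p) x₀, ← hk, ← zpow_add_apply]
      have hinvorb : ∀ q : ℤ, u⁻¹ ((a ^ q) x₀) = (a ^ (q - k)) x₀ := by
        intro q
        have h := horb (q - k)
        rw [show (a ^ (q - k + k)) x₀ = (a ^ q) x₀ from zpow_eq_apply a (by ring) x₀] at h
        rw [← h, Equiv.Perm.inv_apply_self]
      have hupow : ∀ (j p : ℤ), (u ^ j) ((a ^ p) x₀) = (a ^ (p + j * k)) x₀ := by
        intro j
        induction j using Int.induction_on with
        | zero =>
            intro p
            rw [zpow_zero]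
            exact (zpow_eq_apply a (by ring) x₀).symm
        | succ i ih =>
            intro p
            rw [zpow_succ_apply u (i : ℤ) ((a ^ p) x₀), ih p, horb (p + (i : ℤ) * k)]
            exact zpow_eq_apply a (by ring) x₀
        | pred i ih =>
            intro p
            rw [zpow_pred_apply u (-(i : ℤ)) ((a ^ p) x₀), ih p, hinvorb (p + -(i : ℤ) * k)]
            exact zpow_eq_apply a (by ring) x₀
      by_cases hfix : u x₀ = x₀
      · -- the powers of g act trivially on the class
        have hxfix : ∀ j : ℤ, (u ^ j) x₀ = x₀ := by
          intro j
          induction j using Int.induction_on with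
          | zero => simp
          | succ i ih => rw [zpow_succ_apply u (i : ℤ) x₀, ih, hfix]
          | pred i ih =>
              rw [zpow_pred_apply u (-(i : ℤ)) x₀, ih]
              have h2 := congrArg (fun z => u⁻¹ z) hfix
              simp only [Equiv.Perm.inv_apply_self] at h2
              exact h2.symm
        apply tau_of_trivial g R x₀ hcnt
        intro m hm y hy
        obtain ⟨j, hj⟩ := (ht m).1 hm
        obtain ⟨p, hp⟩ := hform y hy
        rw [← hp, hj, zpow_mul, ← hu, ← comm_apply ((hcommu p).zpow_right j) x₀, hxfix j]
      · have hkne : k ≠ 0 := by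
          intro h0
          apply hfix
          rw [h0] at hk
          simpa using hk.symm
        obtain ⟨d₀, hd₀⟩ := exists_generator (fun n => (u ^ n) x₀ = x₀)
          (by simp)
          (by
            intro m n hm hn
            rw [zpow_add_apply u m n x₀, hn, hm])
          (by
            intro m hm
            have h2 := congrArg (fun z => (u ^ (-m)) z) hm
            rw [← zpow_add_apply] at h2
            rw [show (u ^ (-m + m)) x₀ = x₀ by rw [show (-m + m) = 0 by omega]; simp] at h2
            exact h2.symm)
        set d : ℕ := d₀.natAbs with hd
        -- covering data
        set kn : ℕ := k.natAbs with hkn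
        set F : Finset Ω := (Finset.range kn).image (fun r : ℕ => (a ^ (r : ℤ)) x₀) with hF
        apply tau_of_u g R x₀ u d F
        · intro m hm
          obtain ⟨j, hj⟩ := (ht m).1 hm
          exact ⟨j, fun y _ => by rw [hj, zpow_mul, ← hu]⟩
        · intro y hy
          have h2 := (hRz t x₀ y).1 hy
          exact R.trans ((ht t).2 dvd_rfl) h2
        · intro y hy
          have h2 := (hRz (-t) x₀ y).1 hy
          have h3 := R.trans ((ht (-t)).2 (dvd_neg.2 dvd_rfl)) h2
          have e : u⁻¹ y = (g ^ (-t)) y := by rw [hu, ← zpow_neg]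
          rw [show u⁻¹ y = (g ^ (-t)) y from e]
          exact h3
        · intro y hy n
          obtain ⟨p, hp⟩ := hform y hy
          rw [← hp, ← comm_apply ((hcommu p).zpow_right n) x₀]
          rw [Equiv.apply_eq_iff_eq]
          rw [hd₀ n, hd]
          exact (Int.natAbs_dvd).symm
        · intro y hy
          obtain ⟨p, hp⟩ := hform y hy
          have hK0 : ((kn : ℤ)) ≠ 0 := by
            have h1 : kn ≠ 0 := by rw [hkn]; exact Int.natAbs_ne_zero.2 hkne
            exact_mod_cast h1
          have hKpos : (0:ℤ) < (kn:ℤ) := by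
            have h1 : (0:ℤ) ≤ (kn:ℤ) := by exact_mod_cast Nat.zero_le kn
            omega
          have hr0 : 0 ≤ p % (kn:ℤ) := Int.emod_nonneg p hK0
          have hrlt : p % (kn:ℤ) < (kn:ℤ) := Int.emod_lt_of_pos p hKpos
          obtain ⟨e, he⟩ : k ∣ (kn:ℤ) := Int.dvd_natAbs.2 dvd_rfl
          refine ⟨(a ^ (p % (kn:ℤ))) x₀, ?_, e * (p / (kn:ℤ)), ?_⟩
          · rw [hF]
            apply Finset.mem_image.2
            refine ⟨(p % (kn:ℤ)).toNat, Finset.mem_range.2 (by omega), ?_⟩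
            rw [show (((p % (kn:ℤ)).toNat : ℤ)) = p % (kn:ℤ) by omega]
          · have hsum : p % (kn:ℤ) + e * (p / (kn:ℤ)) * k = p := by
              have h2 : e * (p / (kn:ℤ)) * k = (kn:ℤ) * (p / (kn:ℤ)) := by
                rw [he]; ring
              have hpd := Int.mul_ediv_add_emod p (kn:ℤ)
              linarith [h2, hpd]
            rw [hupow (e * (p / (kn:ℤ))) (p % (kn:ℤ)), zpow_eq_apply a hsum x₀]
            exact hp
  obtain ⟨c, hccomm, hciff⟩ := main_construction g R hRg hRg' hτ
  refine ⟨c, ?_, ?_⟩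
  · apply Subgroup.mem_centralizer_singleton_iff.2
    apply Equiv.ext
    intro x
    rw [Equiv.Perm.mul_apply, Equiv.Perm.mul_apply]
    exact hccomm x
  · apply Setoid.ext
    intro x y
    rw [piPart_iff, ← hciff y x]
    exact Setoid.comm' R
lemma zpow_sub_eq_self (σ : Equiv.Perm Ω) (i j : ℤ) (y : Ω) (h : (σ ^ i) y = (σ ^ j) y) :
    (σ ^ (i - j)) y = y := by
  have h2 := congrArg (fun z => (σ ^ (-j)) z) h
  rw [← zpow_add_apply, ← zpow_add_apply] at h2
  rw [show (-j + j) = 0 by omega] at h2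
  simp only [zpow_zero, Equiv.Perm.one_apply] at h2
  exact (zpow_eq_apply σ (show i - j = -j + i by omega) y).trans h2

lemma period_transfer {σ g : Equiv.Perm Ω} (hσ : Commute σ g) (m : ℤ) (x y : Ω)
    (h : (σ ^ m) y = x) (n : ℤ) : (g ^ n) x = x ↔ (g ^ n) y = y := by
  subst h
  rw [comm_apply ((hσ.symm).zpow_zpow n m) y]
  exact Equiv.apply_eq_iff_eq _

lemma orbit_finite_ncard (g : Equiv.Perm Ω) (y : Ω) (P : ℕ) (hP : 0 < P)
    (hper : ∀ n : ℤ, (g ^ n) y = y ↔ (P : ℤ) ∣ n) :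
    {z | piPart g z y}.Finite ∧ {z | piPart g z y}.ncard = P := by
  classical
  have hPz : ((P : ℤ)) ≠ 0 := by exact_mod_cast hP.ne'
  have hPzpos : (0:ℤ) < (P:ℤ) := by exact_mod_cast hP
  set S : Finset Ω := (Finset.range P).image (fun n : ℕ => (g ^ (n : ℤ)) y) with hS
  have hset : {z | piPart g z y} = ↑S := by
    ext z
    constructor
    · intro hz
      obtain ⟨n, hn⟩ := (piPart_iff g z y).1 hz
      have hr0 : 0 ≤ n % (P:ℤ) := Int.emod_nonneg n hPz
      have hrlt : n % (P:ℤ) < (P:ℤ) := Int.emod_lt_of_pos n hPzpos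
      have hdvd : ((P:ℤ)) ∣ (n - n % (P:ℤ)) := by
        have hpd := Int.mul_ediv_add_emod n (P:ℤ)
        exact ⟨n / (P:ℤ), by linarith⟩
      have hzz : (g ^ (n % (P:ℤ))) y = z := by
        rw [← hn]
        have e1 : (g ^ n) y = (g ^ (n % (P:ℤ))) ((g ^ (n - n % (P:ℤ))) y) := by
          rw [← zpow_add_apply]
          exact zpow_eq_apply g (by ring) y
        rw [e1, (hper _).2 hdvd]
      rw [Finset.mem_coe, hS]
      apply Finset.mem_image.2
      refine ⟨(n % (P:ℤ)).toNat, Finset.mem_range.2 (by omega), ?_⟩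
      rw [show (((n % (P:ℤ)).toNat : ℤ)) = n % (P:ℤ) by omega]
      exact hzz
    · intro hz
      rw [Finset.mem_coe, hS] at hz
      obtain ⟨k, _, hv⟩ := Finset.mem_image.1 hz
      exact (piPart_iff g z y).2 ⟨(k : ℤ), hv⟩
  have hinj : Set.InjOn (fun n : ℕ => (g ^ (n : ℤ)) y) ↑(Finset.range P) := by
    intro i hi j hj hij
    simp only [Finset.coe_range, Set.mem_Iio] at hi hj
    have h2 : (g ^ ((i : ℤ) - (j : ℤ))) y = y := zpow_sub_eq_self g _ _ y hij
    have h3 : ((P:ℤ)) ∣ ((i : ℤ) - (j : ℤ)) := (hper _).1 h2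
    have h4 : ((i : ℤ) - (j : ℤ)) = 0 := by
      apply Int.eq_zero_of_dvd_of_natAbs_lt_natAbs h3
      omega
    omega
  constructor
  · rw [hset]; exact S.finite_toSet
  · rw [hset, Set.ncard_coe_finset, hS, Finset.card_image_of_injOn hinj, Finset.card_range]

lemma orbit_infinite (g : Equiv.Perm Ω) (y : Ω)
    (hfree : ∀ n : ℤ, (g ^ n) y = y → n = 0) : {z | piPart g z y}.Infinite := by
  apply Set.infinite_of_injective_forall_mem (f := fun n : ℤ => (g ^ n) y)
  · intro i j hij
    have h2 : (g ^ (i - j)) y = y := zpow_sub_eq_self g _ _ y hij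
    have := hfree _ h2
    omega
  · intro n
    exact (piPart_iff g _ y).2 ⟨n, rfl⟩

theorem join_coherent (g : Equiv.Perm Ω)
    (K1 : ∀ k : ℕ, 2 ≤ k → {c ∈ (piPart g).classes | c.ncard = k}.Finite)
    (K2 : {c ∈ (piPart g).classes | c.Infinite}.Finite) :
    JoinCoherent (Subgroup.centralizer {g} : Subgroup (Equiv.Perm Ω)) := by
  classical
  rintro P ⟨a, haC, rfl⟩ Q ⟨b, hbC, rfl⟩
  have hag : Commute a g := Subgroup.mem_centralizer_singleton_iff.1 haC
  have hbg : Commute b g := Subgroup.mem_centralizer_singleton_iff.1 hbC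
  set R : Setoid Ω := piPart a ⊔ piPart b with hRdef
  set r0 : Ω → Ω → Prop := fun x y => piPart a x y ∨ piPart b x y with hr0
  have hRiff : ∀ x y, R x y ↔ Relation.EqvGen r0 x y := by
    intro x y
    rw [hRdef, Setoid.sup_eq_eqvGen]
    exact Iff.rfl
  have hinv : ∀ h' : Equiv.Perm Ω, Commute a h' → Commute b h' →
      ∀ x y, R x y → R (h' x) (h' y) := by
    intro h' ha' hb' x y hxy
    rw [hRiff] at hxy ⊢
    induction hxy with
    | rel x y h =>
        apply Relation.EqvGen.rel
        rcases h with h | h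
        · obtain ⟨n, hn⟩ := (piPart_iff a x y).1 h
          exact Or.inl ((piPart_iff a _ _).2 ⟨n, by rw [comm_apply (ha'.zpow_left n) y, hn]⟩)
        · obtain ⟨n, hn⟩ := (piPart_iff b x y).1 h
          exact Or.inr ((piPart_iff b _ _).2 ⟨n, by rw [comm_apply (hb'.zpow_left n) y, hn]⟩)
    | refl x => exact Relation.EqvGen.refl _
    | symm x y h ih => exact Relation.EqvGen.symm _ _ ih
    | trans x y z h1 h2 ih1 ih2 => exact Relation.EqvGen.trans _ _ _ ih1 ih2
  have hRg : ∀ x y, R x y → R (g x) (g y) := hinv g hag hbg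
  have hRg' : ∀ x y, R (g x) (g y) → R x y := by
    intro x y h
    have := hinv g⁻¹ hag.inv_right hbg.inv_right _ _ h
    rwa [Equiv.Perm.inv_apply_self, Equiv.Perm.inv_apply_self] at this
  have hRz := rel_zpow g R hRg hRg'
  have hper : ∀ x y, R x y → ∀ n : ℤ, ((g ^ n) x = x ↔ (g ^ n) y = y) := by
    intro x y hxy
    rw [hRiff] at hxy
    induction hxy with
    | rel x y h =>
        intro n
        rcases h with h | h
        · obtain ⟨m, hm⟩ := (piPart_iff a x y).1 h
          exact period_transfer hag m x y hm n
        · obtain ⟨m, hm⟩ := (piPart_iff b x y).1 h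
          exact period_transfer hbg m x y hm n
    | refl x => exact fun _ => Iff.rfl
    | symm x y h ih => exact fun n => (ih n).symm
    | trans x y z h1 h2 ih1 ih2 => exact fun n => (ih1 n).trans (ih2 n)
  have hcnt : ∀ x₀ : Ω, {y | R x₀ y}.Countable := by
    intro x₀
    set f : List (ℤ × Bool) → Ω :=
      fun l => l.foldr (fun nb x => if nb.2 then (a ^ nb.1) x else (b ^ nb.1) x) x₀ with hf
    have hx₀D : x₀ ∈ Set.range f := ⟨[], rfl⟩
    have hstep : ∀ y, y ∈ Set.range f → ∀ n : ℤ,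
        (a ^ n) y ∈ Set.range f ∧ (b ^ n) y ∈ Set.range f := by
      rintro y ⟨l, rfl⟩ n
      exact ⟨⟨(n, true) :: l, rfl⟩, ⟨(n, false) :: l, rfl⟩⟩
    have hsat : ∀ x y, Relation.EqvGen r0 x y → (x ∈ Set.range f ↔ y ∈ Set.range f) := by
      intro x y h
      induction h with
      | rel x y h =>
          constructor
          · intro hx
            rcases h with h | h
            · obtain ⟨m, hm⟩ := (piPart_iff a x y).1 h
              have hyx : y = (a ^ (-m)) x := by rw [← hm, ← zpow_add_apply]; simp
              rw [hyx]
              exact (hstep x hx (-m)).1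
            · obtain ⟨m, hm⟩ := (piPart_iff b x y).1 h
              have hyx : y = (b ^ (-m)) x := by rw [← hm, ← zpow_add_apply]; simp
              rw [hyx]
              exact (hstep x hx (-m)).2
          · intro hy
            rcases h with h | h
            · obtain ⟨m, hm⟩ := (piPart_iff a x y).1 h
              rw [← hm]
              exact (hstep y hy m).1
            · obtain ⟨m, hm⟩ := (piPart_iff b x y).1 h
              rw [← hm]
              exact (hstep y hy m).2
      | refl x => exact Iff.rfl
      | symm x y h ih => exact ih.symm
      | trans x y z h1 h2 ih1 ih2 => exact ih1.trans ih2
    apply Set.Countable.mono ?_ (Set.countable_range f)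
    intro y hy
    exact (hsat x₀ y ((hRiff x₀ y).1 hy)).1 hx₀D
  have hτ : ∀ x₀ : Ω, Tau g R x₀ := by
    intro x₀
    haveI : Nonempty Ω := ⟨x₀⟩
    obtain ⟨t, ht⟩ := exists_generator (fun m => R x₀ ((g ^ m) x₀))
      (by simpa using R.refl x₀)
      (by
        intro m n hm hn
        have h3 : R ((g ^ n) x₀) ((g ^ n) ((g ^ m) x₀)) := (hRz n _ _).1 hm
        have h5 : (g ^ n) ((g ^ m) x₀) = (g ^ (m + n)) x₀ := by
          rw [← zpow_add_apply]
          exact zpow_eq_apply g (by omega) x₀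
        rw [h5] at h3
        exact R.trans hn h3)
      (by
        intro m hm
        have h2 : R ((g ^ (-m)) x₀) ((g ^ (-m)) ((g ^ m) x₀)) := (hRz (-m) _ _).1 hm
        have h5 : (g ^ (-m)) ((g ^ m) x₀) = x₀ := by
          rw [← zpow_add_apply]
          simp
        rw [h5] at h2
        exact R.symm h2)
    by_cases ht0 : t = 0
    · apply tau_of_trivial g R x₀ (hcnt x₀)
      intro m hm y _
      have hdvd : t ∣ m := (ht m).1 hm
      rw [ht0, zero_dvd_iff] at hdvd
      rw [hdvd]
      simp
    · set u : Equiv.Perm Ω := g ^ t with hu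
      by_cases hfixu : (g ^ t) x₀ = x₀
      · apply tau_of_trivial g R x₀ (hcnt x₀)
        intro m hm y hy
        obtain ⟨j, hj⟩ := (ht m).1 hm
        have hyfix : (g ^ t) y = y := (hper x₀ y hy t).1 hfixu
        have hneg : (g ^ (-t)) y = y := by
          have h2 := congrArg (fun z => (g ^ (-t)) z) hyfix
          rw [← zpow_add_apply] at h2
          rw [show (-t + t) = 0 by omega] at h2
          simp only [zpow_zero, Equiv.Perm.one_apply] at h2
          exact h2.symm
        have hall : ∀ j : ℤ, (g ^ (t * j)) y = y := by
          intro j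
          induction j using Int.induction_on with
          | zero => rw [show t * 0 = 0 by ring]; simp
          | succ i ih =>
              have e : (g ^ (t * ((i : ℤ) + 1))) y = (g ^ t) ((g ^ (t * (i : ℤ))) y) := by
                rw [← zpow_add_apply]
                exact zpow_eq_apply g (by ring) y
              rw [e, ih, hyfix]
          | pred i ih =>
              have e : (g ^ (t * (-(i : ℤ) - 1))) y = (g ^ (-t)) ((g ^ (t * (-(i : ℤ)))) y) := by
                rw [← zpow_add_apply]
                exact zpow_eq_apply g (by ring) y
              rw [e, ih, hneg]
        rw [hj]
        exact hall j
      · obtain ⟨p, hp⟩ := exists_generator (fun n => (g ^ n) x₀ = x₀)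
          (by simp)
          (by
            intro m n hm hn
            rw [zpow_add_apply g m n x₀, hn, hm])
          (by
            intro m hm
            have h2 := congrArg (fun z => (g ^ (-m)) z) hm
            rw [← zpow_add_apply] at h2
            rw [show (-m + m) = 0 by omega] at h2
            simp only [zpow_zero, Equiv.Perm.one_apply] at h2
            exact h2.symm)
        obtain ⟨d₀, hd₀⟩ := exists_generator (fun n => (u ^ n) x₀ = x₀)
          (by simp)
          (by
            intro m n hm hn
            rw [zpow_add_apply u m n x₀, hn, hm])
          (by
            intro m hm
            have h2 := congrArg (fun z => (u ^ (-m)) z) hm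
            rw [← zpow_add_apply] at h2
            rw [show (-m + m) = 0 by omega] at h2
            simp only [zpow_zero, Equiv.Perm.one_apply] at h2
            exact h2.symm)
        set d : ℕ := d₀.natAbs with hd
        have hFex : ∃ F : Finset Ω, ∀ y, R x₀ y → ∃ i ∈ F, ∃ n : ℤ, (u ^ n) i = y := by
          by_cases hp0 : p = 0
          · -- infinite orbits: use K2
            have hfree : ∀ y, R x₀ y → ∀ n : ℤ, (g ^ n) y = y → n = 0 := by
              intro y hy n h
              have h2 : (g ^ n) x₀ = x₀ := (hper x₀ y hy n).2 h
              have h3 := (hp n).1 h2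
              rw [hp0, zero_dvd_iff] at h3
              exact h3
            set T : ℤ := (t.natAbs : ℤ) with hT
            have hT0 : T ≠ 0 := by
              have : t.natAbs ≠ 0 := Int.natAbs_ne_zero.2 ht0
              simp only [hT]
              exact_mod_cast this
            have hTpos : (0:ℤ) < T := by
              have h1 : (0:ℤ) ≤ T := by rw [hT]; exact_mod_cast Nat.zero_le _
              omega
            obtain ⟨e, he⟩ : t ∣ T := by rw [hT]; exact Int.dvd_natAbs.2 dvd_rfl
            refine ⟨Finset.image₂ (fun (c : Set Ω) (r : ℕ) => (g ^ (r : ℤ)) (Classical.epsilon (· ∈ c)))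
              K2.toFinset (Finset.range t.natAbs), ?_⟩
            intro y hy
            have hyc : y ∈ {z | piPart g z y} := (piPart_iff g y y).2 ⟨0, by simp⟩
            have hcyS : {z | piPart g z y} ∈ {c ∈ (piPart g).classes | c.Infinite} :=
              ⟨Setoid.mem_classes _ y, orbit_infinite g y (hfree y hy)⟩
            set z₀ : Ω := Classical.epsilon (· ∈ {z | piPart g z y}) with hz₀def
            have hz₀ : z₀ ∈ {z | piPart g z y} :=
              Classical.epsilon_spec (p := fun z => z ∈ {z | piPart g z y}) ⟨y, hyc⟩
            obtain ⟨s, hs⟩ := (piPart_iff g z₀ y).1 hz₀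
            have hyz : (g ^ (-s)) z₀ = y := by rw [← hs, ← zpow_add_apply]; simp
            have hr0 : 0 ≤ (-s) % T := Int.emod_nonneg _ hT0
            have hrlt : (-s) % T < T := Int.emod_lt_of_pos _ hTpos
            refine ⟨(g ^ ((-s) % T)) z₀, ?_, e * ((-s) / T), ?_⟩
            · apply Finset.mem_image₂.2
              refine ⟨{z | piPart g z y}, (Set.Finite.mem_toFinset K2).2 hcyS,
                ((-s) % T).toNat, Finset.mem_range.2 (by omega), ?_⟩
              rw [show ((((-s) % T).toNat : ℤ)) = (-s) % T by omega]
            · have hsum : t * (e * ((-s) / T)) + (-s) % T = -s := by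
                have h2 : t * (e * ((-s) / T)) = T * ((-s) / T) := by rw [he]; ring
                have hpd := Int.mul_ediv_add_emod (-s) T
                linarith
              have e2 : (u ^ (e * ((-s) / T))) ((g ^ ((-s) % T)) z₀)
                  = (g ^ (t * (e * ((-s) / T)) + (-s) % T)) z₀ := by
                rw [hu, ← zpow_mul, ← zpow_add_apply]
              rw [e2, zpow_eq_apply g hsum z₀]
              exact hyz
          · -- finite orbits: use K1
            set Pn : ℕ := p.natAbs with hPn
            have hPn0 : 0 < Pn := by
              have : p.natAbs ≠ 0 := Int.natAbs_ne_zero.2 hp0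
              omega
            have hperP : ∀ y, R x₀ y → ∀ n : ℤ, ((g ^ n) y = y ↔ ((Pn : ℤ)) ∣ n) := by
              intro y hy n
              rw [← hper x₀ y hy n, hp n]
              exact (Int.natAbs_dvd).symm
            have hP2 : 2 ≤ Pn := by
              by_contra hlt
              have hPn1 : Pn = 1 := by omega
              apply hfixu
              apply (hp t).2
              apply Int.natAbs_dvd.1
              rw [← hPn, hPn1]
              exact one_dvd t
            have hCfin : {y | R x₀ y}.Finite := by
              have hsub : {y | R x₀ y} ⊆ ⋃₀ {c ∈ (piPart g).classes | c.ncard = Pn} := by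
                intro y hy
                apply Set.mem_sUnion.2
                refine ⟨{z | piPart g z y},
                  ⟨Setoid.mem_classes _ y,
                    (orbit_finite_ncard g y Pn hPn0 (hperP y hy)).2⟩, ?_⟩
                exact (piPart_iff g y y).2 ⟨0, by simp⟩
              apply Set.Finite.subset ?_ hsub
              apply Set.Finite.sUnion (K1 Pn hP2)
              intro c hc
              rcases hc with ⟨_, hcard⟩
              rw [← Set.not_infinite]
              intro hinf
              rw [hinf.ncard] at hcard
              omega
            refine ⟨hCfin.toFinset, ?_⟩
            intro y hy
            exact ⟨y, (Set.Finite.mem_toFinset hCfin).2 hy, 0, by simp⟩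
        obtain ⟨F, h4⟩ := hFex
        apply tau_of_u g R x₀ u d F
        · intro m hm
          obtain ⟨j, hj⟩ := (ht m).1 hm
          exact ⟨j, fun y _ => by rw [hj, zpow_mul, ← hu]⟩
        · intro y hy
          have h2 := (hRz t x₀ y).1 hy
          exact R.trans ((ht t).2 dvd_rfl) h2
        · intro y hy
          have h2 := (hRz (-t) x₀ y).1 hy
          have h3 := R.trans ((ht (-t)).2 (dvd_neg.2 dvd_rfl)) h2
          have e : u⁻¹ y = (g ^ (-t)) y := by rw [hu, ← zpow_neg]
          rw [show u⁻¹ y = (g ^ (-t)) y from e]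
          exact h3
        · intro y hy n
          have e : (u ^ n) y = (g ^ (t * n)) y := by rw [hu, ← zpow_mul]
          rw [e, ← hper x₀ y hy (t * n)]
          have e2 : (g ^ (t * n)) x₀ = (u ^ n) x₀ := by rw [hu, ← zpow_mul]
          rw [e2, hd₀ n, hd]
          exact (Int.natAbs_dvd).symm
        · exact h4
  obtain ⟨c, hccomm, hciff⟩ := main_construction g R hRg hRg' hτ
  refine ⟨c, ?_, ?_⟩
  · apply Subgroup.mem_centralizer_singleton_iff.2
    apply Equiv.ext
    intro x
    rw [Equiv.Perm.mul_apply, Equiv.Perm.mul_apply]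
    exact hccomm x
  · apply Setoid.ext
    intro x y
    rw [piPart_iff, ← hciff y x]
    exact Setoid.comm' R

end CentCoh

/-- The centralizer in `Sym(Ω)` of any permutation `g` is meet-coherent; and if for every
`k ≥ 2` the number of orbits of `g` of size `k` is finite, and the number of infinite
orbits of `g` is finite, then the centralizer is also join-coherent. -/
theorem centralizer_coherence {Ω : Type*} (g : Equiv.Perm Ω) :
    MeetCoherent (Subgroup.centralizer {g}) ∧
    (((∀ k : ℕ, 2 ≤ k → {c ∈ (piPart g).classes | c.ncard = k}.Finite) ∧
        {c ∈ (piPart g).classes | c.Infinite}.Finite) →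
      JoinCoherent (Subgroup.centralizer {g})) :=
  ⟨CentCoh.meet_coherent g, fun hK => CentCoh.join_coherent g hK.1 hK.2⟩
end

section
/- Let g ∈ Sym(Ω) be a permutation with infinitely many cycles of length k for some k > 1 (k possibly infinite). Then the centralizer of g in Sym(Ω) is not join-coherent. -/
namespace CentralizerNJC

open MulAction Subgroup Function Equiv

variable {Ω : Type*}

lemma mem_orbit_zpowers_iff {G α : Type*} [Group G] [MulAction G α] {a : G} {y b : α} :
    y ∈ MulAction.orbit (Subgroup.zpowers a) b ↔ ∃ n : ℤ, a ^ n • b = y := by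
  constructor
  · rintro ⟨⟨w, hw⟩, rfl⟩
    obtain ⟨n, rfl⟩ := Subgroup.mem_zpowers_iff.1 hw
    exact ⟨n, rfl⟩
  · rintro ⟨n, rfl⟩
    exact ⟨⟨a ^ n, Subgroup.zpow_mem _ (Subgroup.mem_zpowers a) n⟩, rfl⟩

lemma piPart_rel {h : Equiv.Perm Ω} {y b : Ω} :
    piPart h y b ↔ ∃ n : ℤ, (h ^ n) b = y := by
  rw [piPart, MulAction.orbitRel_apply, mem_orbit_zpowers_iff]
  simp [Equiv.Perm.smul_def]

lemma zpow_apply_zpow (g : Equiv.Perm Ω) (a b : ℤ) (y : Ω) :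
    (g ^ a) ((g ^ b) y) = (g ^ (a + b)) y := by
  rw [← Equiv.Perm.mul_apply, ← zpow_add]

section Construction

variable (g : Equiv.Perm Ω) (x : ℕ → Ω) (d : ℕ)

/-- Parametrization of the union of the orbits of the `x i`. -/
def fmap : ℕ × ℤ → Ω := fun p => (g ^ p.2) (x p.1)

variable {g x d}

variable (Hstab : ∀ i (n : ℤ), (g ^ n) (x i) = x i ↔ (d : ℤ) ∣ n)
  (Horb : Function.Injective fun i => MulAction.orbit (Subgroup.zpowers g) (x i))

section

include Hstab Horb

lemma fmap_eq_iff {i j : ℕ} {n m : ℤ} :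
    fmap g x (i, n) = fmap g x (j, m) ↔ i = j ∧ (d : ℤ) ∣ n - m := by
  constructor
  · intro h
    have h' : (g ^ n) (x i) = (g ^ m) (x j) := h
    have hmem : (g ^ (-n + m)) (x j) = x i := by
      have := congrArg (⇑(g ^ (-n : ℤ))) h'.symm
      rwa [zpow_apply_zpow, zpow_apply_zpow, neg_add_cancel, zpow_zero, Equiv.Perm.coe_one,
        id_eq] at this
    have hij : i = j := by
      apply Horb
      exact MulAction.orbit_eq_iff.mpr
        ⟨⟨g ^ (-n + m), Subgroup.zpow_mem _ (Subgroup.mem_zpowers g) _⟩, hmem⟩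
    subst hij
    refine ⟨rfl, ?_⟩
    have hdvd : (d : ℤ) ∣ -n + m := (Hstab i _).mp hmem
    have : n - m = -(-n + m) := by ring
    rw [this]
    exact hdvd.neg_right
  · rintro ⟨rfl, hd⟩
    show (g ^ n) (x i) = (g ^ m) (x i)
    have : (g ^ (n - m)) (x i) = x i := (Hstab i (n - m)).mpr hd
    calc (g ^ n) (x i) = (g ^ (m + (n - m))) (x i) := by ring_nf
      _ = (g ^ m) ((g ^ (n - m)) (x i)) := by rw [zpow_apply_zpow]
      _ = (g ^ m) (x i) := by rw [this]

lemma fmap_factorsThrough (τ : ℕ → ℕ) (s : ℕ → ℤ) :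
    Function.FactorsThrough (fun p => fmap g x (τ p.1, p.2 + s p.1)) (fmap g x) := by
  rintro ⟨i, n⟩ ⟨j, m⟩ h
  obtain ⟨rfl, hd⟩ := (fmap_eq_iff Hstab Horb).mp h
  refine (fmap_eq_iff Hstab Horb).mpr ⟨rfl, ?_⟩
  simpa using hd

end

lemma fmap_congr {i : ℕ} {n m : ℤ} (h : n = m) : fmap g x (i, n) = fmap g x (i, m) := by rw [h]

lemma g_fmap (i : ℕ) (n : ℤ) : g (fmap g x (i, n)) = fmap g x (i, n + 1) := by
  show g ((g ^ n) (x i)) = (g ^ (n + 1)) (x i)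
  rw [add_comm, zpow_one_add, Equiv.Perm.mul_apply]

variable (g x) in
/-- The underlying function of our centralizer elements. -/
noncomputable def PFun (τ : ℕ → ℕ) (s : ℕ → ℤ) : Ω → Ω :=
  Function.extend (fmap g x) (fun p => fmap g x (τ p.1, p.2 + s p.1)) id

lemma PFun_notMem {τ : ℕ → ℕ} {s : ℕ → ℤ} {y : Ω} (hy : y ∉ Set.range (fmap g x)) :
    PFun g x τ s y = y := by
  have : ¬∃ p, fmap g x p = y := by simpa [Set.mem_range] using hy
  simp [PFun, Function.extend_apply' _ _ _ this]

section

include Hstab Horb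

lemma PFun_fmap (τ : ℕ → ℕ) (s : ℕ → ℤ) (i : ℕ) (n : ℤ) :
    PFun g x τ s (fmap g x (i, n)) = fmap g x (τ i, n + s i) :=
  (fmap_factorsThrough Hstab Horb τ s).extend_apply id (i, n)

variable {τ : ℕ → ℕ} (hτ : Function.Involutive τ) (s : ℕ → ℤ)

include hτ

lemma PFun_inv : ∀ y, PFun g x τ (fun j => -s (τ j)) (PFun g x τ s y) = y := by
  intro y
  by_cases hy : y ∈ Set.range (fmap g x)
  · obtain ⟨⟨i, n⟩, rfl⟩ := hy
    rw [PFun_fmap Hstab Horb, PFun_fmap Hstab Horb, hτ i]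
    exact fmap_congr (by simp [hτ i])
  · rw [PFun_notMem hy, PFun_notMem hy]

variable (g x) in
/-- Our centralizer elements, as permutations. -/
noncomputable def Pperm : Equiv.Perm Ω where
  toFun := PFun g x τ s
  invFun := PFun g x τ (fun j => -s (τ j))
  left_inv := PFun_inv Hstab Horb hτ s
  right_inv := by
    intro y
    have h1 := PFun_inv Hstab Horb hτ (fun j => -s (τ j)) y
    have h2 : (fun j => - (fun j' => -s (τ j')) (τ j)) = s := by
      funext j; simp [hτ j]
    rwa [h2] at h1

lemma Pperm_fmap (i : ℕ) (n : ℤ) :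
    Pperm g x Hstab Horb hτ s (fmap g x (i, n)) = fmap g x (τ i, n + s i) :=
  PFun_fmap Hstab Horb τ s i n

lemma Pperm_notMem {y : Ω} (hy : y ∉ Set.range (fmap g x)) :
    Pperm g x Hstab Horb hτ s y = y :=
  PFun_notMem hy

lemma Pperm_mem_centralizer :
    Pperm g x Hstab Horb hτ s ∈ Subgroup.centralizer {g} := by
  rw [Subgroup.mem_centralizer_singleton_iff]
  ext y
  rw [Equiv.Perm.mul_apply, Equiv.Perm.mul_apply]
  by_cases hy : y ∈ Set.range (fmap g x)
  · obtain ⟨⟨i, n⟩, rfl⟩ := hy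
    rw [g_fmap, Pperm_fmap Hstab Horb hτ s, Pperm_fmap Hstab Horb hτ s, g_fmap]
    exact fmap_congr (by ring)
  · have hgy : g y ∉ Set.range (fmap g x) := by
      rintro ⟨⟨i, n⟩, hp⟩
      refine hy ⟨(i, n - 1), g.injective ?_⟩
      rw [g_fmap, sub_add_cancel]
      exact hp
    rw [Pperm_notMem Hstab Horb hτ s hy, Pperm_notMem Hstab Horb hτ s hgy]

end

end Construction

/-- Index involution fixing `0` and swapping `2i+1 ↔ 2i+2`. -/
def tauA : ℕ → ℕ := fun i => if i = 0 then 0 else if i % 2 = 1 then i + 1 else i - 1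

/-- Shift data: shift by one on the `0`-th orbit. -/
def sA : ℕ → ℤ := fun i => if i = 0 then 1 else 0

/-- Index involution swapping `2i ↔ 2i+1`. -/
def tauB : ℕ → ℕ := fun i => if i % 2 = 0 then i + 1 else i - 1

lemma tauA_inv : Function.Involutive tauA := by
  intro i; unfold tauA; split_ifs <;> try contradiction
  all_goals omega

lemma tauB_inv : Function.Involutive tauB := by
  intro i; unfold tauB; split_ifs <;> try contradiction
  all_goals omega

lemma tauA_zero : tauA 0 = 0 := rfl
lemma sA_zero : sA 0 = 1 := rfl
lemma tauA_odd {i : ℕ} (h : i % 2 = 1) : tauA (i + 1) = i := by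
  unfold tauA; split_ifs <;> try contradiction
  all_goals omega
lemma sA_ne_zero {i : ℕ} (h : i ≠ 0) : sA i = 0 := by
  unfold sA; split_ifs <;> try contradiction
  rfl
lemma tauB_even {i : ℕ} (h : i % 2 = 0) : tauB (i + 1) = i := by
  unfold tauB; split_ifs <;> try contradiction
  all_goals omega
lemma tauB_even' {i : ℕ} (h : i % 2 = 0) : tauB i = i + 1 := by
  unfold tauB; split_ifs <;> try contradiction
  all_goals omega

end CentralizerNJC

/-- If `g ∈ Sym(Ω)` has infinitely many cycles of length `k` for some `k > 1` (`k` possibly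
infinite), then the centralizer of `g` in `Sym(Ω)` is not join-coherent. -/
theorem centralizer_not_joinCoherent {Ω : Type*} (g : Equiv.Perm Ω)
    (hk : (∃ k : ℕ, 1 < k ∧ {c ∈ (piPart g).classes | c.ncard = k}.Infinite) ∨
      {c ∈ (piPart g).classes | c.Infinite}.Infinite) :
    ¬ JoinCoherent (Subgroup.centralizer {g}) := by
  classical
  open CentralizerNJC in
  intro hJC
  -- Extract infinitely many orbits, all of the same size `d ≠ 1` (`d = 0` meaning infinite).
  obtain ⟨d, hd1, hinf⟩ : ∃ d : ℕ, d ≠ 1 ∧ {c ∈ (piPart g).classes | c.ncard = d}.Infinite := by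
    rcases hk with ⟨k, hk1, h⟩ | h
    · exact ⟨k, by omega, h⟩
    · exact ⟨0, by omega, h.mono fun c hc => ⟨hc.1, hc.2.ncard⟩⟩
  let emb := hinf.natEmbedding
  have hcl : ∀ i : ℕ, ∃ y : Ω, (emb i : Set Ω) = {w | piPart g w y} := fun i => (emb i).2.1
  choose x hx using hcl
  have horb_eq : ∀ i, (emb i : Set Ω) = MulAction.orbit (Subgroup.zpowers g) (x i) := by
    intro i
    rw [hx i]
    ext w
    simp only [Set.mem_setOf_eq, piPart]
    exact MulAction.orbitRel_apply
  have Horb : Function.Injective fun i => MulAction.orbit (Subgroup.zpowers g) (x i) := by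
    intro i j h
    have h2 : (emb i : Set Ω) = emb j := by rw [horb_eq, horb_eq]; exact h
    exact emb.injective (Subtype.coe_injective h2)
  have hper : ∀ i, Function.minimalPeriod (g • ·) (x i) = d := by
    intro i
    have h1 : Nat.card (MulAction.orbit (Subgroup.zpowers g) (x i))
        = Function.minimalPeriod (g • ·) (x i) := by
      rw [Nat.card_congr (MulAction.orbitZPowersEquiv g (x i)), Nat.card_zmod]
    have h2 : Nat.card (MulAction.orbit (Subgroup.zpowers g) (x i)) = d := by
      rw [Nat.card_coe_set_eq, ← horb_eq]
      exact (emb i).2.2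
    rw [← h1, h2]
  have Hstab : ∀ i (n : ℤ), (g ^ n) (x i) = x i ↔ (d : ℤ) ∣ n := by
    intro i n
    have h1 := @MulAction.zpow_smul_eq_iff_minimalPeriod_dvd _ _ _ _ g (x i) n
    rw [hper i] at h1
    simpa [Equiv.Perm.smul_def] using h1
  -- The two centralizer elements.
  set a := Pperm g x Hstab Horb tauA_inv sA with ha_def
  set b := Pperm g x Hstab Horb tauB_inv (fun _ => 0) with hb_def
  have ha : a ∈ Subgroup.centralizer {g} := Pperm_mem_centralizer Hstab Horb tauA_inv sA
  have hb : b ∈ Subgroup.centralizer {g} := Pperm_mem_centralizer Hstab Horb tauB_inv _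
  set Q := piPart a ⊔ piPart b with hQ_def
  obtain ⟨z, hz, hzQ⟩ := hJC (piPart a) ⟨a, ha, rfl⟩ (piPart b) ⟨b, hb, rfl⟩
  -- Basic facts about `a` on the `0`-th orbit.
  have haf : ∀ n : ℤ, a (fmap g x (0, n)) = fmap g x (0, n + 1) := by
    intro n
    rw [ha_def, Pperm_fmap Hstab Horb tauA_inv sA, tauA_zero, sA_zero]
  have hainv : ∀ n : ℤ, a⁻¹ (fmap g x (0, n)) = fmap g x (0, n - 1) := by
    intro n
    apply a.injective
    rw [← Equiv.Perm.mul_apply a a⁻¹, mul_inv_cancel, Equiv.Perm.one_apply, haf, sub_add_cancel]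
  have apow : ∀ (p n : ℤ), (a ^ p) (fmap g x (0, n)) = fmap g x (0, n + p) := by
    intro p
    induction p using Int.induction_on with
    | zero => intro n; simp
    | succ q ih =>
        intro n
        have h1 : (a ^ ((q : ℤ) + 1)) (fmap g x (0, n)) = (a ^ (q : ℤ)) (a (fmap g x (0, n))) := by
          rw [zpow_add_one, Equiv.Perm.mul_apply]
        rw [h1, haf, ih]
        exact fmap_congr (by ring)
    | pred q ih =>
        intro n
        have h1 : (a ^ (-(q : ℤ) - 1)) (fmap g x (0, n))
            = (a ^ (-(q : ℤ))) (a⁻¹ (fmap g x (0, n))) := by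
          rw [zpow_sub_one, Equiv.Perm.mul_apply]
        rw [h1, hainv, ih]
        exact fmap_congr (by ring)
  -- All of `C₀` is in one class of `Q`.
  have q0 : ∀ n m : ℤ, Q (fmap g x (0, n)) (fmap g x (0, m)) := by
    intro n m
    have h1 : piPart a (fmap g x (0, n)) (fmap g x (0, m)) := by
      rw [piPart_rel]
      exact ⟨n - m, by rw [apow]; exact fmap_congr (by ring)⟩
    exact Setoid.le_def.mp le_sup_left h1
  -- The ladder: each `fmap (i+1, n)` is related to `fmap (i, n)`.
  have qstep : ∀ (i : ℕ) (n : ℤ), Q (fmap g x (i + 1, n)) (fmap g x (i, n)) := by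
    intro i n
    rcases Nat.even_or_odd i with he | ho
    · have h2 : i % 2 = 0 := Nat.even_iff.mp he
      have h1 : piPart b (fmap g x (i + 1, n)) (fmap g x (i, n)) := by
        rw [piPart_rel]
        refine ⟨1, ?_⟩
        rw [zpow_one, hb_def, Pperm_fmap Hstab Horb tauB_inv _, tauB_even' h2]
        exact fmap_congr (by ring)
      exact Setoid.le_def.mp le_sup_right h1
    · have h2 : i % 2 = 1 := Nat.odd_iff.mp ho
      have h1 : piPart a (fmap g x (i + 1, n)) (fmap g x (i, n)) := by
        rw [piPart_rel]
        refine ⟨-1, ?_⟩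
        have hi0 : i ≠ 0 := by omega
        have : a⁻¹ (fmap g x (i, n)) = fmap g x (i + 1, n) := by
          apply a.injective
          rw [← Equiv.Perm.mul_apply a a⁻¹, mul_inv_cancel, Equiv.Perm.one_apply, ha_def, Pperm_fmap Hstab Horb tauA_inv sA, tauA_odd h2,
            sA_ne_zero (by omega : i + 1 ≠ 0)]
          exact fmap_congr (by ring)
        rw [zpow_neg_one]
        exact this
      exact Setoid.le_def.mp le_sup_left h1
  have qdown : ∀ (i : ℕ) (n : ℤ), Q (fmap g x (i, n)) (fmap g x (0, n)) := by
    intro i n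
    induction i with
    | zero => exact Q.iseqv.refl _
    | succ j ih => exact Q.iseqv.trans (qstep j n) ih
  -- Transfer `Q`-relations to `z`-orbit relations.
  have hrel : ∀ y w : Ω, Q y w → ∃ p : ℤ, (z ^ p) w = y := by
    intro y w h
    have h2 : piPart z y w := by rw [hzQ]; exact h
    exact piPart_rel.mp h2
  have hf0 : fmap g x (0, (0 : ℤ)) = x 0 := by simp [fmap]
  have hf1 : fmap g x (0, (1 : ℤ)) = g (x 0) := by simp [fmap]
  obtain ⟨m, hm⟩ := hrel _ _ (q0 1 0)
  rw [hf0, hf1] at hm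
  -- `z ^ m (x 0) = g (x 0)` with `m ≠ 0`.
  have hm0 : m ≠ 0 := by
    intro h0
    rw [h0] at hm
    simp only [zpow_zero, Equiv.Perm.coe_one, id_eq] at hm
    have : (g ^ (1 : ℤ)) (x 0) = x 0 := by rw [zpow_one, ← hm]
    have hdd := (Hstab 0 1).mp this
    have : d ∣ 1 := by exact_mod_cast hdd
    exact hd1 (Nat.dvd_one.mp this)
  have hcomm : Commute g z := by
    have := Subgroup.mem_centralizer_singleton_iff.mp hz
    exact this.symm
  have key : ∀ t : ℤ, g ((z ^ t) (x 0)) = (z ^ (t + m)) (x 0) := by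
    intro t
    have h1 : (z ^ (t + m)) (x 0) = (z ^ t) ((z ^ m) (x 0)) := by
      rw [← Equiv.Perm.mul_apply, ← zpow_add]
    have h2 : (g * z ^ t) (x 0) = (z ^ t * g) (x 0) := by
      rw [(hcomm.zpow_right t).eq]
    rw [h1, hm]
    simpa [Equiv.Perm.mul_apply] using h2
  have kinv : ∀ t : ℤ, g⁻¹ ((z ^ t) (x 0)) = (z ^ (t - m)) (x 0) := by
    intro t
    apply g.injective
    rw [← Equiv.Perm.mul_apply g g⁻¹, mul_inv_cancel, Equiv.Perm.one_apply, key, sub_add_cancel]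
  have keyq : ∀ (q t : ℤ), (g ^ q) ((z ^ t) (x 0)) = (z ^ (t + q * m)) (x 0) := by
    intro q
    induction q using Int.induction_on with
    | zero => intro t; simp
    | succ q ih =>
        intro t
        have h1 : (g ^ ((q : ℤ) + 1)) ((z ^ t) (x 0))
            = (g ^ (q : ℤ)) (g ((z ^ t) (x 0))) := by
          rw [zpow_add_one, Equiv.Perm.mul_apply]
        rw [h1, key, ih]
        congr 1
        ring
    | pred q ih =>
        intro t
        have h1 : (g ^ (-(q : ℤ) - 1)) ((z ^ t) (x 0))
            = (g ^ (-(q : ℤ))) (g⁻¹ ((z ^ t) (x 0))) := by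
          rw [zpow_sub_one, Equiv.Perm.mul_apply]
        rw [h1, kinv, ih]
        congr 1
        ring
  -- every basepoint is in the `z`-orbit of `x 0`
  have hxt : ∀ i : ℕ, ∃ t : ℤ, (z ^ t) (x 0) = x i := by
    intro i
    have h1 : Q (fmap g x (i, 0)) (fmap g x (0, 0)) := qdown i 0
    obtain ⟨t, ht⟩ := hrel _ _ h1
    refine ⟨t, ?_⟩
    rw [hf0] at ht
    rw [ht]
    simp [fmap]
  choose t ht using hxt
  -- pigeonhole modulo `m`
  haveI : NeZero m.natAbs := ⟨Int.natAbs_ne_zero.mpr hm0⟩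
  obtain ⟨i, j, hij, hmod⟩ :=
    Finite.exists_ne_map_eq_of_infinite (fun i : ℕ => ((t i : ℤ) : ZMod m.natAbs))
  have hdvd : (m.natAbs : ℤ) ∣ t j - t i := by
    have h1 : t i ≡ t j [ZMOD (m.natAbs : ℕ)] := (ZMod.intCast_eq_intCast_iff _ _ _).mp hmod
    exact Int.ModEq.dvd h1
  have hdvd2 : m ∣ t j - t i := (Int.natAbs_dvd).mp hdvd
  obtain ⟨q, hq⟩ := hdvd2
  have hxj : (g ^ q) (x i) = x j := by
    rw [← ht i, keyq q (t i), ← ht j]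
    congr 1
    have : t j = t i + q * m := by rw [mul_comm] at hq; linarith
    rw [this]
  have horbs : MulAction.orbit (Subgroup.zpowers g) (x j)
      = MulAction.orbit (Subgroup.zpowers g) (x i) :=
    MulAction.orbit_eq_iff.mpr
      ⟨⟨g ^ q, Subgroup.zpow_mem _ (Subgroup.mem_zpowers g) _⟩, hxj⟩
  exact hij (Horb horbs).symm
end

section
/- A finite Frobenius group is join-coherent if and only if its degree is prime; and a finite Frobenius group is meet-coherent if and only if it is dihedral of prime degree (the dihedral group of order 2p acting on p points). -/
set_option linter.unusedSectionVars false

noncomputable section FrobAux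

open Equiv Subgroup Finset

variable {Ω : Type*} [Fintype Ω] [DecidableEq Ω]

/-- Frobenius hypotheses bundled. -/
structure Frob (G : Subgroup (Equiv.Perm Ω)) : Prop where
  htrans : ∀ a b : Ω, ∃ g ∈ G, g a = b
  hstab : ∀ ω : Ω, ∃ g ∈ G, g ω = ω ∧ g ≠ 1
  hfrob : ∀ g ∈ G, ∀ ω₁ ω₂ : Ω, ω₁ ≠ ω₂ → g ω₁ = ω₁ → g ω₂ = ω₂ → g = 1

section Basic

lemma perm_eq_one {g : Perm Ω} (h : ∀ x, g x = x) : g = 1 := Equiv.ext h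

lemma piPart_iff (g : Perm Ω) (x y : Ω) : (piPart g) x y ↔ ∃ k : ℤ, (g ^ k) y = x := by
  rw [piPart, MulAction.orbitRel_apply, MulAction.mem_orbit_iff]
  constructor
  · rintro ⟨u, h⟩
    obtain ⟨k, hk⟩ := Subgroup.mem_zpowers_iff.mp u.2
    refine ⟨k, ?_⟩
    rw [hk]
    exact h
  · rintro ⟨k, h⟩
    exact ⟨⟨g ^ k, Subgroup.mem_zpowers_iff.mpr ⟨k, rfl⟩⟩, h⟩

lemma piPart_one : piPart (1 : Perm Ω) = ⊥ := by
  refine Setoid.ext fun x y => ?_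
  rw [piPart_iff]
  constructor
  · rintro ⟨k, hk⟩
    rw [one_zpow] at hk
    exact hk ▸ rfl
  · intro h
    refine ⟨0, ?_⟩
    rw [zpow_zero]
    exact (show x = y from h).symm ▸ rfl

lemma orbitRel_iff (A : Subgroup (Perm Ω)) (x y : Ω) :
    (MulAction.orbitRel ↥A Ω) x y ↔ ∃ u ∈ A, u y = x := by
  rw [MulAction.orbitRel_apply, MulAction.mem_orbit_iff]
  constructor
  · rintro ⟨u, h⟩
    exact ⟨u.1, u.2, h⟩
  · rintro ⟨u, hu, h⟩
    exact ⟨⟨u, hu⟩, h⟩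

lemma orbitRel_mono {A B : Subgroup (Perm Ω)} (h : A ≤ B) :
    MulAction.orbitRel ↥A Ω ≤ MulAction.orbitRel ↥B Ω := by
  rw [Setoid.le_def]
  intro x y hxy
  rw [orbitRel_iff] at hxy ⊢
  obtain ⟨u, hu, hh⟩ := hxy
  exact ⟨u, h hu, hh⟩

lemma orbitRel_sup (A B : Subgroup (Perm Ω)) :
    MulAction.orbitRel ↥A Ω ⊔ MulAction.orbitRel ↥B Ω = MulAction.orbitRel ↥(A ⊔ B) Ω := by
  apply le_antisymm
  · exact sup_le (orbitRel_mono le_sup_left) (orbitRel_mono le_sup_right)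
  · rw [Setoid.le_def]
    intro x y hxy
    rw [orbitRel_iff] at hxy
    obtain ⟨u, hu, rfl⟩ := hxy
    rw [Subgroup.sup_eq_closure] at hu
    have key : ∀ w, w ∈ Subgroup.closure ((A : Set (Perm Ω)) ∪ (B : Set (Perm Ω))) →
        ∀ y, (MulAction.orbitRel ↥A Ω ⊔ MulAction.orbitRel ↥B Ω) (w y) y := by
      intro w hw
      induction hw using Subgroup.closure_induction with
      | mem w h =>
        intro y
        rcases h with h | h
        · exact Setoid.le_def.mp le_sup_left ((orbitRel_iff A _ _).mpr ⟨w, h, rfl⟩)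
        · exact Setoid.le_def.mp le_sup_right ((orbitRel_iff B _ _).mpr ⟨w, h, rfl⟩)
      | one =>
        intro y
        exact (MulAction.orbitRel ↥A Ω ⊔ MulAction.orbitRel ↥B Ω).iseqv.refl y
      | mul a b _ _ pa pb =>
        intro y
        exact (MulAction.orbitRel ↥A Ω ⊔ MulAction.orbitRel ↥B Ω).iseqv.trans (pa (b y)) (pb y)
      | inv a _ pa =>
        intro y
        have h2 := pa (a⁻¹ y)
        rw [Equiv.Perm.apply_inv_self] at h2
        exact (MulAction.orbitRel ↥A Ω ⊔ MulAction.orbitRel ↥B Ω).iseqv.symm h2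
    exact key u hu y

lemma piPart_top {z : Perm Ω} (hfull : ∀ x y : Ω, ∃ k : ℤ, (z ^ k) x = y) :
    piPart z = ⊤ := by
  refine Setoid.ext fun x y => ?_
  rw [piPart_iff]
  constructor
  · intro _
    trivial
  · intro _
    exact hfull y x

lemma card_dvd_of_orbits (h : Perm Ω) (m : ℕ) (hm : 0 < m) :
    ∀ S : Finset Ω, (∀ x ∈ S, h x ∈ S) → (∀ x ∈ S, (h ^ m) x = x) →
    (∀ x ∈ S, ∀ i : ℕ, 0 < i → i < m → (h ^ i) x ≠ x) → m ∣ S.card := by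
  intro S
  induction S using Finset.strongInduction with
  | _ S ih =>
    intro hinv hper hfree
    rcases S.eq_empty_or_nonempty with rfl | ⟨x, hx⟩
    · simp
    · have hpow : ∀ i : ℕ, (h ^ i) x ∈ S := by
        intro i
        induction i with
        | zero => simpa using hx
        | succ n ihn =>
          rw [pow_succ', Equiv.Perm.mul_apply]
          exact hinv _ ihn
      set O : Finset Ω := (Finset.range m).image (fun i => (h ^ i) x) with hO
      have hOS : O ⊆ S := by
        intro y hy
        simp only [hO, Finset.mem_image, Finset.mem_range] at hy
        obtain ⟨i, _, rfl⟩ := hy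
        exact hpow i
      have hinj : ∀ i < m, ∀ j < m, (h ^ i) x = (h ^ j) x → i = j := by
        intro i hi j hj hij
        by_contra hne
        wlog hlt : i < j generalizing i j
        · exact this j hj i hi hij.symm (Ne.symm hne) (by omega)
        · have h1 : (h ^ (j - i)) ((h ^ i) x) = (h ^ i) x := by
            rw [← Equiv.Perm.mul_apply, ← pow_add, Nat.sub_add_cancel hlt.le]
            exact hij.symm
          exact hfree _ (hpow i) (j - i) (by omega) (by omega) h1
      have hcardO : O.card = m := by
        rw [hO, Finset.card_image_of_injOn, Finset.card_range]
        intro i hi j hj hij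
        simp only [Finset.coe_range, Set.mem_Iio] at hi hj
        exact hinj i hi j hj hij
      have hxO : x ∈ O := by
        simp only [hO, Finset.mem_image, Finset.mem_range]
        exact ⟨0, hm, by simp⟩
      have hmodO : ∀ i : ℕ, (h ^ i) x ∈ O := by
        intro i
        have hxm : ∀ q : ℕ, (h ^ (m * q)) x = x := by
          intro q
          induction q with
          | zero => simp
          | succ q ihq =>
            rw [Nat.mul_succ, pow_add, Equiv.Perm.mul_apply, hper x hx, ihq]
        have hmod : (h ^ i) x = (h ^ (i % m)) x := by
          conv_lhs => rw [← Nat.mod_add_div i m]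
          rw [pow_add, Equiv.Perm.mul_apply, hxm _]
        rw [hmod]
        simp only [hO, Finset.mem_image, Finset.mem_range]
        exact ⟨i % m, Nat.mod_lt _ hm, rfl⟩
      have hinvO : ∀ w ∈ O, h⁻¹ w ∈ O := by
        intro w hw
        simp only [hO, Finset.mem_image, Finset.mem_range] at hw
        obtain ⟨i, hi, rfl⟩ := hw
        have e1 : m - 1 + i + 1 = i + m := by omega
        have key : (h ^ i) x = h ((h ^ (m - 1 + i)) x) := by
          calc (h ^ i) x = (h ^ i) ((h ^ m) x) := by rw [hper x hx]
          _ = (h ^ (i + m)) x := by rw [pow_add]; rfl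
          _ = h ((h ^ (m - 1 + i)) x) := by rw [← e1, pow_succ']; rfl
        rw [key, Equiv.Perm.inv_apply_self]
        exact hmodO _
      have hdvd : m ∣ (S \ O).card := by
        refine ih (S \ O) (Finset.sdiff_ssubset hOS ⟨x, hxO⟩) ?_ ?_ ?_
        · intro y hy
          rw [Finset.mem_sdiff] at hy ⊢
          refine ⟨hinv y hy.1, fun hc => hy.2 ?_⟩
          have h2 := hinvO _ hc
          rwa [Equiv.Perm.inv_apply_self] at h2
        · intro y hy
          exact hper y (Finset.mem_sdiff.mp hy).1
        · intro y hy
          exact hfree y (Finset.mem_sdiff.mp hy).1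
      have hle := Finset.card_le_card hOS
      have hcard : S.card = (S \ O).card + m := by
        rw [Finset.card_sdiff_of_subset hOS, hcardO]
        omega
      rw [hcard]
      exact Nat.dvd_add hdvd dvd_rfl

lemma zpow_eq_zpow_of_cast {H : Type*} [Group H] {g : H} {p : ℕ} (h : orderOf g = p)
    {x y : ℤ} (hxy : ((x : ZMod p) = (y : ZMod p))) : g ^ x = g ^ y := by
  have h1 : ((x - y : ℤ) : ZMod p) = 0 := by
    push_cast
    rw [hxy]
    ring
  have h2 : ((p : ℤ)) ∣ (x - y) := (ZMod.intCast_zmod_eq_zero_iff_dvd _ _).mp h1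
  have h3 : g ^ (x - y) = 1 := orderOf_dvd_iff_zpow_eq_one.mp (by rw [h]; exact h2)
  rw [zpow_sub] at h3
  exact mul_inv_eq_one.mp h3

end Basic

section Counting

variable (G : Subgroup (Perm Ω))

/-- `G` as a finset. -/
def GF : Finset (Perm Ω) := @Finset.filter _ (· ∈ G) (Classical.decPred _) Finset.univ

lemma mem_GF {g : Perm Ω} : g ∈ GF G ↔ g ∈ G := by
  simp [GF]

lemma card_GF (G : Subgroup (Perm Ω)) : Nat.card ↥G = (GF G).card := by
  rw [← SetLike.coe_sort_coe, Nat.card_coe_set_eq, ← Set.ncard_coe_finset]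
  congr 1
  ext u
  simp only [Finset.coe_filter, Finset.mem_coe, mem_GF, SetLike.mem_coe, GF,
    Finset.mem_filter, Finset.mem_univ, true_and, Set.mem_setOf_eq]

variable {G}

lemma Frob.one_lt_card [Nonempty Ω] (hG : Frob G) : 2 ≤ Fintype.card Ω := by
  obtain ⟨ω⟩ := (inferInstance : Nonempty Ω)
  obtain ⟨g, hg, hgω, hg1⟩ := hG.hstab ω
  have hx : ∃ x, g x ≠ x := by
    by_contra hc
    push_neg at hc
    exact hg1 (perm_eq_one hc)
  obtain ⟨x, hgx⟩ := hx
  have : Nontrivial Ω := ⟨⟨g x, x, hgx⟩⟩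
  exact Fintype.one_lt_card

lemma Frob.eq_one (hG : Frob G) {g : Perm Ω} {x y : Ω} (hg : g ∈ G)
    (hx : g x = x) (hy : g y = y) (hxy : x ≠ y) : g = 1 :=
  hG.hfrob g hg x y hxy hx hy

lemma Frob.card_stab (hG : Frob G) (x : Ω) :
    (GF G).card = Fintype.card Ω * ((GF G).filter (fun g => g x = x)).card := by
  have hmem : ∀ g ∈ GF G, g x ∈ (Finset.univ : Finset Ω) := fun _ _ => Finset.mem_univ _
  have key : ∀ y : Ω, ((GF G).filter (fun g => g x = y)).card
      = ((GF G).filter (fun g => g x = x)).card := by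
    intro y
    obtain ⟨g₀, hg₀, hg₀x⟩ := hG.htrans x y
    refine Finset.card_nbij (fun g => g₀⁻¹ * g) ?_ ?_ ?_
    · intro g hgm
      rw [Finset.mem_coe, Finset.mem_filter, mem_GF] at hgm ⊢
      refine ⟨G.mul_mem (G.inv_mem hg₀) hgm.1, ?_⟩
      rw [Equiv.Perm.mul_apply, hgm.2, ← hg₀x, Equiv.Perm.inv_apply_self]
    · intro a _ b _ hab
      exact mul_left_cancel hab
    · intro b hb
      simp only [Finset.coe_filter, Set.mem_setOf_eq, mem_GF] at hb
      refine ⟨g₀ * b, ?_, ?_⟩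
      · simp only [Finset.coe_filter, Set.mem_setOf_eq, mem_GF]
        exact ⟨G.mul_mem hg₀ hb.1, by rw [Equiv.Perm.mul_apply, hb.2, hg₀x]⟩
      · show g₀⁻¹ * (g₀ * b) = b
        rw [inv_mul_cancel_left]
  rw [Finset.card_eq_sum_card_fiberwise hmem,
    Finset.sum_congr rfl (fun y _ => key y), Finset.sum_const, Finset.card_univ, smul_eq_mul]

lemma Frob.card_coset (hG : Frob G) (u w : Ω) :
    ((GF G).filter (fun g => g u = w)).card = ((GF G).filter (fun g => g u = u)).card := by
  obtain ⟨g₀, hg₀, hg₀u⟩ := hG.htrans u w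
  refine Finset.card_nbij (fun g => g₀⁻¹ * g) ?_ ?_ ?_
  · intro g hgm
    rw [Finset.mem_coe, Finset.mem_filter, mem_GF] at hgm ⊢
    refine ⟨G.mul_mem (G.inv_mem hg₀) hgm.1, ?_⟩
    rw [Equiv.Perm.mul_apply, hgm.2, ← hg₀u, Equiv.Perm.inv_apply_self]
  · intro a _ b _ hab
    exact mul_left_cancel hab
  · intro b hb
    simp only [Finset.coe_filter, Set.mem_setOf_eq, mem_GF] at hb
    refine ⟨g₀ * b, ?_, ?_⟩
    · simp only [Finset.coe_filter, Set.mem_setOf_eq, mem_GF]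
      exact ⟨G.mul_mem hg₀ hb.1, by rw [Equiv.Perm.mul_apply, hb.2, hg₀u]⟩
    · show g₀⁻¹ * (g₀ * b) = b
      rw [inv_mul_cancel_left]

lemma Frob.stab_card_eq (hG : Frob G) [Nonempty Ω] (x y : Ω) :
    ((GF G).filter (fun g => g x = x)).card = ((GF G).filter (fun g => g y = y)).card := by
  have hx := hG.card_stab x
  have hy := hG.card_stab y
  have hpos : 0 < Fintype.card Ω := Fintype.card_pos
  exact Nat.eq_of_mul_eq_mul_left hpos (hx ▸ hy)

lemma Frob.card_fpf (hG : Frob G) [Nonempty Ω] :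
    ((GF G).filter (fun g => ∀ v, g v ≠ v)).card = Fintype.card Ω - 1 := by
  obtain ⟨ω₀⟩ := (inferInstance : Nonempty Ω)
  have hn2 : 2 ≤ Fintype.card Ω := hG.one_lt_card
  set n := Fintype.card Ω with hn
  set F := (GF G).filter (fun g => ∀ v, g v ≠ v) with hF
  set B : Ω → Finset (Perm Ω) := fun x => (GF G).filter (fun g => g x = x ∧ g ≠ 1) with hB
  have hdisj : ∀ x ∈ (Finset.univ : Finset Ω), ∀ y ∈ (Finset.univ : Finset Ω), x ≠ y →
      Disjoint (B x) (B y) := by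
    intro x _ y _ hxy
    rw [Finset.disjoint_left]
    intro g hgx hgy
    simp only [hB, Finset.mem_filter, mem_GF] at hgx hgy
    exact hgx.2.2 (hG.eq_one hgx.1 hgx.2.1 hgy.2.1 hxy)
  have hFB : Disjoint F ((Finset.univ : Finset Ω).biUnion B) := by
    rw [Finset.disjoint_left]
    intro g hgF hgB
    simp only [hF, Finset.mem_filter] at hgF
    simp only [Finset.mem_biUnion, hB, Finset.mem_filter] at hgB
    obtain ⟨x, _, _, hx, _⟩ := hgB
    exact hgF.2 x hx
  have h1mem : (1 : Perm Ω) ∉ F ∪ (Finset.univ : Finset Ω).biUnion B := by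
    intro hc
    rcases Finset.mem_union.mp hc with hc | hc
    · simp only [hF, Finset.mem_filter] at hc
      exact hc.2 ω₀ rfl
    · simp only [Finset.mem_biUnion, hB, Finset.mem_filter] at hc
      obtain ⟨x, _, _, _, h1⟩ := hc
      exact h1 rfl
  have hunion : GF G = insert 1 (F ∪ (Finset.univ : Finset Ω).biUnion B) := by
    ext g
    simp only [Finset.mem_insert, Finset.mem_union, Finset.mem_biUnion, hF, hB,
      Finset.mem_filter, mem_GF, Finset.mem_univ, true_and]
    constructor
    · intro hg
      by_cases h1 : g = 1
      · exact Or.inl h1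
      by_cases hf : ∀ v, g v ≠ v
      · exact Or.inr (Or.inl ⟨hg, hf⟩)
      · push_neg at hf
        obtain ⟨v, hv⟩ := hf
        exact Or.inr (Or.inr ⟨v, hg, hv, h1⟩)
    · rintro (rfl | ⟨hg, _⟩ | ⟨v, hg, _⟩)
      · exact G.one_mem
      · exact hg
      · exact hg
  have hBcard : ∀ x : Ω, (B x).card
      = ((GF G).filter (fun g => g ω₀ = ω₀)).card - 1 := by
    intro x
    have e1 : B x = ((GF G).filter (fun g => g x = x)).erase 1 := by
      ext g
      simp only [hB, Finset.mem_filter, Finset.mem_erase, mem_GF]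
      tauto
    have h1s : (1 : Perm Ω) ∈ (GF G).filter (fun g => g x = x) := by
      simp only [Finset.mem_filter, mem_GF]
      exact ⟨G.one_mem, rfl⟩
    rw [e1, Finset.card_erase_of_mem h1s, hG.stab_card_eq x ω₀]
  set sc := ((GF G).filter (fun g => g ω₀ = ω₀)).card with hsc
  have hs1 : 1 ≤ sc := by
    rw [hsc]
    refine Finset.card_pos.mpr ⟨1, ?_⟩
    simp only [Finset.mem_filter, mem_GF]
    exact ⟨G.one_mem, rfl⟩
  have htot : n * sc = 1 + (F.card + n * (sc - 1)) := by
    have e2 := hG.card_stab ω₀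
    rw [← hsc] at e2
    rw [← e2, hunion, Finset.card_insert_of_notMem h1mem,
      Finset.card_union_of_disjoint hFB, Finset.card_biUnion hdisj]
    have e3 : ∀ x ∈ (Finset.univ : Finset Ω), (B x).card = sc - 1 := fun x _ => hBcard x
    rw [Finset.sum_congr rfl e3, Finset.sum_const, Finset.card_univ, smul_eq_mul, ← hn]
    omega
  have e4 : n * (sc - 1) + n = n * sc := by
    rw [← Nat.mul_succ]
    congr 1
    omega
  omega

end Counting

section FullCycle

variable {G : Subgroup (Perm Ω)} {z : Perm Ω}

lemma zpow_fix_eq_one (hfull : ∀ x y : Ω, ∃ k : ℤ, (z ^ k) x = y)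
    {k : ℤ} {x : Ω} (hx : (z ^ k) x = x) : z ^ k = 1 := by
  refine Equiv.ext fun y => ?_
  obtain ⟨j, hj⟩ := hfull x y
  subst hj
  show (z ^ k) ((z ^ j) x) = (1 : Perm Ω) ((z ^ j) x)
  rw [Equiv.Perm.one_apply, ← Equiv.Perm.mul_apply, ← zpow_add, add_comm, zpow_add,
    Equiv.Perm.mul_apply, hx]

lemma orderOf_full (hfull : ∀ x y : Ω, ∃ k : ℤ, (z ^ k) x = y) [Nonempty Ω] :
    orderOf z = Fintype.card Ω := by
  obtain ⟨ω₀⟩ := (inferInstance : Nonempty Ω)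
  have hpos : 0 < orderOf z := orderOf_pos z
  have key : (Finset.range (orderOf z)).card = (Finset.univ : Finset Ω).card := by
    refine Finset.card_nbij (fun i => (z ^ i) ω₀) (fun i _ => Finset.mem_univ _) ?_ ?_
    · have key : ∀ i j : ℕ, i < j → j < orderOf z → (z ^ i) ω₀ = (z ^ j) ω₀ → False := by
        intro i j hlt hj hij
        have hfix : (z ^ (j - i)) ((z ^ i) ω₀) = (z ^ i) ω₀ := by
          rw [← Equiv.Perm.mul_apply, ← pow_add, Nat.sub_add_cancel hlt.le]
          exact hij.symm
        have h1 : z ^ (((j - i : ℕ)) : ℤ) = 1 := by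
          refine zpow_fix_eq_one hfull (x := (z ^ i) ω₀) ?_
          rw [zpow_natCast]
          exact hfix
        rw [zpow_natCast] at h1
        have h2 := orderOf_dvd_of_pow_eq_one h1
        have h3 := Nat.le_of_dvd (by omega) h2
        omega
      intro i hi j hj hij
      simp only [Finset.coe_range, Set.mem_Iio] at hi hj
      have hij' : (z ^ i) ω₀ = (z ^ j) ω₀ := hij
      rcases Nat.lt_trichotomy i j with h | h | h
      · exact absurd (key i j h hj hij') (fun a => a)
      · exact h
      · exact absurd (key j i h hi hij'.symm) (fun a => a)
    · intro y _
      obtain ⟨k, hk⟩ := hfull ω₀ y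
      have hne : ((orderOf z : ℤ)) ≠ 0 := by exact_mod_cast hpos.ne'
      have hr : z ^ k = z ^ ((k % (orderOf z : ℤ)).toNat) := by
        rw [← zpow_natCast, Int.toNat_of_nonneg (Int.emod_nonneg _ hne), zpow_mod_orderOf]
      refine ⟨(k % (orderOf z : ℤ)).toNat, ?_, ?_⟩
      · simp only [Finset.coe_range, Set.mem_Iio]
        have h4 := Int.emod_lt_of_pos k (b := (orderOf z : ℤ)) (by exact_mod_cast hpos)
        omega
      · show (z ^ ((k % (orderOf z : ℤ)).toNat)) ω₀ = y
        rw [← hr]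
        exact hk
  rw [Finset.card_range] at key
  rw [key, Finset.card_univ]

lemma commute_fix_eq_one (hfull : ∀ x y : Ω, ∃ k : ℤ, (z ^ k) x = y)
    {g : Perm Ω} {ω : Ω} (hc : g * z = z * g) (hω : g ω = ω) : g = 1 := by
  refine Equiv.ext fun y => ?_
  obtain ⟨k, hk⟩ := hfull ω y
  subst hk
  have hck : g * z ^ k = z ^ k * g := Commute.zpow_right hc k
  calc g ((z ^ k) ω) = (g * z ^ k) ω := rfl
  _ = (z ^ k * g) ω := by rw [hck]
  _ = (z ^ k) ω := by rw [Equiv.Perm.mul_apply, hω]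
  _ = (1 : Perm Ω) ((z ^ k) ω) := rfl

lemma Frob.fpf_mem (hG : Frob G) [Nonempty Ω] (hzG : z ∈ G)
    (hfull : ∀ x y : Ω, ∃ k : ℤ, (z ^ k) x = y)
    {g : Perm Ω} (hg : g ∈ G) (hfpf : ∀ v, g v ≠ v) : g ∈ zpowers z := by
  have hn2 := hG.one_lt_card
  set Zf := (GF G).filter (fun g => g ∈ zpowers z ∧ g ≠ 1) with hZf
  set Ff := (GF G).filter (fun g => ∀ v, g v ≠ v) with hFf
  have hsub : Zf ⊆ Ff := by
    intro u hu
    simp only [hZf, Finset.mem_filter, mem_GF] at hu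
    simp only [hFf, Finset.mem_filter, mem_GF]
    refine ⟨hu.1, fun v hv => ?_⟩
    obtain ⟨k, hk⟩ := Subgroup.mem_zpowers_iff.mp hu.2.1
    apply hu.2.2
    rw [← hk]
    exact zpow_fix_eq_one hfull (x := v) (by rw [hk]; exact hv)
  have hcardZ : Zf.card = Fintype.card Ω - 1 := by
    have e1 : Zf = ((GF G).filter (fun g => g ∈ zpowers z)).erase 1 := by
      ext u
      simp only [hZf, Finset.mem_filter, Finset.mem_erase, mem_GF]
      tauto
    have e2 : (GF G).filter (fun g => g ∈ zpowers z)
        = (Finset.range (orderOf z)).image (fun i => z ^ i) := by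
      ext u
      simp only [Finset.mem_filter, mem_GF, Finset.mem_image, Finset.mem_range]
      constructor
      · rintro ⟨-, hu⟩
        obtain ⟨k, hk⟩ := Subgroup.mem_zpowers_iff.mp hu
        refine ⟨(k % (orderOf z : ℤ)).toNat, ?_, ?_⟩
        · have hpos : 0 < orderOf z := orderOf_pos z
          have h4 := Int.emod_lt_of_pos k (b := (orderOf z : ℤ)) (by exact_mod_cast hpos)
          omega
        · rw [← zpow_natCast,
            Int.toNat_of_nonneg (Int.emod_nonneg _ (by exact_mod_cast (orderOf_pos z).ne')),
            zpow_mod_orderOf, hk]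
      · rintro ⟨i, -, rfl⟩
        exact ⟨G.pow_mem hzG i, Subgroup.mem_zpowers_iff.mpr ⟨(i : ℤ), zpow_natCast z i⟩⟩
    have e3 : ((Finset.range (orderOf z)).image (fun i => z ^ i)).card = orderOf z := by
      rw [Finset.card_image_of_injOn, Finset.card_range]
      intro i hi j hj hij
      simp only [Finset.coe_range, Set.mem_Iio] at hi hj
      exact pow_injOn_Iio_orderOf hi hj hij
    have h1m : (1 : Perm Ω) ∈ (GF G).filter (fun g => g ∈ zpowers z) := by
      simp only [Finset.mem_filter, mem_GF]
      exact ⟨G.one_mem, Subgroup.one_mem _⟩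
    rw [e1, Finset.card_erase_of_mem h1m, e2, e3, orderOf_full hfull]
  have hFcard : Ff.card = Fintype.card Ω - 1 := hG.card_fpf
  have heq : Zf = Ff := Finset.eq_of_subset_of_card_le hsub (by omega)
  have hgF : g ∈ Ff := by
    simp only [hFf, Finset.mem_filter, mem_GF]
    exact ⟨hg, hfpf⟩
  rw [← heq] at hgF
  simp only [hZf, Finset.mem_filter] at hgF
  exact hgF.2.1

lemma Frob.conj_mem (hG : Frob G) [Nonempty Ω] (hzG : z ∈ G)
    (hfull : ∀ x y : Ω, ∃ k : ℤ, (z ^ k) x = y)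
    {g : Perm Ω} (hg : g ∈ G) : g * z * g⁻¹ ∈ zpowers z := by
  apply hG.fpf_mem hzG hfull (G.mul_mem (G.mul_mem hg hzG) (G.inv_mem hg))
  intro v hv
  have h3 := congrArg (fun w => g⁻¹ w) hv
  simp only [Equiv.Perm.mul_apply] at h3
  simp only [Equiv.Perm.inv_apply_self] at h3
  have h4 : z ^ (1 : ℤ) = 1 := zpow_fix_eq_one hfull (by rw [zpow_one]; exact h3)
  rw [zpow_one] at h4
  have h5 := orderOf_full hfull
  rw [h4, orderOf_one] at h5
  have h6 := hG.one_lt_card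
  omega

lemma zpow_cast (hfull : ∀ x y : Ω, ∃ k : ℤ, (z ^ k) x = y) [Nonempty Ω] (a b : ℤ) :
    z ^ a = z ^ b ↔ ((a : ZMod (Fintype.card Ω)) = (b : ZMod (Fintype.card Ω))) := by
  have hord := orderOf_full hfull
  have key : z ^ a = z ^ b ↔ ((orderOf z : ℤ)) ∣ (a - b) := by
    rw [orderOf_dvd_iff_zpow_eq_one, zpow_sub, mul_inv_eq_one]
  rw [key, hord, ZMod.intCast_eq_intCast_iff, Int.modEq_iff_dvd, dvd_sub_comm]

lemma full_of_mem_zpowers (hfull : ∀ x y : Ω, ∃ k : ℤ, (z ^ k) x = y) [Nonempty Ω]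
    (hp : (Fintype.card Ω).Prime) {u : Perm Ω} (hu : u ∈ zpowers z) (hu1 : u ≠ 1) :
    ∀ x y : Ω, ∃ k : ℤ, (u ^ k) x = y := by
  obtain ⟨k, hk⟩ := Subgroup.mem_zpowers_iff.mp hu
  haveI : NeZero (Fintype.card Ω) := ⟨hp.pos.ne'⟩
  haveI : Fact (Fintype.card Ω).Prime := ⟨hp⟩
  intro x y
  obtain ⟨t, ht⟩ := hfull x y
  have hk0 : ((k : ZMod (Fintype.card Ω))) ≠ 0 := by
    intro hc
    apply hu1
    rw [← hk]
    have h1 : z ^ k = z ^ (0 : ℤ) := by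
      rw [zpow_cast hfull]
      push_cast
      exact hc
    rw [zpow_zero] at h1
    exact h1
  set c : ZMod (Fintype.card Ω) := (t : ZMod (Fintype.card Ω)) * (k : ZMod (Fintype.card Ω))⁻¹
    with hc
  refine ⟨(c.val : ℤ), ?_⟩
  rw [← hk, ← zpow_mul]
  have h2 : z ^ (k * (c.val : ℤ)) = z ^ t := by
    rw [zpow_cast hfull]
    push_cast
    rw [ZMod.natCast_val, ZMod.cast_id, hc, mul_comm (t : ZMod (Fintype.card Ω)) _,
      ← mul_assoc, mul_inv_cancel₀ hk0, one_mul]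
  rw [h2, ht]

lemma Frob.stab_cyclic (hG : Frob G) [Nonempty Ω] (hzG : z ∈ G)
    (hfull : ∀ x y : Ω, ∃ k : ℤ, (z ^ k) x = y) (hp : (Fintype.card Ω).Prime) (ω : Ω) :
    IsCyclic ↥(G ⊓ MulAction.stabilizer (Perm Ω) ω) := by
  haveI : Fact (Fintype.card Ω).Prime := ⟨hp⟩
  set Gw := G ⊓ MulAction.stabilizer (Perm Ω) ω with hGw
  have hsel : ∀ g : ↥Gw, ∃ k : ℤ, z ^ k = (g : Perm Ω) * z * (g : Perm Ω)⁻¹ := fun g =>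
    Subgroup.mem_zpowers_iff.mp (hG.conj_mem hzG hfull g.2.1)
  choose e he using hsel
  have hcast : ∀ a b : ℤ, z ^ a = z ^ b → ((a : ZMod (Fintype.card Ω)) = b) := fun a b h =>
    (zpow_cast hfull a b).mp h
  set φ₀ : ↥Gw → ZMod (Fintype.card Ω) := fun g => ((e g : ℤ) : ZMod (Fintype.card Ω)) with hφ₀
  have hone : φ₀ 1 = 1 := by
    have h1 : z ^ (e 1) = z ^ (1 : ℤ) := by
      rw [he 1, zpow_one]
      simp
    have := hcast _ _ h1
    rw [hφ₀]
    simpa using this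
  have hmul : ∀ a b : ↥Gw, φ₀ (a * b) = φ₀ a * φ₀ b := by
    intro a b
    have h1 : z ^ (e (a * b)) = z ^ (e a * e b) := by
      rw [he (a * b)]
      have hab : ((a * b : ↥Gw) : Perm Ω) = (a : Perm Ω) * (b : Perm Ω) := rfl
      rw [hab, mul_inv_rev,
        show (a : Perm Ω) * (b : Perm Ω) * z * ((b : Perm Ω)⁻¹ * (a : Perm Ω)⁻¹)
          = (a : Perm Ω) * ((b : Perm Ω) * z * (b : Perm Ω)⁻¹) * (a : Perm Ω)⁻¹ by group,
        ← he b, ← conj_zpow, ← he a, ← zpow_mul, mul_comm (e a) (e b)]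
    have h2 := hcast _ _ h1
    rw [hφ₀]
    push_cast at h2 ⊢
    rw [h2]
  set φ : ↥Gw →* ZMod (Fintype.card Ω) :=
    { toFun := φ₀, map_one' := hone, map_mul' := hmul } with hφ
  set χ := φ.toHomUnits with hχ
  have hinj : Function.Injective χ := by
    rw [injective_iff_map_eq_one]
    intro a ha
    have h1 : φ₀ a = 1 := by
      have := congrArg (Units.val) ha
      rwa [hχ, MonoidHom.coe_toHomUnits] at this
    have h2 : z ^ (e a) = z ^ (1 : ℤ) := by
      rw [zpow_cast hfull]
      push_cast
      exact h1
    rw [zpow_one] at h2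
    have h3 := he a
    rw [h2] at h3
    have h4 : (a : Perm Ω) * z = z * (a : Perm Ω) := (eq_mul_inv_iff_mul_eq.mp h3).symm
    have h5 : (a : Perm Ω) ω = ω := a.2.2
    exact Subtype.ext (commute_fix_eq_one hfull h4 h5)
  have hiso := MonoidHom.ofInjective hinj
  exact isCyclic_of_surjective hiso.symm hiso.symm.surjective

lemma Frob.exists_full_of_prime (hG : Frob G) [Nonempty Ω] (hp : (Fintype.card Ω).Prime) :
    ∃ z ∈ G, ∀ x y : Ω, ∃ k : ℤ, (z ^ k) x = y := by
  haveI : Fact (Fintype.card Ω).Prime := ⟨hp⟩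
  haveI : Fintype ↥G := Fintype.ofFinite ↥G
  have hcard : Fintype.card ↥G = (GF G).card := by
    rw [← Nat.card_eq_fintype_card, ← SetLike.coe_sort_coe, Nat.card_coe_set_eq,
      ← Set.ncard_coe_finset]
    congr 1
    ext u
    simp only [Finset.coe_filter, Finset.mem_coe, mem_GF, SetLike.mem_coe, GF,
      Finset.mem_filter, Finset.mem_univ, true_and, Set.mem_setOf_eq]
  have hdvd : (Fintype.card Ω) ∣ Fintype.card ↥G := by
    rw [hcard, hG.card_stab (Classical.arbitrary Ω)]
    exact Dvd.intro _ rfl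
  obtain ⟨ζ, hζ⟩ := exists_prime_orderOf_dvd_card (G := ↥G) (Fintype.card Ω) hdvd
  set z := (ζ : Perm Ω) with hz
  have hzG : z ∈ G := ζ.2
  have hord : orderOf z = Fintype.card Ω := by rw [hz, orderOf_coe, hζ]
  have hz1 : z ≠ 1 := by
    intro hcon
    rw [hcon, orderOf_one] at hord
    have := hp.two_le
    omega
  obtain ⟨x₀, hx₀⟩ : ∃ x, z x ≠ x := by
    by_contra hcon
    push_neg at hcon
    exact hz1 (perm_eq_one hcon)
  have hfix : ∀ i : ℕ, 0 < i → i < Fintype.card Ω → (z ^ i) x₀ ≠ x₀ := by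
    intro i hi0 hi hfixx
    have hgcd : Nat.gcd (Fintype.card Ω) i = 1 := by
      have : ¬ (Fintype.card Ω) ∣ i := fun hd => by
        have := Nat.le_of_dvd hi0 hd
        omega
      exact (Nat.Prime.coprime_iff_not_dvd hp).mpr this
    have hordi : orderOf (z ^ i) = Fintype.card Ω := by
      rw [orderOf_pow, hord, hgcd, Nat.div_one]
    have hzin : z ∈ zpowers (z ^ i) := by
      have hle : zpowers (z ^ i) ≤ zpowers z :=
        zpowers_le.mpr (Subgroup.mem_zpowers_iff.mpr ⟨(i : ℤ), zpow_natCast z i⟩)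
      have hc1 : Nat.card ↥(zpowers z) ≤ Nat.card ↥(zpowers (z ^ i)) := by
        rw [Nat.card_zpowers, Nat.card_zpowers, hordi, hord]
      rw [eq_of_le_of_card_ge hle hc1]
      exact Subgroup.mem_zpowers z
    obtain ⟨k, hk⟩ := Subgroup.mem_zpowers_iff.mp hzin
    apply hx₀
    rw [← hk]
    exact Equiv.Perm.zpow_apply_eq_self_of_apply_eq_self hfixx k
  have hsurj : ∀ y : Ω, ∃ i : ℕ, (z ^ i) x₀ = y := by
    have hinj : Set.InjOn (fun i => (z ^ i) x₀) (Finset.range (Fintype.card Ω)) := by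
      have key : ∀ i j : ℕ, i < j → j < Fintype.card Ω → (z ^ i) x₀ = (z ^ j) x₀ → False := by
        intro i j hlt hj hij
        have h1 : (z ^ (j - i)) ((z ^ i) x₀) = (z ^ i) x₀ := by
          rw [← Equiv.Perm.mul_apply, ← pow_add, Nat.sub_add_cancel hlt.le]
          exact hij.symm
        have h2 : (z ^ i) ((z ^ (j - i)) x₀) = (z ^ i) x₀ := by
          rw [← Equiv.Perm.mul_apply, ← pow_add]
          rw [show i + (j - i) = j - i + i by omega, pow_add, Equiv.Perm.mul_apply]
          exact h1
        have h3 : (z ^ (j - i)) x₀ = x₀ := (z ^ i).injective h2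
        exact hfix (j - i) (by omega) (by omega) h3
      intro i hi j hj hij
      simp only [Finset.coe_range, Set.mem_Iio] at hi hj
      have hij' : (z ^ i) x₀ = (z ^ j) x₀ := hij
      rcases Nat.lt_trichotomy i j with h | h | h
      · exact absurd (key i j h hj hij') (fun a => a)
      · exact h
      · exact absurd (key j i h hi hij'.symm) (fun a => a)
    have huniv := Finset.eq_univ_of_card
      ((Finset.range (Fintype.card Ω)).image fun i => (z ^ i) x₀)
      (by rw [Finset.card_image_of_injOn hinj, Finset.card_range])
    intro y
    have hy : y ∈ (Finset.range (Fintype.card Ω)).image fun i => (z ^ i) x₀ :=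
      huniv ▸ Finset.mem_univ y
    obtain ⟨i, _, hi⟩ := Finset.mem_image.mp hy
    exact ⟨i, hi⟩
  refine ⟨z, hzG, ?_⟩
  intro x y
  obtain ⟨i, hi⟩ := hsurj x
  obtain ⟨j, hj⟩ := hsurj y
  refine ⟨(j : ℤ) - i, ?_⟩
  rw [← hi, ← hj, ← Equiv.Perm.mul_apply, ← zpow_natCast z i, ← zpow_add, sub_add_cancel,
    zpow_natCast]

end FullCycle

section Directions

variable {G : Subgroup (Perm Ω)}

/-- The orbit of `x` under a permutation `u` acting freely, as a finset of cardinality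
`orderOf u`, realizing the `piPart` class of `x`. -/
lemma class_finset {u : Perm Ω} (hfree : ∀ (i : ℤ) (x : Ω), (u ^ i) x = x → u ^ i = 1)
    (x : Ω) :
    (∀ v, ((piPart u) v x ↔ v ∈ (Finset.range (orderOf u)).image (fun i => (u ^ i) x))) ∧
    ((Finset.range (orderOf u)).image (fun i => (u ^ i) x)).card = orderOf u := by
  have hpos : 0 < orderOf u := orderOf_pos u
  constructor
  · intro v
    simp only [Finset.mem_image, Finset.mem_range]
    constructor
    · intro hrel
      obtain ⟨k, hk⟩ := (piPart_iff u v x).mp hrel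
      refine ⟨(k % (orderOf u : ℤ)).toNat, ?_, ?_⟩
      · have h4 := Int.emod_lt_of_pos k (b := (orderOf u : ℤ)) (by exact_mod_cast hpos)
        omega
      · rw [← zpow_natCast,
          Int.toNat_of_nonneg (Int.emod_nonneg _ (by exact_mod_cast hpos.ne')),
          zpow_mod_orderOf]
        exact hk
    · rintro ⟨i, -, rfl⟩
      exact (piPart_iff u _ x).mpr ⟨(i : ℤ), by rw [zpow_natCast]⟩
  · rw [Finset.card_image_of_injOn, Finset.card_range]
    have key : ∀ i j : ℕ, i < j → j < orderOf u → (u ^ i) x = (u ^ j) x → False := by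
      intro i j hlt hj hij
      have h1 : (u ^ (j - i)) ((u ^ i) x) = (u ^ i) x := by
        rw [← Equiv.Perm.mul_apply, ← pow_add, Nat.sub_add_cancel hlt.le]
        exact hij.symm
      have h2 : u ^ (((j - i : ℕ)) : ℤ) = 1 := by
        refine hfree _ ((u ^ i) x) ?_
        rw [zpow_natCast]
        exact h1
      rw [zpow_natCast] at h2
      have h3 := Nat.le_of_dvd (by omega) (orderOf_dvd_of_pow_eq_one h2)
      omega
    intro i hi j hj hij
    simp only [Finset.coe_range, Set.mem_Iio] at hi hj
    have hij' : (u ^ i) x = (u ^ j) x := hij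
    rcases Nat.lt_trichotomy i j with hc | hc | hc
    · exact absurd (key i j hc hj hij') (fun t => t)
    · exact hc
    · exact absurd (key j i hc hi hij'.symm) (fun t => t)

/-- If all stabilizers have exactly two elements, nontrivial stabilizer elements are unique. -/
lemma Frob.uniq_of_stab2 (hG : Frob G)
    (h2 : ∀ ω : Ω, ((GF G).filter (fun g => g ω = ω)).card = 2) :
    ∀ (ω : Ω) (g g' : Perm Ω), g ∈ G → g' ∈ G → g ω = ω → g' ω = ω → g ≠ 1 → g' ≠ 1 →
      g = g' := by
  intro ω g g' hg hg' hgω hg'ω hgne hg'ne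
  by_contra hne
  have hsub : ({1, g, g'} : Finset (Perm Ω)) ⊆ (GF G).filter (fun x => x ω = ω) := by
    intro x hx
    simp only [Finset.mem_insert, Finset.mem_singleton] at hx
    rcases hx with rfl | rfl | rfl <;> simp only [Finset.mem_filter, mem_GF]
    · exact ⟨G.one_mem, rfl⟩
    · exact ⟨hg, hgω⟩
    · exact ⟨hg', hg'ω⟩
  have hcard3 : ({1, g, g'} : Finset (Perm Ω)).card = 3 := by
    rw [Finset.card_insert_of_notMem, Finset.card_insert_of_notMem, Finset.card_singleton]
    · simp only [Finset.mem_singleton]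
      exact hne
    · simp only [Finset.mem_insert, Finset.mem_singleton]
      push_neg
      exact ⟨Ne.symm hgne, Ne.symm hg'ne⟩
  have hle := Finset.card_le_card hsub
  rw [hcard3, h2 ω] at hle
  omega

/-- If all stabilizers have exactly two elements, nontrivial stabilizer elements are
involutions. -/
lemma Frob.invol_of_stab2 (hG : Frob G)
    (h2 : ∀ ω : Ω, ((GF G).filter (fun g => g ω = ω)).card = 2) :
    ∀ (ω : Ω) (g : Perm Ω), g ∈ G → g ω = ω → g ≠ 1 → g * g = 1 := by
  intro ω g hg hgω hg1
  by_contra hne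
  have hfix : (g * g) ω = ω := by rw [Equiv.Perm.mul_apply, hgω, hgω]
  have heq := hG.uniq_of_stab2 h2 ω (g * g) g (G.mul_mem hg hg) hg hfix hgω hne hg1
  exact hg1 (mul_eq_right.mp heq)

/-- The relation of `piPart` for an involution. -/
lemma piPart_invol {g : Perm Ω} (hg2 : g * g = 1) (v w : Ω) :
    (piPart g) v w ↔ (v = w ∨ g w = v) := by
  rw [piPart_iff]
  constructor
  · rintro ⟨k, hk⟩
    have hsq : g ^ (2 : ℤ) = 1 := by
      rw [show (2 : ℤ) = 1 + 1 by norm_num, zpow_add, zpow_one, hg2]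
    rcases Int.even_or_odd k with ⟨t, ht⟩ | ⟨t, ht⟩
    · left
      rw [← hk, ht, show t + t = 2 * t by ring, zpow_mul, hsq, one_zpow]
      rfl
    · right
      rw [← hk, ht, show 2 * t + 1 = 1 + 2 * t by ring, zpow_add, zpow_one, zpow_mul, hsq,
        one_zpow, mul_one]
  · rintro (rfl | rfl)
    · exact ⟨0, by rw [zpow_zero]; rfl⟩
    · exact ⟨1, by rw [zpow_one]⟩

lemma Frob.exists_piPart_top (hG : Frob G) [Nonempty Ω] (hJ : JoinCoherent G) :
    ∃ z ∈ G, piPart z = ⊤ := by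
  haveI : Finite (Setoid Ω) := by
    refine Finite.of_injective (fun s : Setoid Ω => s.r) ?_
    intro s t h
    exact Setoid.ext fun a b => iff_of_eq (congrFun (congrFun h a) b)
  have hfin : (piSet G).Finite := Set.toFinite _
  have htne : hfin.toFinset.Nonempty := by
    rw [Set.Finite.toFinset_nonempty]
    exact ⟨piPart 1, 1, G.one_mem, rfl⟩
  have hsup := Finset.sup'_mem (piSet G) hJ hfin.toFinset htne id
    (fun P hP => (hfin.mem_toFinset).mp hP)
  obtain ⟨z, hzG, hz⟩ := hsup
  refine ⟨z, hzG, ?_⟩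
  have htop : hfin.toFinset.sup' htne id = ⊤ := by
    apply le_antisymm le_top
    rw [Setoid.le_def]
    intro x y _
    obtain ⟨g, hg, hgxy⟩ := hG.htrans y x
    have h1 : (piPart g) x y := (piPart_iff g x y).mpr ⟨1, by rw [zpow_one]; exact hgxy⟩
    have h2 : piPart g ≤ hfin.toFinset.sup' htne id :=
      Finset.le_sup' id ((hfin.mem_toFinset).mpr ⟨g, hg, rfl⟩)
    exact h2 h1
  rw [hz, htop]

lemma Frob.joinFwd (hG : Frob G) [Nonempty Ω] (hJ : JoinCoherent G) :
    (Fintype.card Ω).Prime := by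
  obtain ⟨z, hzG, hztop⟩ := hG.exists_piPart_top hJ
  have hfull : ∀ x y : Ω, ∃ k : ℤ, (z ^ k) x = y := by
    intro x y
    have h0 : (piPart z) y x := by rw [hztop]; trivial
    exact (piPart_iff z y x).mp h0
  set n := Fintype.card Ω with hn
  have hn2 : 2 ≤ n := hG.one_lt_card
  by_contra hnp
  set q := n.minFac with hq
  have hqprime : q.Prime := Nat.minFac_prime (by omega)
  have hqdvd : q ∣ n := Nat.minFac_dvd n
  have hqlt : q < n := by
    rcases Nat.lt_or_ge q n with hlt | hge
    · exact hlt
    · have h1 := Nat.le_of_dvd (by omega) hqdvd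
      have h2 : q = n := le_antisymm h1 hge
      exact absurd (h2 ▸ hqprime) hnp
  have hq2 : 2 ≤ q := hqprime.two_le
  set g := z ^ (n / q) with hg
  have hordz : orderOf z = n := orderOf_full hfull
  have hordg : orderOf g = q := by
    rw [hg, orderOf_pow, hordz, Nat.gcd_eq_right (Nat.div_dvd_of_dvd hqdvd),
      Nat.div_div_self hqdvd (by omega)]
  have hgG : g ∈ G := G.pow_mem hzG _
  obtain ⟨ω⟩ := (inferInstance : Nonempty Ω)
  obtain ⟨h, hhG, hhω, hh1⟩ := hG.hstab ω
  obtain ⟨k, hkG, hk⟩ := hJ _ ⟨g, hgG, rfl⟩ _ ⟨h, hhG, rfl⟩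
  -- conjugation of g by h is a power of g
  obtain ⟨c, hc⟩ := Subgroup.mem_zpowers_iff.mp (hG.conj_mem hzG hfull hhG)
  have hconjg : h * g * h⁻¹ = g ^ c := by
    rw [hg, ← conj_pow, ← hc, ← zpow_natCast (z ^ c) (n / q), ← zpow_mul, mul_comm,
      zpow_mul, zpow_natCast]
  -- freeness of powers of g
  have hgfree : ∀ (i : ℤ) (x : Ω), (g ^ i) x = x → g ^ i = 1 := by
    intro i x hx
    rw [hg, ← zpow_natCast z (n / q), ← zpow_mul] at hx ⊢
    exact zpow_fix_eq_one hfull hx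
  -- the orbit finset of ω under g
  set B := (Finset.range q).image (fun i => (g ^ i) ω) with hB
  have hcardB : B.card = q := by
    have h0 := (class_finset hgfree ω).2
    rw [hordg] at h0
    exact h0
  have hmemB : ∀ v, v ∈ B ↔ (piPart g) v ω := by
    intro v
    have h0 := (class_finset hgfree ω).1 v
    rw [hordg] at h0
    exact h0.symm
  -- B is invariant under the group generated by g and h
  have hMeq : zpowers g ⊔ zpowers h
      = Subgroup.closure (({g} : Set (Perm Ω)) ∪ ({h} : Set (Perm Ω))) := by
    rw [Subgroup.closure_union, ← Subgroup.zpowers_eq_closure, ← Subgroup.zpowers_eq_closure]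
  have hgB : ∀ (i : ℤ), (g ^ i) ω ∈ B := by
    intro i
    rw [hmemB]
    exact (piPart_iff g _ ω).mpr ⟨i, rfl⟩
  have hinv : ∀ w ∈ Subgroup.closure (({g} : Set (Perm Ω)) ∪ ({h} : Set (Perm Ω))),
      ∀ v ∈ B, w v ∈ B := by
    intro w hw
    induction hw using Subgroup.closure_induction with
    | mem w hmem =>
      intro v hv
      obtain ⟨i, -, rfl⟩ := Finset.mem_image.mp (hB ▸ hv)
      rcases hmem with h1 | h1
      · rw [Set.mem_singleton_iff] at h1
        rw [h1]
        have e7 : g ((g ^ i) ω) = (g ^ ((1 : ℤ) + i)) ω := by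
          rw [zpow_add, zpow_one, Equiv.Perm.mul_apply, zpow_natCast]
        rw [e7]
        exact hgB _
      · rw [Set.mem_singleton_iff] at h1
        rw [h1]
        have e5 : h * g ^ (i : ℤ) * h⁻¹ = g ^ (c * i) := by
          rw [← conj_zpow, hconjg, ← zpow_mul]
        have e6 : h * g ^ (i : ℤ) = g ^ (c * i) * h := by
          rw [← e5]
          group
        have e7 : h ((g ^ i) ω) = (g ^ (c * i)) ω := by
          rw [← zpow_natCast g i, ← Equiv.Perm.mul_apply, e6, Equiv.Perm.mul_apply, hhω]
        rw [e7]
        exact hgB _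
    | one =>
      intro v hv
      exact hv
    | mul a b _ _ pa pb =>
      intro v hv
      exact pa _ (pb v hv)
    | inv a _ pa =>
      intro v hv
      have himg : B.image a = B := by
        apply Finset.eq_of_subset_of_card_le
        · intro w2 hw2
          obtain ⟨v', hv', rfl⟩ := Finset.mem_image.mp hw2
          exact pa v' hv'
        · rw [Finset.card_image_of_injective _ a.injective]
      rw [← himg] at hv
      obtain ⟨v', hv', hva⟩ := Finset.mem_image.mp hv
      have h9 : a⁻¹ v = v' := by rw [← hva, Equiv.Perm.inv_apply_self]
      rw [h9]
      exact hv'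
  -- B is exactly the class of ω under the join
  have hclassB : ∀ v, (piPart g ⊔ piPart h) v ω ↔ v ∈ B := by
    intro v
    constructor
    · intro hrel
      have hrel' : (MulAction.orbitRel ↥(zpowers g ⊔ zpowers h) Ω) v ω := by
        rw [← orbitRel_sup]
        exact hrel
      obtain ⟨u, hu, huv⟩ := (orbitRel_iff _ v ω).mp hrel'
      rw [← huv]
      refine hinv u (hMeq ▸ hu) ω ?_
      have h0 := hgB 0
      rwa [zpow_zero] at h0
    · intro hv
      exact Setoid.le_def.mp le_sup_left ((hmemB v).mp hv)
  -- k is fixed-point-free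
  have hkfpf : ∀ v, k v ≠ v := by
    intro v hkv
    have hrelg : (piPart k) (g v) v := by
      rw [hk]
      exact Setoid.le_def.mp le_sup_left ((piPart_iff g _ v).mpr ⟨1, by rw [zpow_one]⟩)
    obtain ⟨j, hj⟩ := (piPart_iff k _ v).mp hrelg
    have h8 : (k ^ j) v = v := Equiv.Perm.zpow_apply_eq_self_of_apply_eq_self hkv j
    rw [h8] at hj
    have hg1 : g ^ (1 : ℤ) = 1 := hgfree 1 v (by rw [zpow_one, ← hj])
    rw [zpow_one] at hg1
    have h7 : orderOf g = 1 := by rw [hg1, orderOf_one]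
    omega
  have hkz : k ∈ zpowers z := hG.fpf_mem hzG hfull hkG hkfpf
  have hkfree : ∀ (i : ℤ) (x : Ω), (k ^ i) x = x → k ^ i = 1 := by
    obtain ⟨a, ha⟩ := Subgroup.mem_zpowers_iff.mp hkz
    intro i x hx
    rw [← ha, ← zpow_mul] at hx ⊢
    exact zpow_fix_eq_one hfull hx
  -- the class of any point under piPart k has size orderOf k; hence orderOf k = q
  have hordk : orderOf k = q := by
    have h1 : ∀ v, v ∈ (Finset.range (orderOf k)).image (fun i => (k ^ i) ω) ↔ v ∈ B := by
      intro v
      rw [← (class_finset hkfree ω).1 v, hk, hclassB]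
    have h2 := Finset.ext h1
    have h3 := (class_finset hkfree ω).2
    rw [h2, hcardB] at h3
    exact h3.symm
  -- pick ω' outside B
  have hex : ∃ ω' : Ω, ω' ∉ B := by
    by_contra hcon
    push_neg at hcon
    have h5 : (Finset.univ : Finset Ω) ⊆ B := fun v _ => hcon v
    have h6 := Finset.card_le_card h5
    rw [Finset.card_univ, hcardB] at h6
    omega
  obtain ⟨ω', hω'⟩ := hex
  set C := (Finset.range (orderOf k)).image (fun i => (k ^ i) ω') with hC
  have hmemC : ∀ v, v ∈ C ↔ (piPart k) v ω' := fun v => ((class_finset hkfree ω').1 v).symm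
  have hcardC : C.card = q := by
    have h0 := (class_finset hkfree ω').2
    rw [hordk] at h0
    rw [hC, hordk]
    exact h0
  -- m := orderOf h
  set m := orderOf h with hm
  have hm2 : 2 ≤ m := by
    have h1 : m ≠ 1 := fun hcon => hh1 (orderOf_eq_one_iff.mp hcon)
    have h2 : 0 < m := orderOf_pos h
    omega
  -- h preserves classes of piPart k
  have hhrel : ∀ v, (piPart k) (h v) v := by
    intro v
    rw [hk]
    exact Setoid.le_def.mp le_sup_right ((piPart_iff h _ v).mpr ⟨1, by rw [zpow_one]⟩)
  -- freeness of h away from ω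
  have hhfree : ∀ v, v ≠ ω → ∀ i : ℕ, 0 < i → i < m → (h ^ i) v ≠ v := by
    intro v hvω i hi0 him hfixv
    have hne1 : h ^ i ≠ 1 := by
      intro hcon
      have h3 := orderOf_dvd_of_pow_eq_one hcon
      have h4 := Nat.le_of_dvd hi0 h3
      omega
    have hfixω : (h ^ i) ω = ω := by
      have h5 := Equiv.Perm.zpow_apply_eq_self_of_apply_eq_self hhω (i : ℤ)
      rwa [zpow_natCast] at h5
    exact hne1 (hG.eq_one (G.pow_mem hhG i) hfixω hfixv (Ne.symm hvω))
  -- ω ∉ C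
  have hωC : ω ∉ C := by
    intro hcon
    apply hω'
    have h1 : (piPart k) ω ω' := (hmemC ω).mp hcon
    have h2 : (piPart k) ω' ω := (piPart k).iseqv.symm h1
    rw [hk] at h2
    exact (hclassB ω').mp h2
  -- h maps C into C
  have hhC : ∀ v ∈ C, h v ∈ C := by
    intro v hv
    rw [hmemC] at hv ⊢
    exact (piPart k).iseqv.trans (hhrel v) hv
  -- h maps B \ {ω} into itself
  have hhB : ∀ v ∈ B.erase ω, h v ∈ B.erase ω := by
    intro v hv
    rw [Finset.mem_erase] at hv ⊢
    obtain ⟨hvne, hvB⟩ := hv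
    constructor
    · intro hcon
      exact hvne (h.injective (by rw [hcon, hhω]))
    · have h1 : (piPart k) (h v) v := hhrel v
      have h2 : (piPart k) v ω := by
        rw [hk]
        exact Setoid.le_def.mp le_sup_left ((hmemB v).mp hvB)
      have h3 : (piPart k) (h v) ω := (piPart k).iseqv.trans h1 h2
      rw [hk] at h3
      exact (hclassB (h v)).mp h3
  -- apply the orbit-divisibility lemma twice
  have hdvd1 : m ∣ C.card := by
    refine card_dvd_of_orbits h m (by omega) C hhC ?_ ?_
    · intro v _
      rw [hm, pow_orderOf_eq_one]
      exact Equiv.Perm.one_apply v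
    · intro v hv i hi0 him
      refine hhfree v ?_ i hi0 him
      intro hcon
      rw [hcon] at hv
      exact hωC hv
  have hdvd2 : m ∣ (B.erase ω).card := by
    refine card_dvd_of_orbits h m (by omega) (B.erase ω) hhB ?_ ?_
    · intro v _
      rw [hm, pow_orderOf_eq_one]
      exact Equiv.Perm.one_apply v
    · intro v hv i hi0 him
      exact hhfree v (Finset.mem_erase.mp hv).1 i hi0 him
  have hωB : ω ∈ B := (hmemB ω).mpr ((piPart_iff g ω ω).mpr ⟨0, by rw [zpow_zero]; rfl⟩)
  rw [Finset.card_erase_of_mem hωB, hcardB] at hdvd2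
  rw [hcardC] at hdvd1
  have hdvd3 : m ∣ 1 := by
    have h1 := Nat.dvd_sub hdvd1 hdvd2
    rwa [Nat.sub_sub_self (by omega)] at h1
  have hm1 : m ≤ 1 := Nat.le_of_dvd one_pos hdvd3
  omega

lemma Frob.joinBwd (hG : Frob G) [Nonempty Ω] (hp : (Fintype.card Ω).Prime) :
    JoinCoherent G := by
  obtain ⟨z, hzG, hfull⟩ := hG.exists_full_of_prime hp
  have hztop : piPart z = ⊤ := piPart_top hfull
  intro P hP Q hQ
  obtain ⟨a, haG, rfl⟩ := hP
  obtain ⟨b, hbG, rfl⟩ := hQ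
  have hjoin : piPart a ⊔ piPart b = MulAction.orbitRel ↥(zpowers a ⊔ zpowers b) Ω :=
    orbitRel_sup _ _
  have hMG : zpowers a ⊔ zpowers b ≤ G := sup_le (zpowers_le.mpr haG) (zpowers_le.mpr hbG)
  have hcyc : ∀ w : Perm Ω, zpowers a ⊔ zpowers b = zpowers w →
      piPart a ⊔ piPart b ∈ piSet G := by
    intro w hw
    refine ⟨w, hMG (hw ▸ Subgroup.mem_zpowers w), ?_⟩
    rw [hjoin, hw]
    rfl
  have htopcase : ∀ u, u ∈ zpowers a ⊔ zpowers b → u ≠ 1 → (∀ v, u v ≠ v) →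
      piPart a ⊔ piPart b ∈ piSet G := by
    intro u huM hu1 hufpf
    have huz : u ∈ zpowers z := hG.fpf_mem hzG hfull (hMG huM) hufpf
    have hufull := full_of_mem_zpowers hfull hp huz hu1
    refine ⟨z, hzG, ?_⟩
    rw [hztop, hjoin]
    refine le_antisymm ?_ le_top
    rw [Setoid.le_def]
    intro x y _
    rw [orbitRel_iff]
    obtain ⟨j, hj⟩ := hufull y x
    exact ⟨u ^ j, (zpowers a ⊔ zpowers b).zpow_mem huM j, hj⟩
  by_cases ha1 : a = 1
  · subst ha1
    rw [piPart_one, bot_sup_eq]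
    exact ⟨b, hbG, rfl⟩
  by_cases hb1 : b = 1
  · subst hb1
    rw [piPart_one, sup_bot_eq]
    exact ⟨a, haG, rfl⟩
  by_cases hafp : ∀ v, a v ≠ v
  · exact htopcase a (Subgroup.mem_sup_left (Subgroup.mem_zpowers a)) ha1 hafp
  by_cases hbfp : ∀ v, b v ≠ v
  · exact htopcase b (Subgroup.mem_sup_right (Subgroup.mem_zpowers b)) hb1 hbfp
  push_neg at hafp hbfp
  obtain ⟨ωa, hωa⟩ := hafp
  obtain ⟨ωb, hωb⟩ := hbfp
  by_cases hωab : ωa = ωb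
  · -- both fix ωa : the generated subgroup is cyclic
    subst hωab
    haveI hcyclic : IsCyclic ↥(G ⊓ MulAction.stabilizer (Perm Ω) ωa) :=
      hG.stab_cyclic hzG hfull hp ωa
    have hle : zpowers a ⊔ zpowers b ≤ G ⊓ MulAction.stabilizer (Perm Ω) ωa := by
      refine sup_le (zpowers_le.mpr ?_) (zpowers_le.mpr ?_)
      · exact Subgroup.mem_inf.mpr ⟨haG, MulAction.mem_stabilizer_iff.mpr hωa⟩
      · exact Subgroup.mem_inf.mpr ⟨hbG, MulAction.mem_stabilizer_iff.mpr hωb⟩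
    have hequiv := Subgroup.subgroupOfEquivOfLe hle
    haveI h3 : IsCyclic ↥(zpowers a ⊔ zpowers b) :=
      isCyclic_of_surjective hequiv hequiv.surjective
    obtain ⟨w0, hw0⟩ := IsCyclic.exists_generator (α := ↥(zpowers a ⊔ zpowers b))
    refine hcyc (w0 : Perm Ω) ?_
    apply le_antisymm
    · intro v hv
      obtain ⟨j, hj⟩ := Subgroup.mem_zpowers_iff.mp (hw0 ⟨v, hv⟩)
      refine Subgroup.mem_zpowers_iff.mpr ⟨j, ?_⟩
      simpa using congrArg Subtype.val hj
    · exact zpowers_le.mpr w0.2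
  · -- distinct fixed points : the commutator is a nontrivial fpf element
    set u := a * b * a⁻¹ * b⁻¹ with hu
    have huM : u ∈ zpowers a ⊔ zpowers b := by
      rw [hu]
      exact Subgroup.mul_mem _
        (Subgroup.mul_mem _
          (Subgroup.mul_mem _ (Subgroup.mem_sup_left (Subgroup.mem_zpowers a))
            (Subgroup.mem_sup_right (Subgroup.mem_zpowers b)))
          (Subgroup.inv_mem _ (Subgroup.mem_sup_left (Subgroup.mem_zpowers a))))
        (Subgroup.inv_mem _ (Subgroup.mem_sup_right (Subgroup.mem_zpowers b)))
    have hu1 : u ≠ 1 := by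
      intro hcon
      rw [hu] at hcon
      have h1 : a * b * a⁻¹ = b := mul_inv_eq_one.mp hcon
      have hcomm : a * b = b * a := mul_inv_eq_iff_eq_mul.mp h1
      have h2 : a (b ωa) = b ωa := by
        calc a (b ωa) = (a * b) ωa := rfl
        _ = (b * a) ωa := by rw [hcomm]
        _ = b ωa := by rw [Equiv.Perm.mul_apply, hωa]
      have h3 : b ωa = ωa := by
        by_contra hne
        exact ha1 (hG.eq_one haG h2 hωa hne)
      apply hωab
      by_contra hne
      exact hb1 (hG.eq_one hbG h3 hωb hne)
    have hufpf : ∀ v, u v ≠ v := by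
      intro v hv
      obtain ⟨pa, hpa⟩ := Subgroup.mem_zpowers_iff.mp (hG.conj_mem hzG hfull haG)
      obtain ⟨pa', hpa'⟩ := Subgroup.mem_zpowers_iff.mp (hG.conj_mem hzG hfull (G.inv_mem haG))
      obtain ⟨qb, hqb⟩ := Subgroup.mem_zpowers_iff.mp (hG.conj_mem hzG hfull hbG)
      obtain ⟨qb', hqb'⟩ := Subgroup.mem_zpowers_iff.mp (hG.conj_mem hzG hfull (G.inv_mem hbG))
      have hkey : ∀ g : Perm Ω, ∀ c c' : ℤ, z ^ c = g * z * g⁻¹ → z ^ c' = g⁻¹ * z * g⁻¹⁻¹ →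
          z ^ (c' * c) = z := by
        intro g c c' hc hc'
        rw [zpow_mul, hc', conj_zpow, hc]
        group
      have c1 : z ^ (pa' * pa) = z := hkey a pa pa' hpa hpa'
      have c2 : z ^ (qb' * qb) = z := hkey b qb qb' hqb hqb'
      set nn := Fintype.card Ω with hnn
      have d1 : ((pa' * pa : ℤ) : ZMod nn) = ((1 : ℤ) : ZMod nn) :=
        (zpow_cast hfull _ _).mp (by rw [c1, zpow_one])
      have d2 : ((qb' * qb : ℤ) : ZMod nn) = ((1 : ℤ) : ZMod nn) :=
        (zpow_cast hfull _ _).mp (by rw [c2, zpow_one])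
      have e2 : u * z * u⁻¹ = z ^ (pa * (qb * (pa' * qb'))) := by
        rw [hu]
        rw [show a * b * a⁻¹ * b⁻¹ * z * (a * b * a⁻¹ * b⁻¹)⁻¹
            = a * (b * (a⁻¹ * (b⁻¹ * z * b⁻¹⁻¹) * a⁻¹⁻¹) * b⁻¹) * a⁻¹ by group]
        rw [← hqb']
        rw [show a⁻¹ * z ^ qb' * a⁻¹⁻¹ = (a⁻¹ * z * a⁻¹⁻¹) ^ qb' from (conj_zpow).symm]
        rw [← hpa', ← zpow_mul]
        rw [show b * z ^ (pa' * qb') * b⁻¹ = (b * z * b⁻¹) ^ (pa' * qb') from (conj_zpow).symm]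
        rw [← hqb, ← zpow_mul]
        rw [show a * z ^ (qb * (pa' * qb')) * a⁻¹ = (a * z * a⁻¹) ^ (qb * (pa' * qb'))
          from (conj_zpow).symm]
        rw [← hpa, ← zpow_mul]
      have e3 : ((pa * (qb * (pa' * qb')) : ℤ) : ZMod nn) = ((1 : ℤ) : ZMod nn) := by
        push_cast at d1 d2 ⊢
        calc (pa : ZMod nn) * ((qb : ZMod nn) * ((pa' : ZMod nn) * (qb' : ZMod nn)))
            = ((pa' : ZMod nn) * pa) * ((qb' : ZMod nn) * qb) := by ring
        _ = 1 := by rw [d1, d2, one_mul]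
      have e4 : u * z * u⁻¹ = z := by
        rw [e2]
        have := (zpow_cast hfull (pa * (qb * (pa' * qb'))) 1).mpr e3
        rw [this, zpow_one]
      have hcommu : u * z = z * u := mul_inv_eq_iff_eq_mul.mp e4
      exact hu1 (commute_fix_eq_one hfull hcommu hv)
    exact htopcase u huM hu1 hufpf

lemma Frob.meet_stab2 (hG : Frob G) [Nonempty Ω] (hM : MeetCoherent G) (ω : Ω) :
    ((GF G).filter (fun g => g ω = ω)).card = 2 := by
  have hn2 := hG.one_lt_card
  obtain ⟨h, hhG, hhω, hh1⟩ := hG.hstab ω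
  have hsingle : ∀ (g : Perm Ω) (x : Ω), g x = x → ∀ v, (piPart g) v x → v = x := by
    intro g x hgx v hrel
    obtain ⟨k, hk⟩ := (piPart_iff g v x).mp hrel
    rw [Equiv.Perm.zpow_apply_eq_self_of_apply_eq_self hgx k] at hk
    exact hk.symm
  have hmeet : ∀ t ∈ G, t ≠ 1 → ∀ x, t x = x → x ≠ ω → piPart h ⊓ piPart t = piPart 1 := by
    intro t htG ht1 x htx hxω
    obtain ⟨k, hkG, hk⟩ := hM _ ⟨h, hhG, rfl⟩ _ ⟨t, htG, rfl⟩
    have hkω : k ω = ω := by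
      have hrel : (piPart k) (k ω) ω := (piPart_iff k _ ω).mpr ⟨1, by rw [zpow_one]⟩
      rw [hk] at hrel
      exact hsingle h ω hhω _ hrel.1
    have hkx : k x = x := by
      have hrel : (piPart k) (k x) x := (piPart_iff k _ x).mpr ⟨1, by rw [zpow_one]⟩
      rw [hk] at hrel
      exact hsingle t x htx _ hrel.2
    have hk1 : k = 1 := hG.eq_one hkG hkω hkx (Ne.symm hxω)
    rw [← hk, hk1]
  have hclaim : ∀ t ∈ G, t ≠ 1 → ∀ x, t x = x → x ≠ ω → ∀ u, t u = h u → t u = u := by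
    intro t htG ht1 x htx hxω u htu
    have h0 := hmeet t htG ht1 x htx hxω
    have hrel : (piPart h ⊓ piPart t) (t u) u := by
      constructor
      · exact (piPart_iff h _ u).mpr ⟨1, by rw [zpow_one, ← htu]⟩
      · exact (piPart_iff t _ u).mpr ⟨1, by rw [zpow_one]⟩
    rw [h0, piPart_one] at hrel
    exact hrel
  set σ := ((GF G).filter (fun g => g ω = ω)).card with hσ
  have hσ2 : 2 ≤ σ := by
    have hsub : ({1, h} : Finset (Perm Ω)) ⊆ (GF G).filter (fun g => g ω = ω) := by
      intro x hx
      simp only [Finset.mem_insert, Finset.mem_singleton] at hx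
      rcases hx with rfl | rfl <;> simp only [Finset.mem_filter, mem_GF]
      · exact ⟨G.one_mem, rfl⟩
      · exact ⟨hhG, hhω⟩
    have hc := Finset.card_le_card hsub
    rwa [Finset.card_insert_of_notMem (by simp [Ne.symm hh1]), Finset.card_singleton] at hc
  set D : Ω → Finset (Perm Ω) :=
    fun u => (GF G).filter (fun g => g u = h u ∧ ∀ v, g v ≠ v) with hD
  have hDcard : ∀ u, u ≠ ω → σ - 1 ≤ (D u).card := by
    intro u huω
    set C := (GF G).filter (fun g => g u = h u) with hC
    have hCcard : C.card = σ := by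
      rw [hC, hσ, hG.card_coset u (h u)]
      exact hG.stab_card_eq u ω
    have hsplit := Finset.card_filter_add_card_filter_not
      (s := C) (p := fun g => ∀ v, g v ≠ v)
    have hD_eq : C.filter (fun g => ∀ v, g v ≠ v) = D u := by
      rw [hC, hD, Finset.filter_filter]
    have hfixω : ∀ g₀ : Perm Ω, g₀ ∈ G → g₀ u = h u → ∀ x, g₀ x = x → x = ω := by
      intro g₀ hg₀G hg₀u x hg₀x
      by_contra hxne
      have hg₀1 : g₀ ≠ 1 := by
        intro hcon
        rw [hcon] at hg₀u
        have hhu : h u = u := by rw [← hg₀u]; rfl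
        exact hh1 (hG.eq_one hhG hhu hhω huω)
      have hgu := hclaim g₀ hg₀G hg₀1 x hg₀x hxne u hg₀u
      have hhu : h u = u := by rw [← hg₀u, hgu]
      exact hh1 (hG.eq_one hhG hhu hhω huω)
    have hone : (C.filter (fun g => ¬ ∀ v, g v ≠ v)).card ≤ 1 := by
      rw [Finset.card_le_one]
      intro g hg g' hg'
      simp only [Finset.mem_filter, hC, mem_GF, not_forall, not_not] at hg hg'
      obtain ⟨⟨hgG, hgu⟩, x, hgx⟩ := hg
      obtain ⟨⟨hg'G, hg'u⟩, x', hg'x⟩ := hg'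
      have hgω : g ω = ω := by
        have hxeq := hfixω g hgG hgu x hgx
        rw [← hxeq]
        exact hgx
      have hg'ω : g' ω = ω := by
        have hxeq := hfixω g' hg'G hg'u x' hg'x
        rw [← hxeq]
        exact hg'x
      have h5 : (g'⁻¹ * g) u = u := by
        rw [Equiv.Perm.mul_apply, hgu, ← hg'u, Equiv.Perm.inv_apply_self]
      have h6 : (g'⁻¹ * g) ω = ω := by
        rw [Equiv.Perm.mul_apply, hgω, ← hg'ω, Equiv.Perm.inv_apply_self]
        rw [hg'ω]
      have h7 := hG.eq_one (G.mul_mem (G.inv_mem hg'G) hgG) h6 h5 (Ne.symm huω)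
      exact (inv_mul_eq_one.mp h7).symm
    rw [hD_eq, hCcard] at hsplit
    omega
  have hdisj : ∀ u ∈ Finset.univ.erase ω, ∀ u' ∈ Finset.univ.erase ω, u ≠ u' →
      Disjoint (D u) (D u') := by
    intro u _ u' _ hne
    rw [Finset.disjoint_left]
    intro g hg hg'
    simp only [hD, Finset.mem_filter, mem_GF] at hg hg'
    obtain ⟨hgG, hgu, hgfpf⟩ := hg
    obtain ⟨-, hgu', -⟩ := hg'
    have h5 : (h⁻¹ * g) u = u := by
      rw [Equiv.Perm.mul_apply, hgu, Equiv.Perm.inv_apply_self]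
    have h6 : (h⁻¹ * g) u' = u' := by
      rw [Equiv.Perm.mul_apply, hgu', Equiv.Perm.inv_apply_self]
    have h7 := hG.eq_one (G.mul_mem (G.inv_mem hhG) hgG) h5 h6 hne
    have h8 : h = g := inv_mul_eq_one.mp h7
    exact hgfpf ω (by rw [← h8]; exact hhω)
  have hsubU : (Finset.univ.erase ω).biUnion D ⊆ (GF G).filter (fun g => ∀ v, g v ≠ v) := by
    intro g hg
    simp only [Finset.mem_biUnion, hD, Finset.mem_filter, mem_GF] at hg ⊢
    obtain ⟨u, -, hgG, -, hfpf⟩ := hg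
    exact ⟨hgG, hfpf⟩
  have hUcard := Finset.card_le_card hsubU
  rw [Finset.card_biUnion hdisj, hG.card_fpf] at hUcard
  have hsum : (Finset.univ.erase ω).card * (σ - 1)
      ≤ ∑ u ∈ Finset.univ.erase ω, (D u).card := by
    have hle := Finset.sum_le_sum (s := Finset.univ.erase ω) (f := fun _ => σ - 1)
      (g := fun u => (D u).card) (fun u hu => hDcard u (Finset.ne_of_mem_erase hu))
    rwa [Finset.sum_const, smul_eq_mul] at hle
  rw [Finset.card_erase_of_mem (Finset.mem_univ ω), Finset.card_univ] at hsum
  have hfin : (Fintype.card Ω - 1) * (σ - 1) ≤ Fintype.card Ω - 1 := le_trans hsum hUcard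
  have hσle : σ - 1 ≤ 1 := by
    by_contra hcon
    push_neg at hcon
    have h9 : (Fintype.card Ω - 1) * 2 ≤ (Fintype.card Ω - 1) * (σ - 1) :=
      Nat.mul_le_mul_left _ hcon
    omega
  omega

lemma Frob.meetFwd (hG : Frob G) [Nonempty Ω] (hM : MeetCoherent G) :
    ∃ p : ℕ, p.Prime ∧ Fintype.card Ω = p ∧ Nonempty (↥G ≃* DihedralGroup p) := by
  have hn2 : 2 ≤ Fintype.card Ω := hG.one_lt_card
  have hstab2 : ∀ ω, ((GF G).filter (fun g => g ω = ω)).card = 2 := hG.meet_stab2 hM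
  have huniq := hG.uniq_of_stab2 hstab2
  have hinvol := hG.invol_of_stab2 hstab2
  choose sf hsfG hsfx hsf1 using hG.hstab
  have hsf2 : ∀ x, sf x * sf x = 1 := fun x => hinvol x (sf x) (hsfG x) (hsfx x) (hsf1 x)
  have hsfinv : ∀ x, (sf x)⁻¹ = sf x := fun x => inv_eq_of_mul_eq_one_left (hsf2 x)
  have hfixuniq : ∀ (g : Perm Ω) (x v : Ω), g ∈ G → g ≠ 1 → g x = x → g v = v → v = x := by
    intro g x v hg hg1 hgx hgv
    by_contra hne
    exact hg1 (hG.eq_one hg hgv hgx hne)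
  have hsfuniq : ∀ (g : Perm Ω) (x : Ω), g ∈ G → g ≠ 1 → g x = x → g = sf x :=
    fun g x hg hg1 hgx => huniq x g (sf x) hg (hsfG x) hgx (hsfx x) hg1 (hsf1 x)
  -- the product of involutions at distinct points is fixed-point-free
  have hst : ∀ x y, x ≠ y → ∀ v, (sf x * sf y) v ≠ v := by
    intro x y hxy v hfix
    have h1 : sf y v = sf x v := by
      calc sf y v = ((sf x * sf x) * sf y) v := by rw [hsf2 x, one_mul]
      _ = sf x ((sf x * sf y) v) := rfl
      _ = sf x v := by rw [hfix]
    by_cases hvy : sf y v = v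
    · have hvy' : v = y := hfixuniq (sf y) y v (hsfG y) (hsf1 y) (hsfx y) hvy
      have hvx : sf x v = v := by rw [← h1, hvy]
      have hvx' : v = x := hfixuniq (sf x) x v (hsfG x) (hsf1 x) (hsfx x) hvx
      exact hxy (hvx' ▸ hvy')
    · have h3 : (sf x * sf y) (sf y v) = sf y v := by
        calc (sf x * sf y) (sf y v) = sf x ((sf y * sf y) v) := rfl
        _ = sf x v := by rw [hsf2 y]; rfl
        _ = sf y v := h1.symm
      have h4 : sf x * sf y = 1 := hG.eq_one (G.mul_mem (hsfG x) (hsfG y)) hfix h3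
        (fun hc => hvy hc.symm)
      have h5 : sf x = sf y := by
        have h6 : (sf y)⁻¹ = sf x := inv_eq_of_mul_eq_one_left h4
        rw [hsfinv y] at h6
        exact h6.symm
      have h7 : sf x y = y := by rw [h5]; exact hsfx y
      exact hxy (hfixuniq (sf x) x y (hsfG x) (hsf1 x) (hsfx x) h7).symm
  obtain ⟨ω⟩ := (inferInstance : Nonempty Ω)
  set s := sf ω with hs
  have hss : s * s = 1 := hsf2 ω
  have hsω : s ω = ω := hsfx ω
  have hs1 : s ≠ 1 := hsf1 ω
  have hsG : s ∈ G := hsfG ω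
  -- every fixed-point-free element of G is s * sf y for a unique y ≠ ω
  have himg : (Finset.univ.erase ω).image (fun y => s * sf y)
      = (GF G).filter (fun g => ∀ v, g v ≠ v) := by
    apply Finset.eq_of_subset_of_card_le
    · intro g hg
      obtain ⟨y, hy, rfl⟩ := Finset.mem_image.mp hg
      have hyω : y ≠ ω := Finset.ne_of_mem_erase hy
      simp only [Finset.mem_filter, mem_GF]
      exact ⟨G.mul_mem hsG (hsfG y), hst ω y (Ne.symm hyω)⟩
    · rw [hG.card_fpf, Finset.card_image_of_injOn, Finset.card_erase_of_mem (Finset.mem_univ ω),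
        Finset.card_univ]
      intro y hy y' hy' hyy
      have h1 : sf y = sf y' := mul_left_cancel hyy
      have h2 : sf y y' = y' := by rw [h1]; exact hsfx y'
      exact (hfixuniq (sf y) y y' (hsfG y) (hsf1 y) (hsfx y) h2).symm
  have hrep : ∀ g, g ∈ G → (∀ v, g v ≠ v) → ∃ y, y ≠ ω ∧ g = s * sf y := by
    intro g hgG hgfpf
    have hmem : g ∈ (Finset.univ.erase ω).image (fun y => s * sf y) := by
      rw [himg]
      simp only [Finset.mem_filter, mem_GF]
      exact ⟨hgG, hgfpf⟩
    obtain ⟨y, hy, hgy⟩ := Finset.mem_image.mp hmem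
    exact ⟨y, Finset.ne_of_mem_erase hy, hgy.symm⟩
  -- conjugation permutes the involutions
  have hconj : ∀ g, g ∈ G → ∀ x, g * sf x * g⁻¹ = sf (g x) := by
    intro g hgG x
    refine hsfuniq _ _ (G.mul_mem (G.mul_mem hgG (hsfG x)) (G.inv_mem hgG)) ?_ ?_
    · intro hcon
      have h1 : g * sf x = g := mul_inv_eq_one.mp hcon
      exact hsf1 x (mul_eq_left.mp h1)
    · rw [Equiv.Perm.mul_apply, Equiv.Perm.mul_apply, Equiv.Perm.inv_apply_self, hsfx]
  -- products of fpf elements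
  have hmul_mem : ∀ g g' : Perm Ω, g ∈ G → g' ∈ G → (∀ v, g v ≠ v) → (∀ v, g' v ≠ v) →
      (g * g' = 1 ∨ ∀ v, (g * g') v ≠ v) := by
    intro g g' hgG hg'G hgf hg'f
    obtain ⟨y, hyω, rfl⟩ := hrep g hgG hgf
    obtain ⟨y', hy'ω, rfl⟩ := hrep g' hg'G hg'f
    have e := hconj s hsG y
    rw [show (s)⁻¹ = s from hsfinv ω] at e
    have h1 : s * sf y * (s * sf y') = sf (s y) * sf y' := by
      calc s * sf y * (s * sf y') = (s * sf y * s) * sf y' := by group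
      _ = sf (s y) * sf y' := by rw [e]
    by_cases hyy : s y = y'
    · left
      rw [h1, hyy, hsf2 y']
    · right
      rw [h1]
      exact hst _ _ hyy
  -- the kernel as a subgroup
  set KS : Subgroup (Perm Ω) :=
    { carrier := {g | g ∈ G ∧ (g = 1 ∨ ∀ v, g v ≠ v)}
      one_mem' := ⟨G.one_mem, Or.inl rfl⟩
      mul_mem' := by
        intro g g' hg hg'
        obtain ⟨hgG, hg1⟩ := hg
        obtain ⟨hg'G, hg'1⟩ := hg'
        refine ⟨G.mul_mem hgG hg'G, ?_⟩
        rcases hg1 with rfl | hgf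
        · rw [one_mul]
          exact hg'1
        rcases hg'1 with rfl | hg'f
        · rw [mul_one]
          exact Or.inr hgf
        · exact hmul_mem g g' hgG hg'G hgf hg'f
      inv_mem' := by
        intro g hg
        obtain ⟨hgG, hg1⟩ := hg
        refine ⟨G.inv_mem hgG, ?_⟩
        rcases hg1 with rfl | hgf
        · exact Or.inl inv_one
        · refine Or.inr fun v hv => hgf v ?_
          conv_lhs => rw [← hv]
          exact Equiv.Perm.apply_inv_self g v } with hKSdef
  have hKG : KS ≤ G := fun g hg => hg.1
  -- the finset version of KS
  set KF := insert (1 : Perm Ω) ((GF G).filter (fun g => ∀ v, g v ≠ v)) with hKFdef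
  have hKF : ∀ g, g ∈ KF ↔ g ∈ KS := by
    intro g
    simp only [hKFdef, Finset.mem_insert, Finset.mem_filter, mem_GF]
    constructor
    · rintro (rfl | ⟨hgG, hf⟩)
      · exact ⟨G.one_mem, Or.inl rfl⟩
      · exact ⟨hgG, Or.inr hf⟩
    · rintro ⟨hgG, rfl | hf⟩
      · exact Or.inl rfl
      · exact Or.inr ⟨hgG, hf⟩
  have hKFcard : KF.card = Fintype.card Ω := by
    rw [hKFdef, Finset.card_insert_of_notMem (fun hc => ((Finset.mem_filter.mp hc).2 ω) rfl),
      hG.card_fpf]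
    omega
  have hKcard : Nat.card ↥KS = Fintype.card Ω := by
    have hset : ((KS : Subgroup (Perm Ω)) : Set (Perm Ω)) = ↑KF := by
      ext g
      rw [Finset.mem_coe, hKF]
      rfl
    rw [← SetLike.coe_sort_coe, Nat.card_coe_set_eq, hset, Set.ncard_coe_finset, hKFcard]
  have hKfree : ∀ g, g ∈ KS → ∀ v, g v = v → g = 1 := by
    rintro g ⟨hgG, rfl | hf⟩ v hv
    · rfl
    · exact absurd hv (hf v)
  have hKreg : ∀ v w : Ω, ∃ g ∈ KS, g v = w := by
    intro v w
    have himg2 : KF.image (fun g => g v) = Finset.univ := by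
      apply Finset.eq_univ_of_card
      rw [Finset.card_image_of_injOn, hKFcard]
      intro g hg g' hg' hgg
      simp only [Finset.mem_coe] at hg hg'
      have h1 : g'⁻¹ * g ∈ KS := KS.mul_mem (KS.inv_mem ((hKF g').mp hg')) ((hKF g).mp hg)
      have hgg' : g v = g' v := hgg
      have h2 : (g'⁻¹ * g) v = v := by
        rw [Equiv.Perm.mul_apply, hgg', Equiv.Perm.inv_apply_self]
      exact (inv_mul_eq_one.mp (hKfree _ h1 v h2)).symm
    have hw : w ∈ KF.image (fun g => g v) := by
      rw [himg2]
      exact Finset.mem_univ w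
    obtain ⟨g, hg, hgv⟩ := Finset.mem_image.mp hw
    exact ⟨g, (hKF g).mp hg, hgv⟩
  -- s inverts KS
  have hsinv : ∀ g, g ∈ KS → s * g * s = g⁻¹ := by
    rintro g ⟨hgG, rfl | hf⟩
    · calc s * 1 * s = s * s := by rw [mul_one]
      _ = 1 := hss
      _ = (1 : Perm Ω)⁻¹ := by rw [inv_one]
    · obtain ⟨y, hyω, rfl⟩ := hrep _ hgG hf
      calc s * (s * sf y) * s = ((s * s) * sf y) * s := by group
      _ = sf y * s := by rw [hss, one_mul]
      _ = (s * sf y)⁻¹ := by rw [mul_inv_rev, hsfinv y, show (s)⁻¹ = s from hsfinv ω]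
  -- KS is abelian
  have habel : ∀ g, g ∈ KS → ∀ g', g' ∈ KS → g * g' = g' * g := by
    intro g hg g' hg'
    have e1 : (s * g * s) * (s * g' * s) = s * (g * g') * s := by
      have e0 : (s * g * s) * (s * g' * s) = s * g * (s * s) * (g' * s) := by group
      rw [e0, hss, mul_one]
      group
    have h1 : (g * g')⁻¹ = g⁻¹ * g'⁻¹ := by
      calc (g * g')⁻¹ = s * (g * g') * s := (hsinv _ (KS.mul_mem hg hg')).symm
      _ = (s * g * s) * (s * g' * s) := e1.symm
      _ = g⁻¹ * g'⁻¹ := by rw [hsinv _ hg, hsinv _ hg']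
    have h2 : g⁻¹ * g'⁻¹ = g'⁻¹ * g⁻¹ := by rw [← h1, mul_inv_rev]
    have h3 := congrArg (fun t => t⁻¹) h2
    simp only [mul_inv_rev, inv_inv] at h3
    exact h3.symm
  -- no involutions in KS
  have hnoinvol : ∀ g, g ∈ KS → g * g = 1 → g = 1 := by
    intro g hg hg2
    by_contra hg1
    obtain ⟨hgG, hcase⟩ := hg
    have hgf : ∀ v, g v ≠ v := hcase.resolve_left hg1
    have h2 := hsinv g ⟨hgG, hcase⟩
    have h3 : g⁻¹ = g := inv_eq_of_mul_eq_one_left hg2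
    rw [h3] at h2
    have h1 : s * g = g * s := by
      calc s * g = s * g * (s * s) := by rw [hss, mul_one]
      _ = (s * g * s) * s := by group
      _ = g * s := by rw [h2]
    have h4 : s (g ω) = g ω := by
      calc s (g ω) = (s * g) ω := rfl
      _ = (g * s) ω := by rw [h1]
      _ = g ω := by rw [Equiv.Perm.mul_apply, hsω]
    have h5 : g ω = ω := hfixuniq s ω (g ω) hsG hs1 hsω h4
    exact hgf ω h5
  -- the degree is odd
  have hodd : ¬ 2 ∣ Fintype.card Ω := by
    intro hdvd
    haveI : Fintype ↥KS := Fintype.ofFinite _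
    have h2 : (2 : ℕ) ∣ Fintype.card ↥KS := by
      rw [← Nat.card_eq_fintype_card, hKcard]
      exact hdvd
    haveI : Fact (Nat.Prime 2) := ⟨Nat.prime_two⟩
    obtain ⟨x, hx⟩ := exists_prime_orderOf_dvd_card 2 h2
    have hx2 : (x : Perm Ω) * x = 1 := by
      have h3 := pow_orderOf_eq_one x
      rw [hx] at h3
      have h4 := congrArg (Subtype.val) h3
      rw [pow_two] at h4
      exact h4
    have hx1 : (x : Perm Ω) ≠ 1 := by
      intro hcon
      have h5 : x = 1 := Subtype.ext hcon
      rw [h5, orderOf_one] at hx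
      omega
    exact hx1 (hnoinvol _ x.2 hx2)
  -- a nontrivial element of KS
  have hKne : ∃ f, f ∈ KS ∧ f ≠ 1 := by
    obtain ⟨w, hw⟩ : ∃ w : Ω, w ≠ ω := by
      by_contra hc
      push_neg at hc
      have h6 : Fintype.card Ω ≤ 1 :=
        Fintype.card_le_one_iff.mpr (fun a b => by rw [hc a, hc b])
      omega
    obtain ⟨g, hg, hgw⟩ := hKreg ω w
    refine ⟨g, hg, fun hcon => hw ?_⟩
    rw [hcon] at hgw
    exact hgw.symm
  obtain ⟨f, hfK, hf1⟩ := hKne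
  set d := orderOf f with hd
  have hd2 : 2 ≤ d := by
    have h1 : d ≠ 1 := fun hcon => hf1 (orderOf_eq_one_iff.mp hcon)
    have h2 : 0 < d := orderOf_pos f
    omega
  set r := d.minFac with hr
  have hrprime : r.Prime := Nat.minFac_prime (by omega)
  have hrd : r ∣ d := Nat.minFac_dvd d
  set f₀ := f ^ (d / r) with hf₀
  have hordf₀ : orderOf f₀ = r := by
    rw [hf₀, orderOf_pow, ← hd, Nat.gcd_eq_right (Nat.div_dvd_of_dvd hrd),
      Nat.div_div_self hrd (by omega)]
  have hf₀K : f₀ ∈ KS := KS.pow_mem hfK _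
  have hf₀1 : f₀ ≠ 1 := by
    intro hcon
    rw [hcon, orderOf_one] at hordf₀
    have := hrprime.two_le
    omega
  have hrn : r ∣ Fintype.card Ω := by
    rw [← hKcard]
    have h1 : orderOf (⟨f₀, hf₀K⟩ : ↥KS) = r := by
      rw [← hordf₀]
      exact (orderOf_coe (⟨f₀, hf₀K⟩ : ↥KS)).symm
    rw [← h1]
    exact orderOf_dvd_natCard _
  have hrodd : Odd r := hrprime.odd_of_ne_two (fun hcon => hodd (hcon ▸ hrn))
  -- the meet of piPart f₀ with piPart s
  obtain ⟨k, hkG, hk⟩ := hM _ ⟨f₀, hKG hf₀K, rfl⟩ _ ⟨s, hsG, rfl⟩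
  have hkω : k ω = ω := by
    have hrel : (piPart k) (k ω) ω := (piPart_iff k _ ω).mpr ⟨1, by rw [zpow_one]⟩
    rw [hk] at hrel
    obtain ⟨j, hj⟩ := (piPart_iff s _ ω).mp hrel.2
    rw [Equiv.Perm.zpow_apply_eq_self_of_apply_eq_self hsω j] at hj
    exact hj.symm
  set a := f₀ ^ ((r + 1) / 2) with ha
  have haK : a ∈ KS := KS.pow_mem hf₀K _
  have ha2 : a * a = f₀ := by
    rw [ha, ← pow_add]
    have h1 : (r + 1) / 2 + (r + 1) / 2 = r + 1 := by
      obtain ⟨t, ht⟩ := hrodd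
      omega
    rw [h1, pow_succ, ← hordf₀, pow_orderOf_eq_one, one_mul]
  have hsa : s (a ω) = a⁻¹ ω := by
    have e := hsinv a haK
    have e2 : a⁻¹ * s = s * a := by
      rw [← e]
      calc s * a * s * s = s * a * (s * s) := by group
      _ = s * a := by rw [hss, mul_one]
    calc s (a ω) = (s * a) ω := rfl
    _ = (a⁻¹ * s) ω := by rw [e2]
    _ = a⁻¹ ω := by rw [Equiv.Perm.mul_apply, hsω]
  have hvw : a ω ≠ a⁻¹ ω := by
    intro hcon
    have h7 : f₀ ω = ω := by
      rw [← ha2]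
      calc (a * a) ω = a (a ω) := rfl
      _ = a (a⁻¹ ω) := by rw [hcon]
      _ = ω := by rw [Equiv.Perm.apply_inv_self]
    exact hf₀1 (hKfree f₀ hf₀K ω h7)
  have hrelpair : (piPart k) (a⁻¹ ω) (a ω) := by
    rw [hk]
    constructor
    · refine (piPart_iff f₀ _ _).mpr ⟨-1, ?_⟩
      rw [zpow_neg, zpow_one]
      have e : f₀⁻¹ * a = a⁻¹ := by
        rw [← ha2]
        group
      calc f₀⁻¹ (a ω) = (f₀⁻¹ * a) ω := rfl
      _ = a⁻¹ ω := by rw [e]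
    · exact (piPart_iff s _ _).mpr ⟨1, by rw [zpow_one]; exact hsa⟩
  have hk1 : k ≠ 1 := by
    intro hcon
    rw [hcon, piPart_one] at hrelpair
    exact hvw hrelpair.symm
  have hks : k = s := hsfuniq k ω hkG hk1 hkω
  have hles : piPart s ≤ piPart f₀ := by
    have h1 : piPart s = piPart f₀ ⊓ piPart s := by rw [← hk, hks]
    rw [h1]
    exact inf_le_left
  -- every square lies in the powers of f₀
  have hsq : ∀ b, b ∈ KS → b * b ∈ zpowers f₀ := by
    intro b hbK
    have h8 : (piPart s) (s (b ω)) (b ω) := (piPart_iff s _ _).mpr ⟨1, by rw [zpow_one]⟩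
    have h9 := hles h8
    obtain ⟨j, hj⟩ := (piPart_iff f₀ _ _).mp h9
    have h10 : s (b ω) = b⁻¹ ω := by
      have e := hsinv b hbK
      have e2 : b⁻¹ * s = s * b := by
        rw [← e]
        calc s * b * s * s = s * b * (s * s) := by group
        _ = s * b := by rw [hss, mul_one]
      calc s (b ω) = (s * b) ω := rfl
      _ = (b⁻¹ * s) ω := by rw [e2]
      _ = b⁻¹ ω := by rw [Equiv.Perm.mul_apply, hsω]
    rw [h10] at hj
    have h11 : (b * (f₀ ^ j * b)) ω = ω := by
      calc (b * (f₀ ^ j * b)) ω = b ((f₀ ^ j) (b ω)) := rfl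
      _ = b (b⁻¹ ω) := by rw [hj]
      _ = ω := by rw [Equiv.Perm.apply_inv_self]
    have h12 : b * (f₀ ^ j * b) ∈ KS :=
      KS.mul_mem hbK (KS.mul_mem (KS.zpow_mem hf₀K j) hbK)
    have h13 := hKfree _ h12 ω h11
    refine Subgroup.mem_zpowers_iff.mpr ⟨-j, ?_⟩
    have h14 : f₀ ^ j * b = b⁻¹ := eq_inv_of_mul_eq_one_right h13
    have h15 : f₀ ^ j = b⁻¹ * b⁻¹ := eq_mul_inv_iff_mul_eq.mpr h14
    rw [zpow_neg, h15, mul_inv_rev, inv_inv]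
  -- squaring is surjective on KS
  have hsq_all : ∀ g, g ∈ KS → g ∈ zpowers f₀ := by
    have himg2 : KF.image (fun b => b * b) = KF := by
      apply Finset.eq_of_subset_of_card_le
      · intro g hg
        obtain ⟨b, hb, rfl⟩ := Finset.mem_image.mp hg
        exact (hKF _).mpr (KS.mul_mem ((hKF b).mp hb) ((hKF b).mp hb))
      · rw [Finset.card_image_of_injOn]
        intro b hb c hc hbc
        simp only [Finset.mem_coe] at hb hc
        have hbK := (hKF b).mp hb
        have hcK := (hKF c).mp hc
        have hcomm := habel b hbK c⁻¹ (KS.inv_mem hcK)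
        have hbc' : b * b = c * c := hbc
        have h1 : (b * c⁻¹) * (b * c⁻¹) = 1 := by
          have e1 : (b * c⁻¹) * (b * c⁻¹) = b * (c⁻¹ * b) * c⁻¹ := by group
          rw [e1, ← hcomm]
          have e2 : b * (b * c⁻¹) * c⁻¹ = (b * b) * (c * c)⁻¹ := by group
          rw [e2, hbc', mul_inv_cancel]
        have h2 := hnoinvol _ (KS.mul_mem hbK (KS.inv_mem hcK)) h1
        exact mul_inv_eq_one.mp h2
    intro g hg
    have hmem : g ∈ KF.image (fun b => b * b) := by
      rw [himg2]
      exact (hKF g).mpr hg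
    obtain ⟨b, hb, hbg⟩ := Finset.mem_image.mp hmem
    rw [← hbg]
    exact hsq b ((hKF b).mp hb)
  -- the degree equals r
  have hle2 : Nat.card ↥KS ≤ Nat.card ↥(zpowers f₀) :=
    Subgroup.card_le_of_le (fun g hg => hsq_all g hg)
  rw [hKcard, Nat.card_zpowers, hordf₀] at hle2
  have hnr : Fintype.card Ω = r := le_antisymm hle2 (Nat.le_of_dvd (by omega) hrn)
  -- build the dihedral isomorphism
  haveI : NeZero r := ⟨hrprime.pos.ne'⟩
  set zp : ↥G := ⟨f₀, hKG hf₀K⟩ with hzp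
  set sp : ↥G := ⟨s, hsG⟩ with hsp
  have hordzp : orderOf zp = r := by
    rw [← hordf₀]
    exact (orderOf_coe zp).symm
  have hsp2 : sp * sp = 1 := Subtype.ext hss
  have hspinv : sp⁻¹ = sp := inv_eq_of_mul_eq_one_left hsp2
  have hsprel : ∀ x : ℤ, zp ^ x * sp = sp * zp ^ (-x) := by
    intro x
    have h1 : sp * zp * sp = zp⁻¹ := Subtype.ext (hsinv f₀ hf₀K)
    have h2 : sp * zp ^ x * sp = zp ^ (-x) := by
      calc sp * zp ^ x * sp = sp * zp ^ x * sp⁻¹ := by rw [hspinv]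
      _ = (sp * zp * sp⁻¹) ^ x := (conj_zpow).symm
      _ = (zp⁻¹) ^ x := by rw [hspinv, h1]
      _ = zp ^ (-x) := by rw [inv_zpow, ← zpow_neg]
    have h3 := congrArg (fun t => sp * t) h2
    rw [show sp * (sp * zp ^ x * sp) = (sp * sp) * (zp ^ x * sp) by group, hsp2, one_mul] at h3
    exact h3
  set E : ZMod r → ↥G := fun i => zp ^ ((i.val : ℕ) : ℤ) with hE
  set φ : DihedralGroup r → ↥G := fun t => match t with
    | DihedralGroup.r i => E i
    | DihedralGroup.sr i => sp * E i
    with hφ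
  have hEmul : ∀ i j : ZMod r, E (i + j) = E i * E j := by
    intro i j
    rw [hE]
    dsimp only
    rw [← zpow_add]
    refine zpow_eq_zpow_of_cast hordzp ?_
    push_cast
    simp [ZMod.natCast_val, ZMod.cast_id]
  have hφmul : ∀ t t' : DihedralGroup r, φ (t * t') = φ t * φ t' := by
    intro t t'
    rcases t with i | i <;> rcases t' with j | j
    · rw [DihedralGroup.r_mul_r]
      show E (i + j) = E i * E j
      exact hEmul i j
    · rw [DihedralGroup.r_mul_sr]
      show sp * E (j - i) = E i * (sp * E j)
      rw [hE]
      dsimp only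
      rw [show zp ^ ((i.val : ℕ) : ℤ) * (sp * zp ^ ((j.val : ℕ) : ℤ))
          = (zp ^ ((i.val : ℕ) : ℤ) * sp) * zp ^ ((j.val : ℕ) : ℤ) by group,
        hsprel, mul_assoc, ← zpow_add]
      congr 1
      refine zpow_eq_zpow_of_cast hordzp ?_
      push_cast
      simp [ZMod.natCast_val, ZMod.cast_id]
      ring
    · rw [DihedralGroup.sr_mul_r]
      show sp * E (i + j) = (sp * E i) * E j
      rw [mul_assoc, hEmul]
    · rw [DihedralGroup.sr_mul_sr]
      show E (j - i) = (sp * E i) * (sp * E j)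
      rw [hE]
      dsimp only
      rw [show (sp * zp ^ ((i.val : ℕ) : ℤ)) * (sp * zp ^ ((j.val : ℕ) : ℤ))
          = sp * (zp ^ ((i.val : ℕ) : ℤ) * sp) * zp ^ ((j.val : ℕ) : ℤ) by group,
        hsprel,
        show sp * (sp * zp ^ (-((i.val : ℕ) : ℤ))) * zp ^ ((j.val : ℕ) : ℤ)
          = (sp * sp) * (zp ^ (-((i.val : ℕ) : ℤ)) * zp ^ ((j.val : ℕ) : ℤ)) by group,
        hsp2, one_mul, ← zpow_add]
      refine zpow_eq_zpow_of_cast hordzp ?_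
      push_cast
      simp [ZMod.natCast_val, ZMod.cast_id]
      ring
  set φ' : DihedralGroup r →* ↥G := MonoidHom.mk' φ hφmul with hφ'
  have hinj : Function.Injective φ' := by
    rw [injective_iff_map_eq_one]
    intro t ht
    rcases t with i | i
    · have h1 : zp ^ ((i.val : ℕ) : ℤ) = 1 := ht
      have h2 : ((orderOf zp : ℤ)) ∣ ((i.val : ℕ) : ℤ) := orderOf_dvd_iff_zpow_eq_one.mpr h1
      rw [hordzp] at h2
      have h3 : r ∣ i.val := by exact_mod_cast h2
      have h4 : i.val = 0 := Nat.eq_zero_of_dvd_of_lt h3 (ZMod.val_lt i)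
      have h5 : i = 0 := (ZMod.val_eq_zero i).mp h4
      rw [h5, ← DihedralGroup.one_def]
    · exfalso
      have h1 : sp * E i = 1 := ht
      have h2 : sp = (E i)⁻¹ := eq_inv_of_mul_eq_one_left h1
      have h3 : s ∈ zpowers f₀ := by
        refine Subgroup.mem_zpowers_iff.mpr ⟨-((i.val : ℕ) : ℤ), ?_⟩
        have h4 := congrArg Subtype.val h2
        have h6 : ((zp ^ ((i.val : ℕ) : ℤ))⁻¹ : ↥G).val = (f₀ ^ ((i.val : ℕ) : ℤ))⁻¹ := rfl
        rw [zpow_neg]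
        exact ((h4.trans h6).symm : (f₀ ^ ((i.val : ℕ) : ℤ))⁻¹ = s)
      have h5 : s ∈ KS := (zpowers_le.mpr hf₀K) h3
      rcases h5.2 with h6 | h6
      · exact hs1 h6
      · exact h6 ω hsω
  have hGcard2 : Nat.card ↥G = 2 * r := by
    rw [card_GF, hG.card_stab ω, hstab2 ω, hnr, Nat.mul_comm]
  have hbij : Function.Bijective φ' := by
    rw [Nat.bijective_iff_injective_and_card]
    refine ⟨hinj, ?_⟩
    rw [Nat.card_eq_fintype_card, DihedralGroup.card, hGcard2]
  exact ⟨r, hrprime, hnr, ⟨(MulEquiv.ofBijective φ' hbij).symm⟩⟩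

lemma Frob.meetBwd (hG : Frob G) [Nonempty Ω] {p : ℕ} (hp : p.Prime)
    (hcard : Fintype.card Ω = p) (hiso : Nonempty (↥G ≃* DihedralGroup p)) :
    MeetCoherent G := by
  obtain ⟨e⟩ := hiso
  haveI : NeZero p := ⟨hp.pos.ne'⟩
  have hp' : (Fintype.card Ω).Prime := hcard ▸ hp
  obtain ⟨z, hzG, hfull⟩ := hG.exists_full_of_prime hp'
  have hGcard : Nat.card ↥G = 2 * p := by
    rw [Nat.card_congr e.toEquiv, Nat.card_eq_fintype_card, DihedralGroup.card]
  have hstab2 : ∀ ω : Ω, ((GF G).filter (fun g => g ω = ω)).card = 2 := by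
    intro ω
    have h1 := hG.card_stab ω
    rw [← card_GF, hGcard, hcard] at h1
    have hppos := hp.pos
    refine Nat.eq_of_mul_eq_mul_left hppos ?_
    omega
  have huniq := hG.uniq_of_stab2 hstab2
  have hinvol := hG.invol_of_stab2 hstab2
  intro P hP Q hQ
  obtain ⟨a, haG, rfl⟩ := hP
  obtain ⟨b, hbG, rfl⟩ := hQ
  by_cases ha1 : a = 1
  · subst ha1
    rw [piPart_one, bot_inf_eq]
    exact ⟨1, G.one_mem, piPart_one⟩
  by_cases hb1 : b = 1
  · subst hb1
    rw [piPart_one, inf_bot_eq]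
    exact ⟨1, G.one_mem, piPart_one⟩
  by_cases hafp : ∀ v, a v ≠ v
  · have haz : a ∈ zpowers z := hG.fpf_mem hzG hfull haG hafp
    rw [piPart_top (full_of_mem_zpowers hfull hp' haz ha1), top_inf_eq]
    exact ⟨b, hbG, rfl⟩
  by_cases hbfp : ∀ v, b v ≠ v
  · have hbz : b ∈ zpowers z := hG.fpf_mem hzG hfull hbG hbfp
    rw [piPart_top (full_of_mem_zpowers hfull hp' hbz hb1), inf_top_eq]
    exact ⟨a, haG, rfl⟩
  push_neg at hafp hbfp
  obtain ⟨ωa, hωa⟩ := hafp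
  obtain ⟨ωb, hωb⟩ := hbfp
  have ha2 : a * a = 1 := hinvol ωa a haG hωa ha1
  have hb2 : b * b = 1 := hinvol ωb b hbG hωb hb1
  by_cases hωab : ωa = ωb
  · subst hωab
    have hab : a = b := huniq ωa a b haG hbG hωa hωb ha1 hb1
    subst hab
    rw [inf_idem]
    exact ⟨a, haG, rfl⟩
  · refine ⟨1, G.one_mem, ?_⟩
    rw [piPart_one]
    refine le_antisymm bot_le ?_
    rw [Setoid.le_def]
    intro v w hvw
    have h1 : (piPart a) v w := hvw.1
    have h2 : (piPart b) v w := hvw.2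
    rw [piPart_invol ha2] at h1
    rw [piPart_invol hb2] at h2
    show v = w
    rcases h1 with rfl | h1
    · rfl
    rcases h2 with h2 | h2
    · exact h2
    by_contra hne
    have hba1 : (b * a) w = w := by
      rw [Equiv.Perm.mul_apply, h1, ← h2, ← Equiv.Perm.mul_apply, hb2]
      rfl
    have hav : a v = w := by
      rw [← h1, ← Equiv.Perm.mul_apply, ha2]
      rfl
    have hba2 : (b * a) v = v := by
      rw [Equiv.Perm.mul_apply, hav, h2]
    have hba : b * a = 1 := hG.eq_one (G.mul_mem hbG haG) hba1 hba2 (Ne.symm hne)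
    have hab : a = b := by
      have h3 : a⁻¹ = b := inv_eq_of_mul_eq_one_left hba
      have h4 : a⁻¹ = a := inv_eq_of_mul_eq_one_left ha2
      exact h4.symm.trans h3
    have hfix2 : a ωb = ωb := by rw [hab]; exact hωb
    exact ha1 (hG.eq_one haG hωa hfix2 hωab)

end Directions

end FrobAux

/-- A finite Frobenius group is join-coherent if and only if its degree is prime, and
meet-coherent if and only if it is dihedral of prime degree. -/
theorem frobenius_coherence {Ω : Type*} [Finite Ω] [Nonempty Ω]
    (G : Subgroup (Equiv.Perm Ω))
    (htrans : ∀ a b : Ω, ∃ g ∈ G, g a = b)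
    (hstab : ∀ ω : Ω, ∃ g ∈ G, g ω = ω ∧ g ≠ 1)
    (hfrob : ∀ g ∈ G, ∀ ω₁ ω₂ : Ω, ω₁ ≠ ω₂ → g ω₁ = ω₁ → g ω₂ = ω₂ → g = 1) :
    (JoinCoherent G ↔ (Nat.card Ω).Prime) ∧
    (MeetCoherent G ↔ ∃ p : ℕ, p.Prime ∧ Nat.card Ω = p ∧
      Nonempty (↥G ≃* DihedralGroup p)) := by
  classical
  cases nonempty_fintype Ω
  have hG : Frob G := ⟨htrans, hstab, hfrob⟩
  have hcard : Nat.card Ω = Fintype.card Ω := Nat.card_eq_fintype_card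
  rw [hcard]
  refine ⟨⟨hG.joinFwd, hG.joinBwd⟩, ⟨hG.meetFwd, ?_⟩⟩
  rintro ⟨p, hp, hc, hiso⟩
  exact hG.meetBwd hp hc hiso
end
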